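/- arXiv:1302.5919 — 7 statements merged into one kernel-verified Lean document; each statement's English description precedes it below -/
import Mathlib

section
/- Fix an infinite subset I ⊆ ℕ, integers n ≥ 3 and 1 ≤ m ≤ n − 2. Let β₁,…,β_n be I-supported elements of ∏_{i∈ℕ} ℚ≥0 that are linearly independent over ℚ, and let α ∈ ∏_{i∈ℕ} ℚ≥0 be an I-supported element with α = β_m + β_{m+1} + ⋯ + β_{n−1} − β_n. Then there exists β′ ∈ ∏_{i∈ℕ} ℚ≥0 such that the set Γ = {β₁,…,β_{m−1}, β_m − β′, β_{m+1},…,β_{n−1}, β_n − β′, β′} consists of I-supported elements of ∏_{i∈ℕ} ℚ≥0, is linearly independent over ℚ, and satisfies {β₁,…,β_n} ⊆ Σ_{γ∈Γ} ℚ≥0·γ. -/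
/-- An element `α ∈ ∏_{i ∈ ℕ} ℚ` is `I`-supported if `α i ≠ 0` for all `i ∈ I`. -/
def ISupported (I : Set ℕ) (α : ℕ → ℚ) : Prop := ∀ i ∈ I, α i ≠ 0

/-- `α` lies in `∏_{i ∈ ℕ} ℚ≥0`: all components are nonnegative. -/
def NonnegSeq (α : ℕ → ℚ) : Prop := ∀ i, 0 ≤ α i

/-- `α ∈ ∏_{i ∈ ℕ} ℚ` is almost non-negative if only finitely many components are
negative. -/
def AlmostNonneg (α : ℕ → ℚ) : Prop := {i | α i < 0}.Finite

/-- `v ∈ Σ_{γ ∈ Γ} ℚ≥0 · γ`: `v` is a linear combination of the elements of the finite set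
`Γ` with nonnegative rational coefficients. -/
def InConeSpan (Γ : Finset (ℕ → ℚ)) (v : ℕ → ℚ) : Prop :=
  ∃ c : (ℕ → ℚ) → ℚ, (∀ γ, 0 ≤ c γ) ∧ v = ∑ γ ∈ Γ, c γ • γ

/-- `v ∈ Σ_{γ ∈ S} ℚ≥0 · γ` for a (possibly infinite) set `S`: `v` is a finite linear
combination of elements of `S` with nonnegative rational coefficients. -/
def InConeSpanSet (S : Set (ℕ → ℚ)) (v : ℕ → ℚ) : Prop :=
  ∃ Γ : Finset (ℕ → ℚ), (Γ : Set (ℕ → ℚ)) ⊆ S ∧ InConeSpan Γ v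

/-- The elements of the finite set `Γ` are linearly independent over `ℚ`. -/
def FinsetLinIndep (Γ : Finset (ℕ → ℚ)) : Prop :=
  LinearIndependent ℚ (fun γ : (Γ : Set (ℕ → ℚ)) => (γ : ℕ → ℚ))

/-- The elements of the set `S` are linearly independent over `ℚ`. -/
def SetLinIndep (S : Set (ℕ → ℚ)) : Prop :=
  LinearIndependent ℚ (fun γ : S => (γ : ℕ → ℚ))

lemma aux_single_indep : LinearIndependent ℚ (fun i : ℕ => (Pi.single i 1 : ℕ → ℚ)) := by
  rw [linearIndependent_iff']
  intro s g h i hi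
  have := congrFun h i
  simpa [Finset.sum_apply, Pi.single_apply, Finset.sum_ite_eq, hi] using this

lemma aux_exists_single_not_mem (I : Set ℕ) (hI : I.Infinite) (V : Submodule ℚ (ℕ → ℚ))
    (hV : FiniteDimensional ℚ V) : ∃ i ∈ I, (Pi.single i 1 : ℕ → ℚ) ∉ V := by
  by_contra h
  push_neg at h
  have hf : LinearIndependent ℚ (fun i : I => (⟨Pi.single (i : ℕ) 1, h i i.2⟩ : V)) := by
    apply LinearIndependent.of_comp V.subtype
    exact aux_single_indep.comp _ Subtype.val_injective
  have := hf.lt_aleph0_of_finiteDimensional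
  rw [Cardinal.lt_aleph0_iff_finite] at this
  have := hI.to_subtype
  exact absurd this (by simpa using not_finite (↥I))


/-- Fix an infinite `I ⊆ ℕ`, `n ≥ 3` and `1 ≤ m ≤ n - 2`.  Let
`β₁, …, β_n` be `I`-supported elements of `∏_{i ∈ ℕ} ℚ≥0`, linearly independent over `ℚ`,
and `α ∈ ∏_{i ∈ ℕ} ℚ≥0` an `I`-supported element with
`α = β_m + β_{m+1} + ⋯ + β_{n-1} - β_n`.  Then there is `β′ ∈ ∏_{i ∈ ℕ} ℚ≥0` such that
`Γ = {β₁, …, β_{m-1}, β_m - β′, β_{m+1}, …, β_{n-1}, β_n - β′, β′}` consists of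
`I`-supported elements of `∏_{i ∈ ℕ} ℚ≥0`, is linearly independent over `ℚ`, and
`{β₁, …, β_n} ⊆ Σ_{γ ∈ Γ} ℚ≥0 · γ`. -/
theorem exists_prime_element_splitting
    (I : Set ℕ) (hI : I.Infinite) (n m : ℕ) (hn : 3 ≤ n) (hm : 1 ≤ m) (hmn : m + 2 ≤ n)
    (β : ℕ → (ℕ → ℚ))
    (hβ : ∀ i ∈ Finset.Icc 1 n, NonnegSeq (β i) ∧ ISupported I (β i))
    (hind : LinearIndependent ℚ (fun i : (Finset.Icc 1 n : Finset ℕ) => β i))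
    (α : ℕ → ℚ) (hα : NonnegSeq α ∧ ISupported I α)
    (heq : α = (∑ i ∈ Finset.Icc m (n - 1), β i) - β n) :
    ∃ β' : ℕ → ℚ, NonnegSeq β' ∧
      ∀ Γ : Set (ℕ → ℚ),
        Γ = ((fun i => if i = m then β m - β' else if i = n then β n - β' else β i) ''
              (Set.Icc 1 n)) ∪ {β'} →
        (∀ γ ∈ Γ, NonnegSeq γ ∧ ISupported I γ) ∧ SetLinIndep Γ ∧
          ∀ i ∈ Finset.Icc 1 n, InConeSpanSet Γ (β i) := by
  classical
  have hmI : m ∈ Finset.Icc 1 n := by simp only [Finset.mem_Icc]; omega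
  have hnI : n ∈ Finset.Icc 1 n := by simp only [Finset.mem_Icc]; omega
  have hmnne : m ≠ n := by omega
  set V : Submodule ℚ (ℕ → ℚ) :=
    Submodule.span ℚ (Set.range (fun i : (Finset.Icc 1 n : Finset ℕ) => β i)) with hVdef
  have hVfd : FiniteDimensional ℚ V := FiniteDimensional.span_of_finite ℚ (Set.finite_range _)
  obtain ⟨i0, hi0I, hi0⟩ := aux_exists_single_not_mem I hI V hVfd
  have hβmem : ∀ i ∈ Finset.Icc 1 n, β i ∈ V := fun i hi =>
    Submodule.subset_span ⟨⟨i, hi⟩, rfl⟩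
  have hpos : ∀ j ∈ Finset.Icc 1 n, ∀ i ∈ I, 0 < β j i := by
    intro j hj i hi
    exact lt_of_le_of_ne ((hβ j hj).1 i) (Ne.symm ((hβ j hj).2 i hi))
  set c : ℚ := min (β m i0) (β n i0) with hc
  have hcpos : 0 < c := lt_min (hpos m hmI i0 hi0I) (hpos n hnI i0 hi0I)
  set e : ℕ → ℚ := Pi.single i0 1 with he
  set b0 : ℕ → ℚ := fun j => min (β m j) (β n j) / 2 with hb0
  have hchoice : ∃ t : ℚ, 0 < t ∧ t ≤ c / 4 ∧ b0 + t • e ∉ V := by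
    by_cases h1 : b0 + (c/8) • e ∈ V
    · refine ⟨c/4, by positivity, le_refl _, fun h2 => hi0 ?_⟩
      have h8 : (c/8) ≠ 0 := by positivity
      have he' : e = (c/8)⁻¹ • ((b0 + (c/4) • e) - (b0 + (c/8) • e)) := by
        rw [show (b0 + (c/4) • e) - (b0 + (c/8) • e) = (c/8) • e by module]
        rw [inv_smul_smul₀ h8]
      rw [he']
      exact V.smul_mem _ (V.sub_mem h2 h1)
    · exact ⟨c/8, by positivity, by linarith, h1⟩
  obtain ⟨t, ht0, ht4, hβ'V⟩ := hchoice
  set β' : ℕ → ℚ := b0 + t • e with hβ'def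
  have happ : ∀ j, β' j = min (β m j) (β n j) / 2 + (if j = i0 then t else 0) := by
    intro j
    simp only [hβ'def, hb0, he, Pi.add_apply, Pi.smul_apply, Pi.single_apply, smul_eq_mul,
      mul_ite, mul_one, mul_zero]
  have hnn : ∀ j ∈ Finset.Icc 1 n, ∀ k, 0 ≤ β j k := fun j hj => (hβ j hj).1
  have hminnn : ∀ k, 0 ≤ min (β m k) (β n k) := fun k => le_min (hnn m hmI k) (hnn n hnI k)
  have hb1 : ∀ k, 0 ≤ β' k := by
    intro k; rw [happ k]
    have := hminnn k
    split <;> linarith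
  have hb2 : ∀ k, β' k ≤ min (β m k) (β n k) := by
    intro k; rw [happ k]
    have := hminnn k
    split
    · rename_i hk; subst hk; rw [← hc]; linarith
    · linarith
  have hb4 : ∀ i ∈ I, β' i < min (β m i) (β n i) := by
    intro i hi
    have hmpos : 0 < min (β m i) (β n i) := lt_min (hpos m hmI i hi) (hpos n hnI i hi)
    rw [happ i]
    split
    · rename_i hk; subst hk; rw [← hc] at *; linarith
    · linarith
  have hb3 : ∀ i ∈ I, 0 < β' i := by
    intro i hi
    have hmpos : 0 < min (β m i) (β n i) := lt_min (hpos m hmI i hi) (hpos n hnI i hi)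
    rw [happ i]
    split <;> linarith
  refine ⟨β', hb1, ?_⟩
  intro Γ hΓ
  subst hΓ
  set g : ℕ → (ℕ → ℚ) :=
    fun i => if i = m then β m - β' else if i = n then β n - β' else β i with hg
  have hgm : g m = β m - β' := by rw [hg]; simp
  have hgn : g n = β n - β' := by rw [hg]; simp [Ne.symm hmnne]
  have hgo : ∀ i, i ≠ m → i ≠ n → g i = β i := by
    intro i h1 h2; rw [hg]; simp [h1, h2]
  have hmemΓ : ∀ i ∈ Finset.Icc 1 n, g i ∈ (g '' Set.Icc 1 n) ∪ {β'} := by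
    intro i hi
    exact Or.inl ⟨i, by simpa [Set.mem_Icc] using Finset.mem_Icc.mp hi, rfl⟩
  have hβ'Γ : β' ∈ (g '' Set.Icc 1 n) ∪ {β'} := Or.inr rfl
  have hne1 : β m - β' ≠ β' := by
    intro hh
    apply hβ'V
    have h2 : β m = β' + β' := eq_add_of_sub_eq hh
    have h3 : β' = (1/2 : ℚ) • β m := by
      funext k
      have := congrFun h2 k
      simp only [Pi.add_apply, Pi.smul_apply, smul_eq_mul] at *
      linarith
    rw [h3]
    exact V.smul_mem _ (hβmem m hmI)
  have hne2 : β n - β' ≠ β' := by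
    intro hh
    apply hβ'V
    have h2 : β n = β' + β' := eq_add_of_sub_eq hh
    have h3 : β' = (1/2 : ℚ) • β n := by
      funext k
      have := congrFun h2 k
      simp only [Pi.add_apply, Pi.smul_apply, smul_eq_mul] at *
      linarith
    rw [h3]
    exact V.smul_mem _ (hβmem n hnI)
  refine ⟨?_, ?_, ?_⟩
  · -- Nonneg and ISupported
    rintro γ (⟨i, hi, rfl⟩ | rfl)
    · have hi' : i ∈ Finset.Icc 1 n := Finset.mem_Icc.mpr (by simpa [Set.mem_Icc] using hi)
      by_cases h1 : i = m
      · rw [h1, hgm]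
        constructor
        · intro k
          have := hb2 k
          have := min_le_left (β m k) (β n k)
          simp only [Pi.sub_apply]; linarith
        · intro i2 hi2
          have h4 := lt_of_lt_of_le (hb4 i2 hi2) (min_le_left (β m i2) (β n i2))
          simp only [Pi.sub_apply]
          exact (sub_pos.mpr h4).ne'
      · by_cases h2 : i = n
        · rw [h2, hgn]
          constructor
          · intro k
            have := hb2 k
            have := min_le_right (β m k) (β n k)
            simp only [Pi.sub_apply]; linarith
          · intro i2 hi2
            have h4 := lt_of_lt_of_le (hb4 i2 hi2) (min_le_right (β m i2) (β n i2))
            simp only [Pi.sub_apply]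
            exact (sub_pos.mpr h4).ne'
        · rw [hgo i h1 h2]; exact hβ i hi'
    · exact ⟨hb1, fun i hi => (hb3 i hi).ne'⟩
  · -- linear independence
    set f : {x // x ∈ Finset.Icc 1 n} ⊕ Unit → (ℕ → ℚ) :=
      Sum.elim (fun i => g (i : ℕ)) (fun _ => β') with hf
    have hfind : LinearIndependent ℚ f := by
      rw [Fintype.linearIndependent_iff]
      intro w hw
      rw [Fintype.sum_sum_type] at hw
      simp only [hf, Sum.elim_inl, Sum.elim_inr, Finset.univ_unique, Finset.sum_singleton] at hw
      set M : {x // x ∈ Finset.Icc 1 n} := ⟨m, hmI⟩ with hM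
      set N : {x // x ∈ Finset.Icc 1 n} := ⟨n, hnI⟩ with hN
      have hMN : M ≠ N := fun hh => hmnne (congrArg Subtype.val hh)
      have hterm : ∀ i : {x // x ∈ Finset.Icc 1 n},
          w (Sum.inl i) • g (i : ℕ)
            = w (Sum.inl i) • β (i : ℕ)
              - ((if i = M then w (Sum.inl i) else 0)
                  + (if i = N then w (Sum.inl i) else 0)) • β' := by
        intro i
        by_cases h1 : i = M
        · subst h1
          rw [if_pos rfl, if_neg hMN, show ((M : ℕ)) = m from rfl, hgm]
          module
        · by_cases h2 : i = N
          · subst h2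
            rw [if_neg h1, if_pos rfl, show ((N : ℕ)) = n from rfl, hgn]
            module
          · have h1' : (i : ℕ) ≠ m := fun hh => h1 (Subtype.ext hh)
            have h2' : (i : ℕ) ≠ n := fun hh => h2 (Subtype.ext hh)
            rw [if_neg h1, if_neg h2, hgo _ h1' h2']
            module
      rw [Finset.sum_congr rfl (fun i _ => hterm i), Finset.sum_sub_distrib,
        ← Finset.sum_smul, Finset.sum_add_distrib,
        Finset.sum_ite_eq' Finset.univ M (fun i => w (Sum.inl i)),
        Finset.sum_ite_eq' Finset.univ N (fun i => w (Sum.inl i))] at hw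
      simp only [Finset.mem_univ, if_true] at hw
      have hw2 : (∑ i : {x // x ∈ Finset.Icc 1 n}, w (Sum.inl i) • β (i : ℕ))
          + (w (Sum.inr ()) - w (Sum.inl M) - w (Sum.inl N)) • β' = 0 := by
        rw [← hw]; module
      have hd : w (Sum.inr ()) - w (Sum.inl M) - w (Sum.inl N) = 0 := by
        by_contra hd
        apply hβ'V
        have h5 := eq_neg_of_add_eq_zero_right hw2
        have h6 : β' = (w (Sum.inr ()) - w (Sum.inl M) - w (Sum.inl N))⁻¹ •
            (-(∑ i : {x // x ∈ Finset.Icc 1 n}, w (Sum.inl i) • β (i : ℕ))) := by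
          rw [← h5, inv_smul_smul₀ hd]
        rw [h6]
        exact V.smul_mem _ (V.neg_mem (Submodule.sum_smul_mem V _ (fun i _ => hβmem i i.2)))
      have hw3 : (∑ i : {x // x ∈ Finset.Icc 1 n}, w (Sum.inl i) • β (i : ℕ)) = 0 := by
        rw [hd, zero_smul, add_zero] at hw2; exact hw2
      have hβ0 : ∀ i : {x // x ∈ Finset.Icc 1 n}, w (Sum.inl i) = 0 :=
        Fintype.linearIndependent_iff.mp hind (fun i => w (Sum.inl i)) hw3
      rintro (i | ⟨⟩)
      · exact hβ0 i
      · have h1 := hβ0 M; have h2 := hβ0 N; rw [h1, h2] at hd; linarith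
    have hrange : (g '' Set.Icc 1 n) ∪ {β'} = Set.range f := by
      rw [hf, Set.Sum.elim_range]
      congr 1
      · rw [← Finset.coe_Icc]
        exact Set.image_eq_range _ _
      · rw [Set.range_const]
    rw [SetLinIndep, hrange]
    exact hfind.linearIndepOn_id
  · -- cone span
    intro i hi
    by_cases h1 : i = m
    · rw [h1]
      refine ⟨{β m - β', β'}, ?_, ⟨fun _ => 1, fun _ => zero_le_one, ?_⟩⟩
      · intro x hx
        simp only [Finset.coe_insert, Finset.coe_singleton, Set.mem_insert_iff,
          Set.mem_singleton_iff] at hx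
        rcases hx with rfl | rfl
        · rw [← hgm]; exact hmemΓ m hmI
        · exact hβ'Γ
      · rw [Finset.sum_pair hne1]
        module
    · by_cases h2 : i = n
      · rw [h2]
        refine ⟨{β n - β', β'}, ?_, ⟨fun _ => 1, fun _ => zero_le_one, ?_⟩⟩
        · intro x hx
          simp only [Finset.coe_insert, Finset.coe_singleton, Set.mem_insert_iff,
            Set.mem_singleton_iff] at hx
          rcases hx with rfl | rfl
          · rw [← hgn]; exact hmemΓ n hnI
          · exact hβ'Γ
        · rw [Finset.sum_pair hne2]
          module
      · refine ⟨{β i}, ?_, ⟨fun _ => 1, fun _ => zero_le_one, ?_⟩⟩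
        · intro x hx
          simp only [Finset.coe_singleton, Set.mem_singleton_iff] at hx
          subst hx
          rw [← hgo i h1 h2]; exact hmemΓ i hi
        · rw [Finset.sum_singleton, one_smul]
end

section
/- Fix an infinite subset I ⊆ ℕ. Let β₁,…,β_n be I-supported elements of ∏_{i∈ℕ} ℚ≥0 that are linearly independent over ℚ, and let α ∈ ∏_{i∈ℕ} ℚ≥0 be an I-supported element with α = η₁β₁ + ⋯ + η_{n−1}β_{n−1} − β_n, where each η_i ∈ {0,1}. Then there exists a finite set Γ ⊆ ∏_{i∈ℕ} ℚ≥0 of I-supported elements that is linearly independent over ℚ and satisfies {α, β₁,…,β_n} ⊆ Σ_{γ∈Γ} ℚ≥0·γ. -/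
noncomputable def eSeq (j : ℕ) : ℕ → ℚ := fun x => if x = j then 1 else 0

lemma eSeq_li : LinearIndependent ℚ eSeq := by
  rw [linearIndependent_iff']
  intro t c h j hj
  have hx := congrFun h j
  simp only [Finset.sum_apply, Pi.smul_apply, smul_eq_mul, Pi.zero_apply, eSeq] at hx
  rwa [Finset.sum_eq_single_of_mem j hj (fun b _ hbj => by
    rw [if_neg (fun h => hbj h.symm), mul_zero]), if_pos rfl, mul_one] at hx

lemma finite_bad (F : Finset (ℕ → ℚ)) :
    {j : ℕ | eSeq j ∈ Submodule.span ℚ (F : Set (ℕ → ℚ))}.Finite := by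
  rw [← Set.finite_coe_iff]
  set W := Submodule.span ℚ (F : Set (ℕ → ℚ))
  have li : LinearIndependent ℚ (fun j : {j : ℕ | eSeq j ∈ W} => (⟨eSeq j, j.2⟩ : W)) := by
    apply LinearIndependent.of_comp W.subtype
    exact eSeq_li.comp (fun j : {j : ℕ | eSeq j ∈ W} => (j : ℕ)) Subtype.val_injective
  exact li.finite

lemma exists_fresh (I : Set ℕ) (hI : I.Infinite) (m : ℕ) (F : Finset (ℕ → ℚ)) :
    ∃ g : Fin m → ℕ, (∀ l, g l ∈ I) ∧
      ∀ c : Fin m → ℚ,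
        (∑ l, c l • eSeq (g l)) ∈ Submodule.span ℚ (F : Set (ℕ → ℚ)) → ∀ l, c l = 0 := by
  classical
  induction m with
  | zero => exact ⟨Fin.elim0, fun l => l.elim0, fun c h l => l.elim0⟩
  | succ m ih =>
    obtain ⟨g, hgI, hg⟩ := ih
    set F' : Finset (ℕ → ℚ) := F ∪ Finset.image (fun l => eSeq (g l)) Finset.univ with hF'
    obtain ⟨j, hjI⟩ := (hI.diff (finite_bad F')).nonempty
    set g' : Fin (m + 1) → ℕ := Fin.cons j g with hg'
    refine ⟨g', ?_, ?_⟩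
    · intro l
      refine Fin.cases ?_ ?_ l
      · exact hjI.1
      · intro i; show g i ∈ I; exact hgI i
    · intro c h
      have hsum : (∑ l, c l • eSeq (g' l) : ℕ → ℚ)
          = c 0 • eSeq j + ∑ l : Fin m, c l.succ • eSeq (g l) := by
        rw [Fin.sum_univ_succ]
        simp [hg']
      have hc0 : c 0 = 0 := by
        by_contra hc0
        have hmem : eSeq j ∈ Submodule.span ℚ (F' : Set (ℕ → ℚ)) := by
          have h1 : (∑ l, c l • eSeq (g' l)) ∈ Submodule.span ℚ (F' : Set (ℕ → ℚ)) :=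
            Submodule.span_mono (Finset.coe_subset.mpr Finset.subset_union_left) h
          have h2 : (∑ l : Fin m, c l.succ • eSeq (g l)) ∈ Submodule.span ℚ (F' : Set (ℕ → ℚ)) := by
            apply Submodule.sum_mem
            intro l _
            apply Submodule.smul_mem
            apply Submodule.subset_span
            have : eSeq (g l) ∈ F' := Finset.mem_union_right _
              (Finset.mem_image.mpr ⟨l, Finset.mem_univ l, rfl⟩)
            exact this
          have h3 : c 0 • eSeq j ∈ Submodule.span ℚ (F' : Set (ℕ → ℚ)) := by
            rw [hsum] at h1
            have := Submodule.sub_mem _ h1 h2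
            simpa using this
          have := Submodule.smul_mem _ (c 0)⁻¹ h3
          rwa [smul_smul, inv_mul_cancel₀ hc0, one_smul] at this
        exact hjI.2 hmem
      have htail : ∀ l : Fin m, c l.succ = 0 := by
        apply hg
        rw [hsum, hc0, zero_smul, zero_add] at h
        exact h
      intro l
      refine Fin.cases ?_ ?_ l
      · exact hc0
      · exact htail

lemma inConeSpan_image {ι : Type} [Fintype ι] [DecidableEq (ℕ → ℚ)]
    (G : ι → (ℕ → ℚ)) (hG : Function.Injective G)
    (d : ι → ℚ) (hd : ∀ i, 0 ≤ d i) (v : ℕ → ℚ) (hv : v = ∑ i, d i • G i) :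
    InConeSpan (Finset.image G Finset.univ) v := by
  classical
  refine ⟨fun γ => ∑ i, if G i = γ then d i else 0, ?_, ?_⟩
  · intro γ
    apply Finset.sum_nonneg
    intro i _
    split <;> simp [hd i]
  · rw [Finset.sum_image (fun a _ b _ h => hG h)]
    rw [hv]
    apply Finset.sum_congr rfl
    intro i _
    have hci : (∑ i' : ι, if G i' = G i then d i' else 0) = d i := by
      rw [Finset.sum_eq_single_of_mem i (Finset.mem_univ i)
        (fun b _ hbi => by rw [if_neg (fun h => hbi (hG h))]), if_pos rfl]
    show d i • G i = (∑ i' : ι, if G i' = G i then d i' else 0) • G i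
    rw [hci]

/-- Fix an infinite `I ⊆ ℕ`.  Let `β₁, …, β_n` be `I`-supported elements of
`∏_{i ∈ ℕ} ℚ≥0`, linearly independent over `ℚ`, and `α ∈ ∏_{i ∈ ℕ} ℚ≥0` an `I`-supported
element with `α = η₁β₁ + ⋯ + η_{n-1}β_{n-1} - β_n`, each `η_i ∈ {0, 1}`.  Then there is a
finite set `Γ ⊆ ∏_{i ∈ ℕ} ℚ≥0` of `I`-supported elements, linearly independent over `ℚ`,
with `{α, β₁, …, β_n} ⊆ Σ_{γ ∈ Γ} ℚ≥0 · γ`. -/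
theorem exists_independent_cone_containing_of_binary_relation
    (I : Set ℕ) (hI : I.Infinite) (n : ℕ) (hn : 1 ≤ n)
    (β : ℕ → (ℕ → ℚ))
    (hβ : ∀ i ∈ Finset.Icc 1 n, NonnegSeq (β i) ∧ ISupported I (β i))
    (hind : LinearIndependent ℚ (fun i : (Finset.Icc 1 n : Finset ℕ) => β i))
    (η : ℕ → ℚ) (hη : ∀ i, η i = 0 ∨ η i = 1)
    (α : ℕ → ℚ) (hα : NonnegSeq α ∧ ISupported I α)
    (heq : α = (∑ i ∈ Finset.Icc 1 (n - 1), η i • β i) - β n) :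
    ∃ Γ : Finset (ℕ → ℚ),
      (∀ γ ∈ Γ, NonnegSeq γ ∧ ISupported I γ) ∧ FinsetLinIndep Γ ∧
        InConeSpan Γ α ∧ ∀ i ∈ Finset.Icc 1 n, InConeSpan Γ (β i) := by
  classical
  obtain ⟨hαnn, hαsup⟩ := hα
  have hβnn : ∀ i ∈ Finset.Icc 1 n, NonnegSeq (β i) := fun i hi => (hβ i hi).1
  have hβsup : ∀ i ∈ Finset.Icc 1 n, ISupported I (β i) := fun i hi => (hβ i hi).2
  have hnIcc : n ∈ Finset.Icc 1 n := Finset.mem_Icc.mpr ⟨hn, le_refl n⟩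
  have hαpos : ∀ x ∈ I, 0 < α x := fun x hx => lt_of_le_of_ne (hαnn x) (Ne.symm (hαsup x hx))
  have hβpos : ∀ i ∈ Finset.Icc 1 n, ∀ x ∈ I, 0 < β i x :=
    fun i hi x hx => lt_of_le_of_ne (hβnn i hi x) (Ne.symm (hβsup i hi x hx))
  set S : Finset ℕ := (Finset.Icc 1 (n-1)).filter (fun i => η i = 1) with hSdef
  set T : Finset ℕ := (Finset.Icc 1 (n-1)).filter (fun i => ¬ η i = 1) with hTdef
  have hSub' : S ⊆ Finset.Icc 1 (n-1) := by rw [hSdef]; exact Finset.filter_subset _ _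
  have hTub' : T ⊆ Finset.Icc 1 (n-1) := by rw [hTdef]; exact Finset.filter_subset _ _
  have hIccsub : Finset.Icc 1 (n-1) ⊆ Finset.Icc 1 n := Finset.Icc_subset_Icc_right (by omega)
  have hSsub : S ⊆ Finset.Icc 1 n := hSub'.trans hIccsub
  have hTsub : T ⊆ Finset.Icc 1 n := hTub'.trans hIccsub
  -- pointwise relation
  have hsum_eta : ∀ x, (∑ i ∈ Finset.Icc 1 (n-1), η i * β i x) = ∑ i ∈ S, β i x := by
    intro x
    have hsplit := Finset.sum_filter_add_sum_filter_not (Finset.Icc 1 (n-1))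
      (fun i => η i = 1) (fun i => η i * β i x)
    have h1 : ∑ i ∈ S, η i * β i x = ∑ i ∈ S, β i x := by
      apply Finset.sum_congr rfl
      intro i hi
      rw [hSdef] at hi
      rw [(Finset.mem_filter.mp hi).2, one_mul]
    have h2 : ∑ i ∈ T, η i * β i x = 0 := by
      apply Finset.sum_eq_zero
      intro i hi
      rw [hTdef] at hi
      rcases hη i with h | h
      · rw [h, zero_mul]
      · exact absurd h (Finset.mem_filter.mp hi).2
    calc ∑ i ∈ Finset.Icc 1 (n-1), η i * β i x
        = (∑ i ∈ S, η i * β i x) + ∑ i ∈ T, η i * β i x := by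
          rw [hSdef, hTdef]; exact hsplit.symm
      _ = ∑ i ∈ S, β i x := by rw [h1, h2, add_zero]
  set B : ℕ → ℚ := fun x => ∑ i ∈ S, β i x with hBdef
  have hαx : ∀ x, α x = B x - β n x := by
    intro x
    have hx := congrFun heq x
    simp only [Pi.sub_apply, Finset.sum_apply, Pi.smul_apply, smul_eq_mul] at hx
    rw [hsum_eta x] at hx
    exact hx
  have hSne : S.Nonempty := by
    by_contra hne
    rw [Finset.not_nonempty_iff_eq_empty] at hne
    obtain ⟨x0, hx0⟩ := hI.nonempty
    have hB0 : B x0 = 0 := by rw [hBdef]; simp [hne]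
    have h1 := hαx x0
    have h2 := hαpos x0 hx0
    have h3 := hβpos n hnIcc x0 hx0
    rw [hB0] at h1
    linarith
  set k := S.card with hkdef
  have hk : 0 < k := Finset.card_pos.mpr hSne
  haveI : NeZero k := ⟨hk.ne'⟩
  haveI : Nonempty (Fin k) := ⟨⟨0, hk⟩⟩
  set s : Fin k → ℕ := fun l => ((S.equivFin.symm l : S) : ℕ) with hsdef
  have hs_mem : ∀ l, s l ∈ S := fun l => (S.equivFin.symm l).2
  have hs_Icc : ∀ l, s l ∈ Finset.Icc 1 n := fun l => hSsub (hs_mem l)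
  have hs_ne_n : ∀ l, s l ≠ n := by
    intro l
    have := hSub' (hs_mem l)
    rw [Finset.mem_Icc] at this
    omega
  have hreidxQ : ∀ f : ℕ → ℚ, ∑ l : Fin k, f (s l) = ∑ i ∈ S, f i := by
    intro f
    rw [← Finset.sum_coe_sort S f]
    exact Equiv.sum_comp S.equivFin.symm (fun x => f ↑x)
  have hreidxF : ∀ f : ℕ → (ℕ → ℚ), ∑ l : Fin k, f (s l) = ∑ i ∈ S, f i := by
    intro f
    rw [← Finset.sum_coe_sort S f]
    exact Equiv.sum_comp S.equivFin.symm (fun x => f ↑x)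
  have hBnn : ∀ x, 0 ≤ B x := fun x => Finset.sum_nonneg fun i hi => hβnn i (hSsub hi) x
  have hBpos : ∀ x ∈ I, 0 < B x := by
    intro x hx
    obtain ⟨i0, hi0⟩ := hSne
    exact lt_of_lt_of_le (hβpos i0 (hSsub hi0) x hx)
      (Finset.single_le_sum (fun i hi => hβnn i (hSsub hi) x) hi0)
  have hBzero : ∀ x, B x = 0 → ∀ i ∈ S, β i x = 0 := by
    intro x hx
    exact (Finset.sum_eq_zero_iff_of_nonneg (fun i hi => hβnn i (hSsub hi) x)).mp hx
  have hBzero' : ∀ x, B x = 0 → α x = 0 ∧ β n x = 0 := by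
    intro x hx
    have h1 := hαx x
    have h2 := hαnn x
    have h3 := hβnn n hnIcc x
    constructor <;> linarith
  set u : Fin k → ℕ → ℚ := fun l x => α x * β (s l) x / B x with hudef
  set v : Fin k → ℕ → ℚ := fun l x => β n x * β (s l) x / B x with hvdef
  have hunn : ∀ l x, 0 ≤ u l x :=
    fun l x => div_nonneg (mul_nonneg (hαnn x) (hβnn _ (hs_Icc l) x)) (hBnn x)
  have hvnn : ∀ l x, 0 ≤ v l x :=
    fun l x => div_nonneg (mul_nonneg (hβnn n hnIcc x) (hβnn _ (hs_Icc l) x)) (hBnn x)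
  have hupos : ∀ l, ∀ x ∈ I, 0 < u l x := fun l x hx =>
    div_pos (mul_pos (hαpos x hx) (hβpos _ (hs_Icc l) x hx)) (hBpos x hx)
  have hvpos : ∀ l, ∀ x ∈ I, 0 < v l x := fun l x hx =>
    div_pos (mul_pos (hβpos n hnIcc x hx) (hβpos _ (hs_Icc l) x hx)) (hBpos x hx)
  have huv : ∀ l x, u l x + v l x = β (s l) x := by
    intro l x
    rcases eq_or_ne (B x) 0 with h0 | h0
    · have hb := hBzero x h0 _ (hs_mem l)
      show α x * β (s l) x / B x + β n x * β (s l) x / B x = β (s l) x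
      rw [hb]; simp
    · show α x * β (s l) x / B x + β n x * β (s l) x / B x = β (s l) x
      rw [← add_div, ← add_mul,
        show α x + β n x = B x from by have := hαx x; linarith,
        mul_comm, mul_div_assoc, div_self h0, mul_one]
  have husum : ∀ x, (∑ l, u l x) = α x := by
    intro x
    rcases eq_or_ne (B x) 0 with h0 | h0
    · rw [(hBzero' x h0).1]
      apply Finset.sum_eq_zero
      intro l _
      show α x * β (s l) x / B x = 0
      rw [hBzero x h0 _ (hs_mem l)]; simp
    · calc (∑ l, u l x) = (∑ l, α x * β (s l) x) / B x := by
            rw [← Finset.sum_div]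
        _ = α x * (∑ l, β (s l) x) / B x := by rw [← Finset.mul_sum]
        _ = α x * B x / B x := by rw [hreidxQ (fun i => β i x)]
        _ = α x := by rw [mul_div_assoc, div_self h0, mul_one]
  have hvsum : ∀ x, (∑ l, v l x) = β n x := by
    intro x
    rcases eq_or_ne (B x) 0 with h0 | h0
    · rw [(hBzero' x h0).2]
      apply Finset.sum_eq_zero
      intro l _
      show β n x * β (s l) x / B x = 0
      rw [hBzero x h0 _ (hs_mem l)]; simp
    · calc (∑ l, v l x) = (∑ l, β n x * β (s l) x) / B x := by
            rw [← Finset.sum_div]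
        _ = β n x * (∑ l, β (s l) x) / B x := by rw [← Finset.mul_sum]
        _ = β n x * B x / B x := by rw [hreidxQ (fun i => β i x)]
        _ = β n x := by rw [mul_div_assoc, div_self h0, mul_one]
  -- fresh coordinates
  set F0 : Finset (ℕ → ℚ) := (Finset.Icc 1 n).image β ∪ Finset.univ.image u with hF0def
  have hβF0 : ∀ i ∈ Finset.Icc 1 n, β i ∈ F0 := by
    intro i hi
    rw [hF0def]
    exact Finset.mem_union_left _ (Finset.mem_image.mpr ⟨i, hi, rfl⟩)
  have huF0 : ∀ l, u l ∈ F0 := by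
    intro l
    rw [hF0def]
    exact Finset.mem_union_right _ (Finset.mem_image.mpr ⟨l, Finset.mem_univ l, rfl⟩)
  obtain ⟨j, hjI, hjfresh⟩ := exists_fresh I hI k F0
  set m0 : ℚ := Finset.univ.inf' Finset.univ_nonempty
    (fun l : Fin k => min (v l (j l)) (u l (j (l+1)))) with hm0def
  have hm0pos : 0 < m0 := by
    rw [hm0def, Finset.lt_inf'_iff]
    intro l _
    exact lt_min (hvpos l _ (hjI l)) (hupos l _ (hjI (l+1)))
  have hm0v : ∀ l, m0 ≤ v l (j l) := fun l => by
    rw [hm0def]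
    exact (Finset.inf'_le _ (Finset.mem_univ l)).trans (min_le_left _ _)
  have hm0u : ∀ l, m0 ≤ u l (j (l+1)) := fun l => by
    rw [hm0def]
    exact (Finset.inf'_le _ (Finset.mem_univ l)).trans (min_le_right _ _)
  set ε : ℚ := m0 / 2 with hεdef
  have hεpos : 0 < ε := by rw [hεdef]; linarith
  have hεne : ε ≠ 0 := hεpos.ne'
  have hεm0 : ε < m0 := by rw [hεdef]; linarith
  set t : Fin k → ℕ → ℚ := fun l x => ε * (eSeq (j l) x - eSeq (j (l+1)) x) with htdef
  set u' : Fin k → ℕ → ℚ := fun l x => u l x + t l x with hu'def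
  set v' : Fin k → ℕ → ℚ := fun l x => v l x - t l x with hv'def
  have hu'nn : ∀ l x, 0 ≤ u' l x := by
    intro l x
    show 0 ≤ u l x + ε * (eSeq (j l) x - eSeq (j (l+1)) x)
    simp only [eSeq]
    have hnn := hunn l x
    by_cases h1 : x = j l <;> by_cases h2 : x = j (l+1)
    · rw [if_pos h1, if_pos h2]; linarith
    · rw [if_pos h1, if_neg h2]; linarith
    · rw [if_neg h1, if_pos h2]
      have h3 : u l x = u l (j (l+1)) := by rw [h2]
      have := hm0u l; rw [h3]; linarith
    · rw [if_neg h1, if_neg h2]; linarith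
  have hu'pos : ∀ l, ∀ x ∈ I, 0 < u' l x := by
    intro l x hx
    show 0 < u l x + ε * (eSeq (j l) x - eSeq (j (l+1)) x)
    simp only [eSeq]
    have hp := hupos l x hx
    by_cases h1 : x = j l <;> by_cases h2 : x = j (l+1)
    · rw [if_pos h1, if_pos h2]; linarith
    · rw [if_pos h1, if_neg h2]; linarith
    · rw [if_neg h1, if_pos h2]
      have h3 : u l x = u l (j (l+1)) := by rw [h2]
      have := hm0u l; rw [h3]; linarith
    · rw [if_neg h1, if_neg h2]; linarith
  have hv'nn : ∀ l x, 0 ≤ v' l x := by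
    intro l x
    show 0 ≤ v l x - ε * (eSeq (j l) x - eSeq (j (l+1)) x)
    simp only [eSeq]
    have hnn := hvnn l x
    by_cases h1 : x = j l <;> by_cases h2 : x = j (l+1)
    · rw [if_pos h1, if_pos h2]; linarith
    · rw [if_pos h1, if_neg h2]
      have h3 : v l x = v l (j l) := by rw [h1]
      have := hm0v l; rw [h3]; linarith
    · rw [if_neg h1, if_pos h2]; linarith
    · rw [if_neg h1, if_neg h2]; linarith
  have hv'pos : ∀ l, ∀ x ∈ I, 0 < v' l x := by
    intro l x hx
    show 0 < v l x - ε * (eSeq (j l) x - eSeq (j (l+1)) x)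
    simp only [eSeq]
    have hp := hvpos l x hx
    by_cases h1 : x = j l <;> by_cases h2 : x = j (l+1)
    · rw [if_pos h1, if_pos h2]; linarith
    · rw [if_pos h1, if_neg h2]
      have h3 : v l x = v l (j l) := by rw [h1]
      have := hm0v l; rw [h3]; linarith
    · rw [if_neg h1, if_pos h2]; linarith
    · rw [if_neg h1, if_neg h2]; linarith
  have htsum : ∀ x, (∑ l, t l x) = 0 := by
    intro x
    have h1 : ∑ l : Fin k, eSeq (j (l+1)) x = ∑ l : Fin k, eSeq (j l) x :=
      Equiv.sum_comp (Equiv.addRight (1 : Fin k)) (fun l => eSeq (j l) x)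
    show (∑ l, ε * (eSeq (j l) x - eSeq (j (l+1)) x)) = 0
    rw [← Finset.mul_sum, Finset.sum_sub_distrib, h1, sub_self, mul_zero]
  have huv' : ∀ l, u' l + v' l = β (s l) := by
    intro l
    funext x
    show (u l x + t l x) + (v l x - t l x) = β (s l) x
    have := huv l x
    linarith
  have hu'sum : (∑ l, u' l) = α := by
    funext x
    rw [Finset.sum_apply]
    show (∑ l, (u l x + t l x)) = α x
    rw [Finset.sum_add_distrib, husum x, htsum x, add_zero]
  have hv'sum : (∑ l, v' l) = β n := by
    funext x
    rw [Finset.sum_apply]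
    show (∑ l, (v l x - t l x)) = β n x
    rw [Finset.sum_sub_distrib, hvsum x, htsum x, sub_zero]
  have husumf : (∑ l, u l) = α := by
    funext x
    rw [Finset.sum_apply]
    exact husum x
  -- the family
  set G : ({x // x ∈ T} ⊕ (Fin k ⊕ Fin k)) → (ℕ → ℚ) :=
    Sum.elim (fun i => β ↑i) (Sum.elim u' v') with hGdef
  have liG : LinearIndependent ℚ G := by
    rw [Fintype.linearIndependent_iff]
    intro g hg0
    rw [Fintype.sum_sum_type] at hg0
    rw [Fintype.sum_sum_type] at hg0
    simp only [hGdef, Sum.elim_inl, Sum.elim_inr] at hg0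
    -- names
    set a : Fin k → ℚ := fun l => g (Sum.inr (Sum.inl l)) with hadef
    set b : Fin k → ℚ := fun l => g (Sum.inr (Sum.inr l)) with hbdef
    set d : Fin k → ℚ := fun l => a l - b l with hddef
    -- hg0 : (∑ i : T, g (inl i) • β i) + ((∑ l, a l • u' l) + (∑ l, b l • v' l)) = 0
    have hUV : (∑ l, a l • u' l) + (∑ l, b l • v' l)
        = (∑ l, b l • β (s l)) + ((∑ l, d l • u l)
          + (∑ l, (ε * (d l - d (l - 1))) • eSeq (j l))) := by
      funext x
      simp only [Pi.add_apply, Finset.sum_apply, Pi.smul_apply, smul_eq_mul]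
      have htd : (∑ l, d l * t l x) = ∑ l, (ε * (d l - d (l - 1))) * eSeq (j l) x := by
        have h1 : ∑ l : Fin k, d l * eSeq (j (l+1)) x
            = ∑ l : Fin k, d (l - 1) * eSeq (j l) x := by
          have h2 := Equiv.sum_comp (Equiv.addRight (1 : Fin k))
            (fun l => d (l - 1) * eSeq (j l) x)
          simp only [Equiv.coe_addRight, add_sub_cancel_right] at h2
          exact h2
        calc (∑ l, d l * t l x)
            = ∑ l, (d l * (ε * eSeq (j l) x) - d l * (ε * eSeq (j (l+1)) x)) := by
              apply Finset.sum_congr rfl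
              intro l _
              show d l * (ε * (eSeq (j l) x - eSeq (j (l+1)) x)) = _
              ring
          _ = (∑ l, d l * (ε * eSeq (j l) x)) - ∑ l, d l * (ε * eSeq (j (l+1)) x) := by
              rw [Finset.sum_sub_distrib]
          _ = (∑ l, d l * (ε * eSeq (j l) x)) - ∑ l, d (l - 1) * (ε * eSeq (j l) x) := by
              congr 1
              calc (∑ l, d l * (ε * eSeq (j (l+1)) x))
                  = ∑ l, ε * (d l * eSeq (j (l+1)) x) := by
                    apply Finset.sum_congr rfl; intro l _; ring
                _ = ε * ∑ l, d l * eSeq (j (l+1)) x := by rw [Finset.mul_sum]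
                _ = ε * ∑ l, d (l - 1) * eSeq (j l) x := by rw [h1]
                _ = ∑ l, d (l - 1) * (ε * eSeq (j l) x) := by
                    rw [Finset.mul_sum]; apply Finset.sum_congr rfl; intro l _; ring
          _ = ∑ l, (ε * (d l - d (l - 1))) * eSeq (j l) x := by
              rw [← Finset.sum_sub_distrib]
              apply Finset.sum_congr rfl
              intro l _
              ring
      rw [← htd, ← Finset.sum_add_distrib, ← Finset.sum_add_distrib, ← Finset.sum_add_distrib]
      apply Finset.sum_congr rfl
      intro l _
      show a l * u' l x + b l * v' l x = b l * β (s l) x + (d l * u l x + d l * t l x)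
      have h2 : u' l x = u l x + t l x := rfl
      have h3 : v' l x = v l x - t l x := rfl
      have h4 := huv l x
      have h5 : d l = a l - b l := rfl
      rw [h2, h3, h5]
      have : v l x = β (s l) x - u l x := by linarith
      rw [this]
      ring
    rw [hUV] at hg0
    -- span membership
    have hWmem : (∑ l, (ε * (d l - d (l - 1))) • eSeq (j l))
        ∈ Submodule.span ℚ (F0 : Set (ℕ → ℚ)) := by
      have hA : (∑ i : {x // x ∈ T}, g (Sum.inl i) • β ↑i)
          ∈ Submodule.span ℚ (F0 : Set (ℕ → ℚ)) :=
        Submodule.sum_mem _ (fun i _ => Submodule.smul_mem _ _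
          (Submodule.subset_span (hβF0 _ (hTsub i.2))))
      have hBB : (∑ l, b l • β (s l)) ∈ Submodule.span ℚ (F0 : Set (ℕ → ℚ)) :=
        Submodule.sum_mem _ (fun l _ => Submodule.smul_mem _ _
          (Submodule.subset_span (hβF0 _ (hs_Icc l))))
      have hDD : (∑ l, d l • u l) ∈ Submodule.span ℚ (F0 : Set (ℕ → ℚ)) :=
        Submodule.sum_mem _ (fun l _ => Submodule.smul_mem _ _
          (Submodule.subset_span (huF0 l)))
      have hWeq : (∑ l, (ε * (d l - d (l - 1))) • eSeq (j l))
          = -((∑ i : {x // x ∈ T}, g (Sum.inl i) • β ↑i) + ((∑ l, b l • β (s l))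
            + (∑ l, d l • u l))) := by
        have h6 : ((∑ i : {x // x ∈ T}, g (Sum.inl i) • β ↑i) + ((∑ l, b l • β (s l))
            + (∑ l, d l • u l))) + (∑ l, (ε * (d l - d (l - 1))) • eSeq (j l)) = 0 := by
          rw [← hg0]; abel
        exact eq_neg_of_add_eq_zero_right h6
      rw [hWeq]
      exact Submodule.neg_mem _ (Submodule.add_mem _ hA (Submodule.add_mem _ hBB hDD))
    have hcoef : ∀ l, ε * (d l - d (l - 1)) = 0 := hjfresh _ hWmem
    have hdstep : ∀ l, d l = d (l - 1) := by
      intro l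
      have := hcoef l
      rcases mul_eq_zero.mp this with h | h
      · exact absurd h hεne
      · linarith [sub_eq_zero.mp h]
    have hdsucc : ∀ l : Fin k, d (l + 1) = d l := by
      intro l
      have := hdstep (l + 1)
      rwa [add_sub_cancel_right] at this
    have hdconst : ∀ l, d l = d 0 := by
      have haux : ∀ m : ℕ, ∀ hm : m < k, d ⟨m, hm⟩ = d 0 := by
        intro m
        induction m with
        | zero =>
          intro hm
          have h0 : (⟨0, hm⟩ : Fin k) = 0 := Fin.ext (by simp)
          rw [h0]
        | succ p ihp =>
          intro hm
          have hp : p < k := Nat.lt_of_succ_lt hm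
          have h1k : 1 % k = 1 := Nat.mod_eq_of_lt (by omega)
          have hfin : (⟨p, hp⟩ : Fin k) + 1 = ⟨p+1, hm⟩ := by
            apply Fin.ext
            rw [Fin.val_add, Fin.val_one']
            simp [h1k, Nat.mod_eq_of_lt hm]
          rw [← hfin, hdsucc]
          exact ihp hp
      intro l
      have := haux l.1 l.2
      simpa using this
    have hW0 : (∑ l, (ε * (d l - d (l - 1))) • eSeq (j l)) = (0 : ℕ → ℚ) :=
      Finset.sum_eq_zero (fun l _ => by rw [hcoef l, zero_smul])
    have hDDeq : (∑ l, d l • u l) = d 0 • α := by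
      calc (∑ l, d l • u l) = ∑ l, d 0 • u l :=
            Finset.sum_congr rfl (fun l _ => by rw [hdconst l])
        _ = d 0 • (∑ l, u l) := (Finset.smul_sum).symm
        _ = d 0 • α := by rw [husumf]
    rw [hW0, add_zero, hDDeq] at hg0
    -- hg0 : A + (BB + d 0 • α) = 0
    set d0 : ℚ := d 0 with hd0def
    set φ : ℕ → ℚ := fun i =>
      if i = n then -d0 else if h : i ∈ S then b (S.equivFin ⟨i, h⟩) + d0
      else if h' : i ∈ T then g (Sum.inl ⟨i, h'⟩) else 0 with hφdef
    have hφn : φ n = -d0 := by simp [hφdef]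
    have hφs : ∀ l, φ (s l) = b l + d0 := by
      intro l
      rw [hφdef]
      show (if s l = n then -d0 else if h : s l ∈ S then b (S.equivFin ⟨s l, h⟩) + d0
        else if h' : s l ∈ T then g (Sum.inl ⟨s l, h'⟩) else 0) = b l + d0
      rw [if_neg (hs_ne_n l)]
      rw [dif_pos (hs_mem l)]
      have hsub : (⟨s l, hs_mem l⟩ : {x // x ∈ S}) = S.equivFin.symm l := Subtype.ext rfl
      rw [hsub, Equiv.apply_symm_apply]
    have hφT : ∀ i : {x // x ∈ T}, φ ↑i = g (Sum.inl i) := by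
      intro i
      have hiT : ↑i ∈ T := i.2
      have hinS : (i : ℕ) ∉ S := by
        intro hc
        exact (Finset.mem_filter.mp hiT).2 (Finset.mem_filter.mp hc).2
      have hin : (i : ℕ) ≠ n := by
        have := hTub' hiT
        rw [Finset.mem_Icc] at this
        omega
      rw [hφdef]
      show (if (i : ℕ) = n then -d0 else if h : (i : ℕ) ∈ S then b (S.equivFin ⟨↑i, h⟩) + d0
        else if h' : (i : ℕ) ∈ T then g (Sum.inl ⟨↑i, h'⟩) else 0) = g (Sum.inl i)
      rw [if_neg hin]
      rw [dif_neg hinS]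
      rw [dif_pos hiT]
    have hαfn : α = (∑ i ∈ S, β i) - β n := by
      funext x
      rw [Pi.sub_apply, Finset.sum_apply]
      exact hαx x
    have hφsum : (∑ i : {x // x ∈ Finset.Icc 1 n}, φ ↑i • β ↑i) = 0 := by
      have hIccsplit : Finset.Icc 1 n = insert n (Finset.Icc 1 (n-1)) := by
        ext i
        simp only [Finset.mem_Icc, Finset.mem_insert]
        omega
      have hnotmem : n ∉ Finset.Icc 1 (n-1) := by
        rw [Finset.mem_Icc]; omega
      have e1 : (∑ i : {x // x ∈ Finset.Icc 1 n}, φ ↑i • β ↑i)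
          = ∑ i ∈ Finset.Icc 1 n, φ i • β i :=
        Finset.sum_coe_sort (Finset.Icc 1 n) (fun i => φ i • β i)
      have e2 : ∑ i ∈ Finset.Icc 1 (n-1), φ i • β i
          = (∑ i ∈ S, φ i • β i) + ∑ i ∈ T, φ i • β i := by
        rw [hSdef, hTdef]
        exact (Finset.sum_filter_add_sum_filter_not _ _ _).symm
      have e3 : (∑ i ∈ S, φ i • β i) = (∑ l, b l • β (s l)) + d0 • (∑ i ∈ S, β i) := by
        rw [← hreidxF (fun i => φ i • β i)]
        calc (∑ l, φ (s l) • β (s l))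
            = ∑ l, (b l • β (s l) + d0 • β (s l)) := by
              apply Finset.sum_congr rfl
              intro l _
              rw [hφs l, add_smul]
          _ = (∑ l, b l • β (s l)) + ∑ l, d0 • β (s l) := Finset.sum_add_distrib
          _ = (∑ l, b l • β (s l)) + d0 • (∑ l, β (s l)) := by rw [Finset.smul_sum]
          _ = (∑ l, b l • β (s l)) + d0 • (∑ i ∈ S, β i) := by rw [hreidxF (fun i => β i)]
      have e4 : (∑ i ∈ T, φ i • β i) = ∑ i : {x // x ∈ T}, g (Sum.inl i) • β ↑i := by
        rw [← Finset.sum_coe_sort T (fun i => φ i • β i)]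
        apply Finset.sum_congr rfl
        intro i _
        rw [hφT i]
      rw [e1, hIccsplit, Finset.sum_insert hnotmem, e2, e3, e4, hφn]
      have : (-d0) • β n + (((∑ l, b l • β (s l)) + d0 • (∑ i ∈ S, β i))
          + ∑ i : {x // x ∈ T}, g (Sum.inl i) • β ↑i)
          = (∑ i : {x // x ∈ T}, g (Sum.inl i) • β ↑i)
            + ((∑ l, b l • β (s l)) + d0 • α) := by
        rw [hαfn, smul_sub, neg_smul]
        abel
      rw [this, hg0]
    have hall := Fintype.linearIndependent_iff.mp hind (fun i => φ ↑i) hφsum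
    have hd0 : d0 = 0 := by
      have h7 := hall ⟨n, hnIcc⟩
      simp only [hφn] at h7
      linarith
    have hb0 : ∀ l, b l = 0 := by
      intro l
      have h7 := hall ⟨s l, hs_Icc l⟩
      simp only at h7
      rw [hφs l] at h7
      rw [hd0] at h7
      linarith
    have hc0 : ∀ i : {x // x ∈ T}, g (Sum.inl i) = 0 := by
      intro i
      have h7 := hall ⟨↑i, hTsub i.2⟩
      simp only at h7
      rwa [hφT i] at h7
    intro i
    match i with
    | Sum.inl i => exact hc0 i
    | Sum.inr (Sum.inl l) =>
      have h8 : d l = d 0 := hdconst l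
      have h9 : d l = a l - b l := rfl
      have := hb0 l
      show a l = 0
      linarith [hdconst l, hd0, hb0 l, h9]
    | Sum.inr (Sum.inr l) => exact hb0 l
  have hGinj : Function.Injective G := liG.injective
  refine ⟨Finset.image G Finset.univ, ?_, ?_, ?_, ?_⟩
  · intro γ hγ
    obtain ⟨i, _, rfl⟩ := Finset.mem_image.mp hγ
    match i with
    | Sum.inl i => exact hβ ↑i (hTsub i.2)
    | Sum.inr (Sum.inl l) =>
      exact ⟨hu'nn l, fun x hx => (hu'pos l x hx).ne'⟩
    | Sum.inr (Sum.inr l) =>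
      exact ⟨hv'nn l, fun x hx => (hv'pos l x hx).ne'⟩
  · have hcoe : ((Finset.image G Finset.univ : Finset (ℕ → ℚ)) : Set (ℕ → ℚ))
        = Set.range G := by
      rw [Finset.coe_image, Finset.coe_univ, Set.image_univ]
    unfold FinsetLinIndep
    rw [hcoe]
    exact (linearIndepOn_id_range_iff liG.injective).mpr liG
  · apply inConeSpan_image G hGinj
      (Sum.elim (fun _ => 0) (Sum.elim (fun _ => (1:ℚ)) (fun _ => 0)))
      (by rintro (i | l | l) <;> simp)
    rw [Fintype.sum_sum_type, Fintype.sum_sum_type]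
    simp only [hGdef, Sum.elim_inl, Sum.elim_inr, zero_smul, one_smul, Finset.sum_const_zero]
    rw [hu'sum]
    abel
  · intro i hi
    by_cases hin : i = n
    · subst hin
      apply inConeSpan_image G hGinj
        (Sum.elim (fun _ => 0) (Sum.elim (fun _ => 0) (fun _ => (1:ℚ))))
        (by rintro (i | l | l) <;> simp)
      rw [Fintype.sum_sum_type, Fintype.sum_sum_type]
      simp only [hGdef, Sum.elim_inl, Sum.elim_inr, zero_smul, one_smul, Finset.sum_const_zero]
      rw [hv'sum]
      abel
    · have hi' : i ∈ Finset.Icc 1 (n-1) := by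
        rw [Finset.mem_Icc] at hi ⊢
        omega
      by_cases hiS : i ∈ S
      · set l : Fin k := S.equivFin ⟨i, hiS⟩ with hldef
        have hsl : s l = i := by
          rw [hsdef]
          show ((S.equivFin.symm (S.equivFin ⟨i, hiS⟩) : S) : ℕ) = i
          rw [Equiv.symm_apply_apply]
        apply inConeSpan_image G hGinj
          (Sum.elim (fun _ => 0) (Sum.elim (fun l' => if l' = l then (1:ℚ) else 0)
            (fun l' => if l' = l then (1:ℚ) else 0)))
          (by rintro (i | l' | l') <;> simp <;> split <;> simp)
        rw [Fintype.sum_sum_type, Fintype.sum_sum_type]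
        simp only [hGdef, Sum.elim_inl, Sum.elim_inr, zero_smul, Finset.sum_const_zero, ite_smul,
          one_smul]
        rw [Finset.sum_ite_eq' Finset.univ l u', Finset.sum_ite_eq' Finset.univ l v']
        simp only [Finset.mem_univ, if_true]
        rw [← hsl, ← huv' l]
        abel
      · have hiT : i ∈ T := by
          rw [hTdef, Finset.mem_filter]
          refine ⟨hi', ?_⟩
          intro hc
          exact hiS (by rw [hSdef, Finset.mem_filter]; exact ⟨hi', hc⟩)
        apply inConeSpan_image G hGinj
          (Sum.elim (fun i' => if i' = ⟨i, hiT⟩ then (1:ℚ) else 0)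
            (Sum.elim (fun _ => 0) (fun _ => 0)))
          (by rintro (i' | l | l) <;> simp <;> split <;> simp)
        rw [Fintype.sum_sum_type, Fintype.sum_sum_type]
        simp only [hGdef, Sum.elim_inl, Sum.elim_inr, zero_smul, Finset.sum_const_zero, ite_smul,
          one_smul]
        rw [Finset.sum_ite_eq' Finset.univ (⟨i, hiT⟩ : {x // x ∈ T}) (fun i' => β ↑i')]
        simp only [Finset.mem_univ, if_true]
        abel
end

section
/- Fix an infinite subset I ⊆ ℕ. Let β₁,…,β_n be I-supported elements of ∏_{i∈ℕ} ℚ≥0 that are linearly independent over ℚ, and let α ∈ ∏_{i∈ℕ} ℚ≥0 be any I-supported element. Then there exists a finite set Γ ⊆ ∏_{i∈ℕ} ℚ≥0 of I-supported elements that is linearly independent over ℚ and satisfies {α, β₁,…,β_n} ⊆ Σ_{γ∈Γ} ℚ≥0·γ. -/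
open Finset

-- Packing an independent family into a Finset with cone representations.
lemma pack {κ : Type} [Fintype κ] (g : κ → (ℕ → ℚ)) (hg : LinearIndependent ℚ g) :
    ∃ Γ : Finset (ℕ → ℚ), (Γ : Set (ℕ → ℚ)) = Set.range g ∧ FinsetLinIndep Γ ∧
      ∀ coef : κ → ℚ, (∀ k, 0 ≤ coef k) → InConeSpan Γ (∑ k, coef k • g k) := by
  classical
  have hcoe : ((Finset.univ.image g : Finset (ℕ → ℚ)) : Set (ℕ → ℚ)) = Set.range g := by
    simp
  refine ⟨Finset.univ.image g, hcoe, ?_, ?_⟩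
  · unfold FinsetLinIndep
    rw [hcoe]
    exact hg.linearIndepOn_id
  · intro coef hcoef
    refine ⟨fun γ => ∑ k, if g k = γ then coef k else 0,
      fun γ => Finset.sum_nonneg fun k _ => ?_, ?_⟩
    · split
      · exact hcoef k
      · exact le_refl 0
    · rw [Finset.sum_image (fun a _ b _ h => hg.injective h)]
      refine Finset.sum_congr rfl fun k _ => ?_
      congr 1
      have hiff : ∀ k' : κ, (g k' = g k) ↔ (k' = k) :=
        fun k' => ⟨fun h => hg.injective h, fun h => by rw [h]⟩
      have : (∑ k', if g k' = g k then coef k' else 0) = coef k := by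
        have h1 : (∑ k', if g k' = g k then coef k' else 0)
            = ∑ k', if k' = k then coef k' else 0 := by
          refine Finset.sum_congr rfl fun k' _ => ?_
          simp only [hiff k']
        rw [h1]
        simp
      exact this.symm

-- Partition a sum over Fin m according to the sign of μ.
lemma sum_sign_partition {M : Type*} [AddCommMonoid M] {m : ℕ} (μ : Fin m → ℚ) (f : Fin m → M) :
    ∑ a, f a = (∑ j : {a : Fin m // 0 < μ a}, f j.val)
      + ((∑ i : {a : Fin m // μ a < 0}, f i.val)
      + (∑ c : {a : Fin m // μ a = 0}, f c.val)) := by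
  classical
  have h1 := Finset.sum_filter_add_sum_filter_not Finset.univ (fun a => 0 < μ a) f
  have h2 := Finset.sum_filter_add_sum_filter_not (Finset.univ.filter (fun a => ¬ 0 < μ a))
      (fun a => μ a < 0) f
  have e1 : (Finset.univ.filter (fun a => ¬ 0 < μ a)).filter (fun a => μ a < 0)
      = Finset.univ.filter (fun a => μ a < 0) := by
    rw [Finset.filter_filter]
    refine Finset.filter_congr fun a _ => ?_
    constructor
    · exact fun h => h.2
    · exact fun h => ⟨not_lt.mpr h.le, h⟩
  have e2 : (Finset.univ.filter (fun a => ¬ 0 < μ a)).filter (fun a => ¬ μ a < 0)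
      = Finset.univ.filter (fun a => μ a = 0) := by
    rw [Finset.filter_filter]
    refine Finset.filter_congr fun a _ => ?_
    constructor
    · exact fun h => le_antisymm (not_lt.mp h.1) (not_lt.mp h.2)
    · exact fun h => ⟨by rw [h]; exact lt_irrefl 0, by rw [h]; exact lt_irrefl 0⟩
  have sp : ∑ a ∈ Finset.univ.filter (fun a => 0 < μ a), f a
      = ∑ j : {a : Fin m // 0 < μ a}, f j.val :=
    Finset.sum_subtype _ (by intro a; simp) f
  have sn : ∑ a ∈ Finset.univ.filter (fun a => μ a < 0), f a
      = ∑ i : {a : Fin m // μ a < 0}, f i.val :=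
    Finset.sum_subtype _ (by intro a; simp) f
  have sz : ∑ a ∈ Finset.univ.filter (fun a => μ a = 0), f a
      = ∑ c : {a : Fin m // μ a = 0}, f c.val :=
    Finset.sum_subtype _ (by intro a; simp) f
  rw [← h1, ← h2, e1, e2, sp, sn, sz]

-- every finitely supported element of a f.d. subspace has support inside a fixed finite set
lemma support_bound (W : Submodule ℚ (ℕ → ℚ)) [FiniteDimensional ℚ W] :
    ∃ U : Set ℕ, U.Finite ∧
      ∀ h ∈ W, (Function.support h).Finite → ∀ t ∉ U, h t = 0 := by
  classical
  let F : Submodule ℚ (ℕ → ℚ) :=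
    { carrier := {h | h ∈ W ∧ (Function.support h).Finite}
      add_mem' := fun ha hb => ⟨W.add_mem ha.1 hb.1,
        ((ha.2.union hb.2).subset (Function.support_add _ _))⟩
      zero_mem' := ⟨W.zero_mem, by simp⟩
      smul_mem' := fun c h hh => ⟨W.smul_mem c hh.1,
        hh.2.subset (Function.support_const_smul_subset c h)⟩ }
  have hFW : F ≤ W := fun h hh => hh.1
  have : FiniteDimensional ℚ F := Submodule.finiteDimensional_of_le hFW
  obtain ⟨d, s, hs⟩ := Module.Finite.exists_fin (R := ℚ) (M := F)
  refine ⟨⋃ i, Function.support ((s i : ℕ → ℚ)),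
    Set.finite_iUnion (fun i => (s i).2.2), ?_⟩
  intro h hW hfin t ht
  have hmem : (⟨h, hW, hfin⟩ : F) ∈ Submodule.span ℚ (Set.range s) := by
    rw [hs]; exact Submodule.mem_top
  obtain ⟨c, hc⟩ := (Submodule.mem_span_range_iff_exists_fun ℚ).mp hmem
  have hcoe : h = ∑ i, c i • ((s i : ℕ → ℚ)) := by
    have h2 := congrArg (Subtype.val) hc
    rw [show ((⟨h, hW, hfin⟩ : F) : ℕ → ℚ) = h from rfl] at h2
    rw [← h2]
    push_cast
    rfl
  have hzero : ∀ i, (s i : ℕ → ℚ) t = 0 := by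
    intro i
    by_contra hne
    exact ht (Set.mem_iUnion.mpr ⟨i, hne⟩)
  rw [hcoe, Finset.sum_apply]
  refine Finset.sum_eq_zero fun i _ => ?_
  rw [Pi.smul_apply, hzero i, smul_zero]

lemma collapse_sum {κ : Type*} [Fintype κ] [DecidableEq κ] (f : κ → ℚ) (a b : κ) :
    ∑ k, f k * ((if k = a then (1:ℚ) else 0) - (if k = b then 1 else 0)) = f a - f b := by
  have h : ∀ k, f k * ((if k = a then (1:ℚ) else 0) - (if k = b then 1 else 0))
      = (if k = a then f k else 0) - (if k = b then f k else 0) := by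
    intro k
    split_ifs <;> ring
  rw [Finset.sum_congr rfl fun k _ => h k, Finset.sum_sub_distrib,
    Finset.sum_ite_eq' Finset.univ a f, Finset.sum_ite_eq' Finset.univ b f]
  simp

set_option maxHeartbeats 2000000 in
lemma main_lemma (I : Set ℕ) (hI : I.Infinite) (m : ℕ) (v : Fin (m+1) → (ℕ → ℚ))
    (hv : ∀ a, NonnegSeq (v a) ∧ ISupported I (v a))
    (hβi : LinearIndependent ℚ (fun k : Fin m => v k.succ)) :
    ∃ Γ : Finset (ℕ → ℚ), (∀ γ ∈ Γ, NonnegSeq γ ∧ ISupported I γ) ∧ FinsetLinIndep Γ ∧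
      ∀ a, InConeSpan Γ (v a) := by
  classical
  -- positivity of each v a on I
  have hvpos : ∀ a, ∀ t ∈ I, 0 < v a t :=
    fun a t ht => lt_of_le_of_ne ((hv a).1 t) (Ne.symm ((hv a).2 t ht))
  by_cases hvi : LinearIndependent ℚ v
  · obtain ⟨Γ, hcoe, hind, hcone⟩ := pack v hvi
    refine ⟨Γ, ?_, hind, ?_⟩
    · intro γ hγ
      have : γ ∈ Set.range v := by rw [← hcoe]; exact_mod_cast hγ
      obtain ⟨a, rfl⟩ := this
      exact hv a
    · intro a
      have hrep : v a = ∑ k, (if k = a then (1:ℚ) else 0) • v k := by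
        simp [ite_smul]
      rw [hrep]
      exact hcone _ (fun k => by split <;> norm_num)
  · obtain ⟨μ, hμrel, hμne⟩ := Fintype.not_linearIndependent_iff.mp hvi
    have hμ0 : μ 0 ≠ 0 := by
      intro h0
      have hsucc : ∑ k : Fin m, μ k.succ • v k.succ = 0 := by
        have := Fin.sum_univ_succ (fun a => μ a • v a)
        rw [hμrel, h0] at this
        simpa using this.symm
      have hz := Fintype.linearIndependent_iff.mp hβi _ hsucc
      obtain ⟨a, ha⟩ := hμne
      refine ha ?_
      rcases Fin.eq_zero_or_eq_succ a with h | ⟨k, rfl⟩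
      · rw [h]; exact h0
      · exact hz k
    have huniq : ∀ c : Fin (m+1) → ℚ, ∑ a, c a • v a = 0 → c = (c 0 / μ 0) • μ := by
      intro c hc
      set d : Fin (m+1) → ℚ := c - (c 0 / μ 0) • μ with hd
      have hd0 : d 0 = 0 := by
        simp only [hd, Pi.sub_apply, Pi.smul_apply, smul_eq_mul]
        field_simp
        ring
      have hdrel : ∑ a, d a • v a = 0 := by
        have : ∑ a, d a • v a
            = ∑ a, c a • v a - (c 0 / μ 0) • ∑ a, μ a • v a := by
          rw [Finset.smul_sum, ← Finset.sum_sub_distrib]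
          refine Finset.sum_congr rfl fun a _ => ?_
          simp only [hd, Pi.sub_apply, Pi.smul_apply, smul_eq_mul, sub_smul, mul_smul]
        rw [this, hc, hμrel, smul_zero, sub_zero]
      have hdsucc : ∑ k : Fin m, d k.succ • v k.succ = 0 := by
        have := Fin.sum_univ_succ (fun a => d a • v a)
        rw [hdrel, hd0] at this
        simpa using this.symm
      have hz := Fintype.linearIndependent_iff.mp hβi _ hdsucc
      have hdz : d = 0 := by
        funext a
        rcases Fin.eq_zero_or_eq_succ a with h | ⟨k, rfl⟩
        · rw [h]; exact hd0
        · exact hz k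
      exact sub_eq_zero.mp (by rw [← hd]; exact hdz)
    -- sign classes
    set P := {a : Fin (m+1) // 0 < μ a} with hPdef
    set N := {a : Fin (m+1) // μ a < 0} with hNdef
    set Z := {a : Fin (m+1) // μ a = 0} with hZdef
    set x : P → (ℕ → ℚ) := fun j => μ j.val • v j.val with hxdef
    set y : N → (ℕ → ℚ) := fun i => (-(μ i.val)) • v i.val with hydef
    set u : ℕ → ℚ := ∑ j : P, x j with hudef
    have hxnn : ∀ (j : P) t, 0 ≤ x j t := fun j t =>
      mul_nonneg (le_of_lt j.2) ((hv j.val).1 t)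
    have hynn : ∀ (i : N) t, 0 ≤ y i t := fun i t =>
      mul_nonneg (by linarith [i.2]) ((hv i.val).1 t)
    have hxpos : ∀ (j : P), ∀ t ∈ I, 0 < x j t := fun j t ht =>
      mul_pos j.2 (hvpos j.val t ht)
    have hypos : ∀ (i : N), ∀ t ∈ I, 0 < y i t := fun i t ht =>
      mul_pos (by linarith [i.2]) (hvpos i.val t ht)
    have hu_eq : u = ∑ i : N, y i := by
      have hpart := sum_sign_partition μ (fun a => μ a • v a)
      rw [hμrel] at hpart
      have hzz : (∑ c : Z, μ c.val • v c.val) = 0 :=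
        Finset.sum_eq_zero fun c _ => by rw [c.2, zero_smul]
      rw [hzz, add_zero] at hpart
      have h3 : ∑ i : N, y i = - ∑ i : N, μ i.val • v i.val := by
        rw [← Finset.sum_neg_distrib]
        exact Finset.sum_congr rfl fun i _ => by simp [hydef, neg_smul]
      rw [hudef, h3]
      have h4 : (∑ j : P, μ j.val • v j.val) + ∑ i : N, μ i.val • v i.val = 0 := hpart.symm
      have h5 := eq_neg_of_add_eq_zero_left h4
      exact h5
    obtain ⟨t₀, ht₀⟩ := hI.nonempty
    -- u pointwise
    have huapply : ∀ t, u t = ∑ j : P, x j t := fun t => by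
      rw [hudef]; exact Finset.sum_apply t Finset.univ x
    have huapplyN : ∀ t, u t = ∑ i : N, y i t := fun t => by
      rw [hu_eq]; exact Finset.sum_apply t Finset.univ y
    have hunn : ∀ t, 0 ≤ u t := fun t => by
      rw [huapply t]; exact Finset.sum_nonneg fun j _ => hxnn j t
    -- nonemptiness
    have hPN : Nonempty P ∧ Nonempty N := by
      obtain ⟨a, ha⟩ := hμne
      rcases lt_or_gt_of_ne ha with hlt | hgt
      · have hN : Nonempty N := ⟨⟨a, hlt⟩⟩
        refine ⟨?_, hN⟩
        by_contra hP
        haveI := not_nonempty_iff.mp hP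
        have hzero : u t₀ = 0 := by
          rw [huapply t₀]
          rw [Finset.univ_eq_empty, Finset.sum_empty]
        have hpos : 0 < u t₀ := by
          rw [huapplyN t₀]
          exact Finset.sum_pos (fun i (_ : i ∈ Finset.univ) => hypos i t₀ ht₀)
            (@Finset.univ_nonempty _ _ hN)
        rw [hzero] at hpos
        exact lt_irrefl 0 hpos
      · have hP : Nonempty P := ⟨⟨a, hgt⟩⟩
        refine ⟨hP, ?_⟩
        by_contra hN
        haveI := not_nonempty_iff.mp hN
        have hzero : u t₀ = 0 := by
          rw [huapplyN t₀]
          rw [Finset.univ_eq_empty, Finset.sum_empty]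
        have hpos : 0 < u t₀ := by
          rw [huapply t₀]
          exact Finset.sum_pos (fun j (_ : j ∈ Finset.univ) => hxpos j t₀ ht₀)
            (@Finset.univ_nonempty _ _ hP)
        rw [hzero] at hpos
        exact lt_irrefl 0 hpos
    have hPne : Nonempty P := hPN.1
    have hNne : Nonempty N := hPN.2
    have hupos : ∀ t ∈ I, 0 < u t := fun t ht => by
      rw [huapply t]
      exact Finset.sum_pos (fun j _ => hxpos j t ht) (@Finset.univ_nonempty _ _ hPne)
    have hu0x : ∀ t, u t = 0 → ∀ j : P, x j t = 0 := by
      intro t ht j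
      have := (Finset.sum_eq_zero_iff_of_nonneg (fun j (_ : j ∈ Finset.univ) => hxnn j t)).mp
        ((huapply t).symm.trans ht)
      exact this j (Finset.mem_univ j)
    have hu0y : ∀ t, u t = 0 → ∀ i : N, y i t = 0 := by
      intro t ht i
      have := (Finset.sum_eq_zero_iff_of_nonneg (fun i (_ : i ∈ Finset.univ) => hynn i t)).mp
        ((huapplyN t).symm.trans ht)
      exact this i (Finset.mem_univ i)
    -- Riesz pieces
    set w : P × N → (ℕ → ℚ) := fun k t => x k.1 t * y k.2 t / u t with hwdef
    have hwnn : ∀ k t, 0 ≤ w k t := fun k t =>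
      div_nonneg (mul_nonneg (hxnn k.1 t) (hynn k.2 t)) (hunn t)
    have hwpos : ∀ k, ∀ t ∈ I, 0 < w k t := fun k t ht =>
      div_pos (mul_pos (hxpos k.1 t ht) (hypos k.2 t ht)) (hupos t ht)
    have hrow : ∀ (j : P) (t : ℕ), ∑ i : N, w (j, i) t = x j t := by
      intro j t
      by_cases hu : u t = 0
      · have : ∀ i : N, w (j, i) t = 0 := fun i => by
          simp [hwdef, hu]
        rw [Finset.sum_congr rfl (fun i _ => this i), Finset.sum_const, smul_zero]
        exact (hu0x t hu j).symm
      · have : ∑ i : N, w (j, i) t = (∑ i : N, x j t * y i t) / u t := by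
          rw [← Finset.sum_div]
        rw [this, ← Finset.mul_sum, ← huapplyN t, mul_div_assoc, div_self hu, mul_one]
    have hcol : ∀ (i : N) (t : ℕ), ∑ j : P, w (j, i) t = y i t := by
      intro i t
      by_cases hu : u t = 0
      · have : ∀ j : P, w (j, i) t = 0 := fun j => by
          simp [hwdef, hu]
        rw [Finset.sum_congr rfl (fun j _ => this j), Finset.sum_const, smul_zero]
        exact (hu0y t hu i).symm
      · have h1 : ∑ j : P, w (j, i) t = (∑ j : P, x j t * y i t) / u t := by
          rw [← Finset.sum_div]
        have h2 : ∑ j : P, x j t * y i t = u t * y i t := by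
          rw [← Finset.sum_mul, ← huapply t]
        rw [h1, h2, mul_comm, mul_div_assoc, div_self hu, mul_one]
    -- the finite-dimensional ambient span
    set bigfam : ((P × N) ⊕ Fin (m+1)) → (ℕ → ℚ) := Sum.elim w v with hbigdef
    set W : Submodule ℚ (ℕ → ℚ) := Submodule.span ℚ (Set.range bigfam) with hWdef
    haveI : FiniteDimensional ℚ W := FiniteDimensional.span_of_finite ℚ (Set.finite_range bigfam)
    obtain ⟨U, hUfin, hU⟩ := support_bound W
    -- fresh coordinates
    have hdiff : (I \ U).Infinite := hI.diff hUfin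
    set e : ℕ ↪ ↑(I \ U) := hdiff.natEmbedding with hedef
    set ι : P × N → ℕ := fun q => (e ((Fintype.equivFin (P × N)) q)).val with hιdef
    have hιinj : Function.Injective ι := by
      intro q q' h
      have h2 : e ((Fintype.equivFin (P × N)) q) = e ((Fintype.equivFin (P × N)) q') :=
        Subtype.ext h
      have h3 := e.injective h2
      have h4 := Fin.val_injective h3
      exact (Fintype.equivFin (P × N)).injective h4
    have hιI : ∀ q, ι q ∈ I := fun q => ((e _).2).1
    have hιU : ∀ q, ι q ∉ U := fun q => ((e _).2).2
    obtain ⟨j₀⟩ := hPne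
    obtain ⟨i₀⟩ := hNne
    -- perturbation matrix entries
    set A : P → P → ℚ := fun j j' => (if j = j' then 1 else 0) - (if j = j₀ then 1 else 0)
      with hAdef
    set B : N → N → ℚ := fun i i' => (if i = i' then 1 else 0) - (if i = i₀ then 1 else 0)
      with hBdef
    set Ecoef : (P × N) → (P × N) → ℚ := fun k q => A k.1 q.1 * B k.2 q.2 with hEdef
    have habs01 : ∀ (c d : Prop) (_ : Decidable c) (_ : Decidable d),
        |((if c then (1:ℚ) else 0) - (if d then 1 else 0))| ≤ 1 := by
      intros c d hc hd
      rcases hc with h | h <;> rcases hd with h' | h' <;> simp [h, h'] <;> norm_num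
    have hEabs : ∀ k q, |Ecoef k q| ≤ 1 := by
      intro k q
      rw [hEdef]
      dsimp only
      rw [abs_mul]
      have h1 := habs01 (k.1 = q.1) (k.1 = j₀) inferInstance inferInstance
      have h2 := habs01 (k.2 = q.2) (k.2 = i₀) inferInstance inferInstance
      calc |A k.1 q.1| * |B k.2 q.2| ≤ 1 * 1 :=
            mul_le_mul h1 h2 (abs_nonneg _) (by norm_num)
        _ = 1 := by norm_num
    have hAsum : ∀ j' : P, ∑ j : P, A j j' = 0 := by
      intro j'
      rw [hAdef]
      dsimp only
      rw [Finset.sum_sub_distrib]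
      rw [Finset.sum_ite_eq' Finset.univ j' (fun _ => (1:ℚ)),
        Finset.sum_ite_eq' Finset.univ j₀ (fun _ => (1:ℚ))]
      simp
    have hBsum : ∀ i' : N, ∑ i : N, B i i' = 0 := by
      intro i'
      rw [hBdef]
      dsimp only
      rw [Finset.sum_sub_distrib]
      rw [Finset.sum_ite_eq' Finset.univ i' (fun _ => (1:ℚ)),
        Finset.sum_ite_eq' Finset.univ i₀ (fun _ => (1:ℚ))]
      simp
    -- perturbation size
    haveI hPNne : Nonempty (P × N) := ⟨(j₀, i₀)⟩
    set ε : P × N → ℚ := fun q =>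
      (Finset.univ.inf' (@Finset.univ_nonempty _ _ hPNne) (fun k => w k (ι q))) / 2 with hεdef
    have hεpos : ∀ q, 0 < ε q := by
      intro q
      rw [hεdef]
      dsimp only
      apply div_pos _ (by norm_num)
      rw [Finset.lt_inf'_iff]
      exact fun k _ => hwpos k (ι q) (hιI q)
    have hεle : ∀ k q, 2 * ε q ≤ w k (ι q) := by
      intro k q
      rw [hεdef]
      dsimp only
      rw [mul_div_cancel₀ _ (by norm_num : (2:ℚ) ≠ 0)]
      exact Finset.inf'_le _ (Finset.mem_univ k)
    set pert : P × N → ℕ → ℚ :=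
      fun k t => ∑ q, if t = ι q then ε q * Ecoef k q else 0 with hpertdef
    have hpert_eval : ∀ k q, pert k (ι q) = ε q * Ecoef k q := by
      intro k q
      rw [hpertdef]
      dsimp only
      have hiff : ∀ q' : P × N, (ι q = ι q') ↔ (q' = q) :=
        fun q' => ⟨fun h => (hιinj h).symm, fun h => by rw [h]⟩
      have h1 : (∑ q', if ι q = ι q' then ε q' * Ecoef k q' else 0)
          = ∑ q', if q' = q then ε q' * Ecoef k q' else 0 :=
        Finset.sum_congr rfl fun q' _ => by simp only [hiff q']
      rw [h1, Finset.sum_ite_eq' Finset.univ q (fun q' => ε q' * Ecoef k q')]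
      simp
    have hpert_off : ∀ k t, (∀ q : P × N, t ≠ ι q) → pert k t = 0 := by
      intro k t ht
      rw [hpertdef]
      exact Finset.sum_eq_zero fun q _ => if_neg (ht q)
    have hpert_abs : ∀ k q, |pert k (ι q)| ≤ ε q := by
      intro k q
      rw [hpert_eval k q, abs_mul, abs_of_pos (hεpos q)]
      calc ε q * |Ecoef k q| ≤ ε q * 1 :=
            mul_le_mul_of_nonneg_left (hEabs k q) (le_of_lt (hεpos q))
        _ = ε q := by norm_num
    -- the perturbed generators
    set γt : P × N → ℕ → ℚ := fun k => w k + pert k with hγdef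
    have hγfacts : ∀ k t, 0 ≤ γt k t ∧ (t ∈ I → 0 < γt k t) := by
      intro k t
      by_cases hex : ∃ q : P × N, t = ι q
      · obtain ⟨q, rfl⟩ := hex
        have h1 : w k (ι q) + pert k (ι q) ≥ 2 * ε q - ε q := by
          have := neg_abs_le (pert k (ι q))
          have h2 := hpert_abs k q
          have h3 := hεle k q
          have : -(ε q) ≤ pert k (ι q) := by
            calc -(ε q) ≤ -|pert k (ι q)| := neg_le_neg h2
              _ ≤ pert k (ι q) := neg_abs_le _
          linarith
        have h4 : (0:ℚ) < 2 * ε q - ε q := by have := hεpos q; linarith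
        have h5 : 0 < γt k (ι q) := by
          rw [hγdef]
          dsimp only
          rw [Pi.add_apply]
          linarith
        exact ⟨le_of_lt h5, fun _ => h5⟩
      · push_neg at hex
        have h0 : pert k t = 0 := hpert_off k t hex
        have : γt k t = w k t := by
          rw [hγdef]; dsimp only; rw [Pi.add_apply, h0, add_zero]
        rw [this]
        exact ⟨hwnn k t, fun ht => hwpos k t ht⟩
    -- margins of the perturbed generators
    have hpertrow : ∀ (j : P) (t : ℕ), ∑ i : N, pert (j, i) t = 0 := by
      intro j t
      rw [hpertdef]
      dsimp only
      rw [Finset.sum_comm]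
      refine Finset.sum_eq_zero fun q _ => ?_
      by_cases h : t = ι q
      · have h1 : (∑ i : N, if t = ι q then ε q * Ecoef (j, i) q else 0)
            = ∑ i : N, ε q * Ecoef (j, i) q :=
          Finset.sum_congr rfl fun i _ => if_pos h
        rw [h1, ← Finset.mul_sum]
        have h2 : ∑ i : N, Ecoef (j, i) q = 0 := by
          have h3 : ∀ i : N, Ecoef (j, i) q = A j q.1 * B i q.2 := fun i => rfl
          rw [Finset.sum_congr rfl fun i _ => h3 i, ← Finset.mul_sum, hBsum q.2, mul_zero]
        rw [h2, mul_zero]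
      · exact Finset.sum_eq_zero fun i _ => if_neg h
    have hpertcol : ∀ (i : N) (t : ℕ), ∑ j : P, pert (j, i) t = 0 := by
      intro i t
      rw [hpertdef]
      dsimp only
      rw [Finset.sum_comm]
      refine Finset.sum_eq_zero fun q _ => ?_
      by_cases h : t = ι q
      · have h1 : (∑ j : P, if t = ι q then ε q * Ecoef (j, i) q else 0)
            = ∑ j : P, ε q * Ecoef (j, i) q :=
          Finset.sum_congr rfl fun j _ => if_pos h
        rw [h1, ← Finset.mul_sum]
        have h2 : ∑ j : P, Ecoef (j, i) q = 0 := by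
          have h3 : ∀ j : P, Ecoef (j, i) q = A j q.1 * B i q.2 := fun j => rfl
          rw [Finset.sum_congr rfl fun j _ => h3 j, ← Finset.sum_mul, hAsum q.1, zero_mul]
        rw [h2, mul_zero]
      · exact Finset.sum_eq_zero fun j _ => if_neg h
    have hγrow : ∀ j : P, ∑ i : N, γt (j, i) = x j := by
      intro j
      funext t
      rw [Finset.sum_apply]
      have : ∀ i : N, γt (j, i) t = w (j, i) t + pert (j, i) t := fun i => rfl
      rw [Finset.sum_congr rfl fun i _ => this i, Finset.sum_add_distrib, hrow j t,
        hpertrow j t, add_zero]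
    have hγcol : ∀ i : N, ∑ j : P, γt (j, i) = y i := by
      intro i
      funext t
      rw [Finset.sum_apply]
      have : ∀ j : P, γt (j, i) t = w (j, i) t + pert (j, i) t := fun j => rfl
      rw [Finset.sum_congr rfl fun j _ => this j, Finset.sum_add_distrib, hcol i t,
        hpertcol i t, add_zero]
    -- the full generating family
    set G : (P × N) ⊕ Z → (ℕ → ℚ) := Sum.elim γt (fun c => v c.val) with hGdef
    have hGind : LinearIndependent ℚ G := by
      rw [Fintype.linearIndependent_iff]
      intro g hg
      set lam : P × N → ℚ := fun k => g (Sum.inl k) with hlamdef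
      set b : Z → ℚ := fun c => g (Sum.inr c) with hbdef
      set hfun : ℕ → ℚ := (∑ k : P × N, lam k • w k) + ∑ c : Z, b c • v c.val with hfdef
      have hfunW : hfun ∈ W := by
        rw [hfdef]
        refine W.add_mem (Submodule.sum_mem W fun k _ => W.smul_mem _ ?_)
          (Submodule.sum_mem W fun c _ => W.smul_mem _ ?_)
        · exact Submodule.subset_span ⟨Sum.inl k, rfl⟩
        · exact Submodule.subset_span ⟨Sum.inr c.val, rfl⟩
      have hg' : (∑ k : P × N, lam k • γt k) + ∑ c : Z, b c • v c.val = 0 := by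
        rw [Fintype.sum_sum_type] at hg
        exact hg
      have hkey : ∀ t, hfun t + (∑ k : P × N, lam k * pert k t) = 0 := by
        intro t
        have h1 := congrFun hg' t
        rw [Pi.add_apply, Pi.zero_apply, Finset.sum_apply, Finset.sum_apply] at h1
        have h2 : ∀ k : P × N, (lam k • γt k) t = lam k * w k t + lam k * pert k t := by
          intro k
          have : γt k t = w k t + pert k t := rfl
          rw [Pi.smul_apply, this, smul_eq_mul, mul_add]
        rw [Finset.sum_congr rfl fun k _ => h2 k, Finset.sum_add_distrib] at h1
        rw [hfdef]
        rw [Pi.add_apply, Finset.sum_apply, Finset.sum_apply]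
        have h3 : ∀ k : P × N, (lam k • w k) t = lam k * w k t := fun k => rfl
        have h4 : ∀ c : Z, (b c • v c.val) t = b c * v c.val t := fun c => rfl
        rw [Finset.sum_congr rfl fun k _ => h3 k, Finset.sum_congr rfl fun c _ => h4 c]
        have h5 : ∀ c : Z, (b c • v c.val) t = b c * v c.val t := fun c => rfl
        rw [Finset.sum_congr rfl fun c _ => h5 c] at h1
        linarith
      have hsupp : Function.support hfun ⊆ Set.range ι := by
        intro t ht
        by_contra hnot
        have hall : ∀ q : P × N, t ≠ ι q := by
          intro q hq
          exact hnot ⟨q, hq.symm⟩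
        have : hfun t = 0 := by
          have h1 := hkey t
          have h2 : (∑ k : P × N, lam k * pert k t) = 0 :=
            Finset.sum_eq_zero fun k _ => by rw [hpert_off k t hall, mul_zero]
          linarith
        exact ht this
      have hfin : (Function.support hfun).Finite :=
        Set.Finite.subset (Set.finite_range ι) hsupp
      have hfun0 : ∀ t, hfun t = 0 := by
        intro t
        by_cases hex : ∃ q : P × N, t = ι q
        · obtain ⟨q, rfl⟩ := hex
          exact hU hfun hfunW hfin _ (hιU q)
        · push_neg at hex
          have h2 : (∑ k : P × N, lam k * pert k t) = 0 :=
            Finset.sum_eq_zero fun k _ => by rw [hpert_off k t hex, mul_zero]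
          have h1 := hkey t
          linarith
      -- extract the structure of lam
      have hquad : ∀ q : P × N, ∑ k : P × N, lam k * Ecoef k q = 0 := by
        intro q
        have h1 := hkey (ι q)
        rw [hfun0 (ι q)] at h1
        have h2 : (∑ k : P × N, lam k * pert k (ι q))
            = ε q * ∑ k : P × N, lam k * Ecoef k q := by
          rw [Finset.mul_sum]
          refine Finset.sum_congr rfl fun k _ => ?_
          rw [hpert_eval k q]
          ring
        rw [h2] at h1
        have h3 : ε q * ∑ k : P × N, lam k * Ecoef k q = 0 := by linarith
        exact (mul_eq_zero.mp h3).resolve_left (ne_of_gt (hεpos q))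
      have hquad' : ∀ (j' : P) (i' : N),
          (lam (j', i') - lam (j', i₀)) - (lam (j₀, i') - lam (j₀, i₀)) = 0 := by
        intro j' i'
        have h1 := hquad (j', i')
        rw [Fintype.sum_prod_type] at h1
        have h2 : ∀ j : P, (∑ i : N, lam (j, i) * Ecoef (j, i) (j', i'))
            = A j j' * (lam (j, i') - lam (j, i₀)) := by
          intro j
          have h3 : ∀ i : N, lam (j, i) * Ecoef (j, i) (j', i')
              = A j j' * (lam (j, i) * B i i') := by
            intro i
            have : Ecoef (j, i) (j', i') = A j j' * B i i' := rfl
            rw [this]; ring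
          rw [Finset.sum_congr rfl fun i _ => h3 i, ← Finset.mul_sum]
          congr 1
          exact collapse_sum (fun i => lam (j, i)) i' i₀
        rw [Finset.sum_congr rfl fun j _ => h2 j] at h1
        have h4 : ∀ j : P, A j j' * (lam (j, i') - lam (j, i₀))
            = (lam (j, i') - lam (j, i₀)) * ((if j = j' then (1:ℚ) else 0) - (if j = j₀ then 1 else 0)) := by
          intro j
          have : A j j' = (if j = j' then (1:ℚ) else 0) - (if j = j₀ then 1 else 0) := rfl
          rw [this]; ring
        rw [Finset.sum_congr rfl fun j _ => h4 j,
          collapse_sum (fun j => lam (j, i') - lam (j, i₀)) j' j₀] at h1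
        linarith
      set μ' : P → ℚ := fun j => lam (j, i₀) - lam (j₀, i₀) with hμ'def
      set ν' : N → ℚ := fun i => lam (j₀, i) with hν'def
      have hlamstruct : ∀ k : P × N, lam k = μ' k.1 + ν' k.2 := by
        intro ⟨j, i⟩
        have := hquad' j i
        rw [hμ'def, hν'def]
        dsimp only
        linarith
      -- rewrite hfun and use uniqueness of the relation
      have hwsum : (∑ k : P × N, lam k • w k)
          = (∑ j : P, μ' j • x j) + ∑ i : N, ν' i • y i := by
        funext t
        rw [Pi.add_apply, Finset.sum_apply, Finset.sum_apply, Finset.sum_apply]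
        have h1 : ∀ k : P × N, (lam k • w k) t = μ' k.1 * w k t + ν' k.2 * w k t := by
          intro k
          rw [Pi.smul_apply, smul_eq_mul, hlamstruct k]
          ring
        rw [Finset.sum_congr rfl fun k _ => h1 k, Finset.sum_add_distrib]
        congr 1
        · rw [Fintype.sum_prod_type]
          have h2 : ∀ j : P, (∑ i : N, μ' j * w (j, i) t) = μ' j * x j t := by
            intro j
            rw [← Finset.mul_sum, hrow j t]
          rw [Finset.sum_congr rfl fun j _ => h2 j]
          exact Finset.sum_congr rfl fun j _ => rfl
        · rw [Fintype.sum_prod_type, Finset.sum_comm]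
          have h2 : ∀ i : N, (∑ j : P, ν' i * w (j, i) t) = ν' i * y i t := by
            intro i
            rw [← Finset.mul_sum, hcol i t]
          rw [Finset.sum_congr rfl fun i _ => h2 i]
          exact Finset.sum_congr rfl fun i _ => rfl
      set c' : Fin (m+1) → ℚ := fun a =>
        if h : 0 < μ a then μ' ⟨a, h⟩ * μ a
        else if h' : μ a < 0 then ν' ⟨a, h'⟩ * (-(μ a))
        else b ⟨a, le_antisymm (not_lt.mp h) (not_lt.mp h')⟩ with hc'def
      have hc'P : ∀ j : P, c' j.val • v j.val = μ' j • x j := by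
        intro j
        have h1 : c' j.val = μ' j * μ j.val := by
          rw [hc'def]
          dsimp only
          rw [dif_pos j.2]
        rw [h1, mul_smul]
      have hc'N : ∀ i : N, c' i.val • v i.val = ν' i • y i := by
        intro i
        have h1 : c' i.val = ν' i * (-(μ i.val)) := by
          rw [hc'def]
          dsimp only
          rw [dif_neg (not_lt.mpr (le_of_lt i.2)), dif_pos i.2]
        rw [h1, mul_smul]
      have hc'Z : ∀ c : Z, c' c.val • v c.val = b c • v c.val := by
        intro c
        have h1 : c' c.val = b c := by
          rw [hc'def]
          dsimp only
          rw [dif_neg (by rw [c.2]; exact lt_irrefl 0), dif_neg (by rw [c.2]; exact lt_irrefl 0)]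
        rw [h1]
      have hc'rel : ∑ a, c' a • v a = 0 := by
        rw [sum_sign_partition μ (fun a => c' a • v a)]
        rw [Finset.sum_congr rfl fun j _ => hc'P j, Finset.sum_congr rfl fun i _ => hc'N i,
          Finset.sum_congr rfl fun c _ => hc'Z c]
        have hfz : hfun = 0 := funext hfun0
        rw [hfdef, hwsum] at hfz
        calc (∑ j : P, μ' j • x j) + ((∑ i : N, ν' i • y i) + ∑ c : Z, b c • v c.val)
            = ((∑ j : P, μ' j • x j) + ∑ i : N, ν' i • y i) + ∑ c : Z, b c • v c.val := by
              rw [add_assoc]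
          _ = 0 := hfz
      have hc'eq := huniq c' hc'rel
      set T := c' 0 / μ 0 with hTdef
      have hbz : ∀ c : Z, b c = 0 := by
        intro c
        have h1 := congrFun hc'eq c.val
        rw [Pi.smul_apply, smul_eq_mul, c.2, mul_zero] at h1
        have h2 : c' c.val = b c := by
          rw [hc'def]
          dsimp only
          rw [dif_neg (by rw [c.2]; exact lt_irrefl 0), dif_neg (by rw [c.2]; exact lt_irrefl 0)]
        rw [h2] at h1
        exact h1
      have hμ'T : ∀ j : P, μ' j = T := by
        intro j
        have h1 := congrFun hc'eq j.val
        rw [Pi.smul_apply, smul_eq_mul] at h1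
        have h2 : c' j.val = μ' j * μ j.val := by
          rw [hc'def]; dsimp only; rw [dif_pos j.2]
        rw [h2] at h1
        exact mul_right_cancel₀ (ne_of_gt j.2) h1
      have hν'T : ∀ i : N, ν' i = -T := by
        intro i
        have h1 := congrFun hc'eq i.val
        rw [Pi.smul_apply, smul_eq_mul] at h1
        have h2 : c' i.val = ν' i * (-(μ i.val)) := by
          rw [hc'def]; dsimp only
          rw [dif_neg (not_lt.mpr (le_of_lt i.2)), dif_pos i.2]
        rw [h2] at h1
        have h3 : (-(ν' i)) * μ i.val = T * μ i.val := by linarith [h1]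
        have h4 := mul_right_cancel₀ (ne_of_lt i.2) h3
        linarith
      intro idx
      rcases idx with k | c
      · have : lam k = μ' k.1 + ν' k.2 := hlamstruct k
        rw [hμ'T k.1, hν'T k.2] at this
        have : lam k = 0 := by rw [this]; ring
        exact this
      · exact hbz c
    -- pack the family and produce the cone representations
    obtain ⟨Γ, hcoe, hind, hcone⟩ := pack G hGind
    refine ⟨Γ, ?_, hind, ?_⟩
    · intro γ hγ
      have hmem : γ ∈ Set.range G := by rw [← hcoe]; exact_mod_cast hγ
      obtain ⟨idx, rfl⟩ := hmem
      rcases idx with k | c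
      · constructor
        · intro t
          exact (hγfacts k t).1
        · intro t ht
          exact ((hγfacts k t).2 ht).ne'
      · exact hv c.val
    · intro a
      rcases lt_trichotomy (μ a) 0 with h | h | h
      · -- a is in N
        set i : N := ⟨a, h⟩ with hidef
        have hμane : -(μ a) ≠ 0 := neg_ne_zero.mpr (ne_of_lt h)
        have hrep : v a = ∑ idx : (P × N) ⊕ Z,
            (Sum.elim (fun k : P × N => if k.2 = i then (-(μ a))⁻¹ else 0)
              (fun _ : Z => (0:ℚ)) idx) • G idx := by
          rw [hGdef, Fintype.sum_sum_type]
          simp only [Sum.elim_inl, Sum.elim_inr]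
          have hz : (∑ c : Z, (0:ℚ) • v c.val) = 0 :=
            Finset.sum_eq_zero fun c _ => zero_smul ℚ _
          have h1 : (∑ k : P × N, (if k.2 = i then (-(μ a))⁻¹ else 0) • γt k)
              = (-(μ a))⁻¹ • y i := by
            rw [Fintype.sum_prod_type]
            have h2 : ∀ j : P, (∑ i' : N, (if (j, i').2 = i then (-(μ a))⁻¹ else 0) • γt (j, i'))
                = (-(μ a))⁻¹ • γt (j, i) := by
              intro j
              have h3 : ∀ i' : N, ((if (j, i').2 = i then (-(μ a))⁻¹ else 0) • γt (j, i'))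
                  = if i' = i then (-(μ a))⁻¹ • γt (j, i') else 0 := by
                intro i'
                by_cases hc : i' = i
                · rw [if_pos hc, if_pos hc]
                · rw [if_neg hc, if_neg hc, zero_smul]
              rw [Finset.sum_congr rfl fun i' _ => h3 i',
                Finset.sum_ite_eq' Finset.univ i (fun i' => (-(μ a))⁻¹ • γt (j, i'))]
              simp
            rw [Finset.sum_congr rfl fun j _ => h2 j, ← Finset.smul_sum, hγcol i]
          rw [h1, hz, add_zero]
          have h4 : y i = (-(μ a)) • v a := rfl
          rw [h4, smul_smul, inv_mul_cancel₀ hμane, one_smul]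
        rw [hrep]
        refine hcone _ ?_
        intro k
        rcases k with k | c
        · simp only [Sum.elim_inl]
          split
          · rw [inv_nonneg]
            linarith
          · exact le_refl 0
        · simp only [Sum.elim_inr]
          exact le_refl 0
      · -- a is in Z
        set cz : Z := ⟨a, h⟩ with hczdef
        have hrep : v a = ∑ idx : (P × N) ⊕ Z,
            (Sum.elim (fun _ : P × N => (0:ℚ))
              (fun c : Z => if c = cz then (1:ℚ) else 0) idx) • G idx := by
          rw [hGdef, Fintype.sum_sum_type]
          simp only [Sum.elim_inl, Sum.elim_inr]
          have hz : (∑ k : P × N, (0:ℚ) • γt k) = 0 :=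
            Finset.sum_eq_zero fun k _ => zero_smul ℚ _
          have h1 : (∑ c : Z, (if c = cz then (1:ℚ) else 0) • v c.val) = v a := by
            have h3 : ∀ c : Z, ((if c = cz then (1:ℚ) else 0) • v c.val)
                = if c = cz then (1:ℚ) • v c.val else 0 := by
              intro c
              by_cases hc : c = cz
              · rw [if_pos hc, if_pos hc]
              · rw [if_neg hc, if_neg hc, zero_smul]
            rw [Finset.sum_congr rfl fun c _ => h3 c,
              Finset.sum_ite_eq' Finset.univ cz (fun c => (1:ℚ) • v c.val)]
            simp
            rfl
          rw [hz, h1, zero_add]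
        rw [hrep]
        refine hcone _ ?_
        intro k
        rcases k with k | c
        · exact le_refl 0
        · simp only [Sum.elim_inr]
          split
          · exact zero_le_one
          · exact le_refl 0
      · -- a is in P
        set j : P := ⟨a, h⟩ with hjdef
        have hμane : μ a ≠ 0 := ne_of_gt h
        have hrep : v a = ∑ idx : (P × N) ⊕ Z,
            (Sum.elim (fun k : P × N => if k.1 = j then (μ a)⁻¹ else 0)
              (fun _ : Z => (0:ℚ)) idx) • G idx := by
          rw [hGdef, Fintype.sum_sum_type]
          simp only [Sum.elim_inl, Sum.elim_inr]
          have hz : (∑ c : Z, (0:ℚ) • v c.val) = 0 :=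
            Finset.sum_eq_zero fun c _ => zero_smul ℚ _
          have h1 : (∑ k : P × N, (if k.1 = j then (μ a)⁻¹ else 0) • γt k)
              = (μ a)⁻¹ • x j := by
            rw [Fintype.sum_prod_type]
            have h2 : ∀ j' : P, (∑ i' : N, (if (j', i').1 = j then (μ a)⁻¹ else 0) • γt (j', i'))
                = if j' = j then (μ a)⁻¹ • (∑ i' : N, γt (j', i')) else 0 := by
              intro j'
              by_cases hc : j' = j
              · have h5 : ∀ i' : N, ((if (j', i').1 = j then (μ a)⁻¹ else 0) • γt (j', i'))
                    = (μ a)⁻¹ • γt (j', i') := fun i' => by rw [if_pos hc]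
                rw [Finset.sum_congr rfl fun i' _ => h5 i', if_pos hc, Finset.smul_sum]
              · have h5 : ∀ i' : N, ((if (j', i').1 = j then (μ a)⁻¹ else 0) • γt (j', i'))
                    = 0 := fun i' => by rw [if_neg hc, zero_smul]
                rw [Finset.sum_congr rfl fun i' _ => h5 i', if_neg hc, Finset.sum_const, smul_zero]
            rw [Finset.sum_congr rfl fun j' _ => h2 j',
              Finset.sum_ite_eq' Finset.univ j (fun j' => (μ a)⁻¹ • (∑ i' : N, γt (j', i')))]
            simp only [Finset.mem_univ, if_pos]
            rw [hγrow j]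
          rw [h1, hz, add_zero]
          have h4 : x j = (μ a) • v a := rfl
          rw [h4, smul_smul, inv_mul_cancel₀ hμane, one_smul]
        rw [hrep]
        refine hcone _ ?_
        intro k
        rcases k with k | c
        · simp only [Sum.elim_inl]
          split
          · rw [inv_nonneg]
            linarith
          · exact le_refl 0
        · simp only [Sum.elim_inr]
          exact le_refl 0


/-- Fix an infinite `I ⊆ ℕ`.  Let `β₁, …, β_n` be `I`-supported elements of
`∏_{i ∈ ℕ} ℚ≥0`, linearly independent over `ℚ`, and let `α ∈ ∏_{i ∈ ℕ} ℚ≥0` be any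
`I`-supported element.  Then there is a finite set `Γ ⊆ ∏_{i ∈ ℕ} ℚ≥0` of `I`-supported
elements, linearly independent over `ℚ`, with `{α, β₁, …, β_n} ⊆ Σ_{γ ∈ Γ} ℚ≥0 · γ`. -/
theorem exists_independent_cone_containing
    (I : Set ℕ) (hI : I.Infinite) (n : ℕ)
    (β : ℕ → (ℕ → ℚ))
    (hβ : ∀ i ∈ Finset.Icc 1 n, NonnegSeq (β i) ∧ ISupported I (β i))
    (hind : LinearIndependent ℚ (fun i : (Finset.Icc 1 n : Finset ℕ) => β i))
    (α : ℕ → ℚ) (hα : NonnegSeq α ∧ ISupported I α) :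
    ∃ Γ : Finset (ℕ → ℚ),
      (∀ γ ∈ Γ, NonnegSeq γ ∧ ISupported I γ) ∧ FinsetLinIndep Γ ∧
        InConeSpan Γ α ∧ ∀ i ∈ Finset.Icc 1 n, InConeSpan Γ (β i) := by
  classical
  set v : Fin (n+1) → (ℕ → ℚ) := fun a => if a.val = 0 then α else β a.val with hvdef
  have hv : ∀ a, NonnegSeq (v a) ∧ ISupported I (v a) := by
    intro a
    by_cases h : a.val = 0
    · rw [hvdef]; dsimp only; rw [if_pos h]; exact hα
    · rw [hvdef]; dsimp only; rw [if_neg h]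
      refine hβ a.val (Finset.mem_Icc.mpr ⟨Nat.one_le_iff_ne_zero.mpr h, ?_⟩)
      have := a.isLt
      omega
  have hsucc : ∀ k : Fin n, v k.succ = β (k.val + 1) := by
    intro k
    rw [hvdef]; dsimp only
    rw [if_neg (by simp [Fin.val_succ])]
    congr 1
  have hβi : LinearIndependent ℚ (fun k : Fin n => v k.succ) := by
    set g : Fin n → {i : ℕ // i ∈ Finset.Icc 1 n} :=
      fun k => ⟨k.val + 1, Finset.mem_Icc.mpr ⟨by omega, by
        have := k.isLt
        omega⟩⟩ with hgdef
    have hginj : Function.Injective g := by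
      intro k k' h
      have h2 : k.val + 1 = k'.val + 1 := congrArg Subtype.val h
      exact Fin.val_injective (by omega)
    have h1 := hind.comp g hginj
    have h2 : (fun k : Fin n => v k.succ)
        = (fun i : {i : ℕ // i ∈ Finset.Icc 1 n} => β i.val) ∘ g := by
      funext k
      rw [hsucc k]
      rfl
    rw [h2]
    exact h1
  obtain ⟨Γ, hprops, hind', hcone⟩ := main_lemma I hI n v hv hβi
  refine ⟨Γ, hprops, hind', ?_, ?_⟩
  · have h0 := hcone 0
    have hv0 : v 0 = α := by rw [hvdef]; simp
    rwa [hv0] at h0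
  · intro i hi
    have hmem := Finset.mem_Icc.mp hi
    have hlt : i < n + 1 := by omega
    have hc := hcone ⟨i, hlt⟩
    have hvi : v ⟨i, hlt⟩ = β i := by
      rw [hvdef]; dsimp only
      rw [if_neg (by omega)]
    rwa [hvi] at hc
end

section
/- Fix an infinite subset I ⊆ ℕ. For every finite set β₁,…,β_n of I-supported elements of ∏_{i∈ℕ} ℚ≥0, there exists a finite set Γ ⊆ ∏_{i∈ℕ} ℚ≥0 of I-supported elements that is linearly independent over ℚ and satisfies {β₁,…,β_n} ⊆ Σ_{γ∈Γ} ℚ≥0·γ. -/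
open Finset

variable {n : ℕ}

private lemma fm_sum_identity {M : Type*} [AddCommGroup M] [Module ℚ M] {p : ℕ}
    (h : Fin p → M) (φ a : Fin p → ℚ)
    (A B : ℚ) (hA : A = ∑ t, if 0 < φ t then a t * φ t else 0)
    (hB : B = ∑ t, if φ t < 0 then a t * (-(φ t)) else 0) (hApos : 0 < A) :
    (∑ t, (if 0 < φ t then a t * (A - B) / A else if φ t = 0 then a t else 0) •
        (if 0 ≤ φ t then h t else 0))
      + ∑ s, ∑ t, (if 0 < φ s ∧ φ t < 0 then a s * a t / A else 0) •
        (if 0 < φ s ∧ φ t < 0 then φ s • h t + (-(φ t)) • h s else 0)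
      = ∑ t, a t • h t := by
  have hAne : A ≠ 0 := ne_of_gt hApos
  have key2 : ∀ s t : Fin p,
      (if 0 < φ s ∧ φ t < 0 then a s * a t / A else 0) •
        (if 0 < φ s ∧ φ t < 0 then φ s • h t + (-(φ t)) • h s else 0)
      = ((if 0 < φ s then a s * φ s else 0) * (if φ t < 0 then a t / A else 0)) • h t
        + ((if φ t < 0 then a t * (-(φ t)) else 0) * (if 0 < φ s then a s / A else 0)) • h s := by
    intro s t
    by_cases hs : 0 < φ s <;> by_cases ht : φ t < 0 <;>
      simp only [hs, ht, and_true, and_false, true_and, false_and, if_true, if_false,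
        zero_smul, smul_zero, mul_zero, zero_mul, add_zero, zero_add, if_pos, if_neg,
        not_false_iff]
    · rw [smul_add, smul_smul, smul_smul]
      congr 1 <;> congr 1 <;> ring
  rw [Finset.sum_congr rfl (fun s _ => Finset.sum_congr rfl (fun t _ => key2 s t))]
  have split : (∑ s : Fin p, ∑ t : Fin p,
      (((if 0 < φ s then a s * φ s else 0) * (if φ t < 0 then a t / A else 0)) • h t
        + ((if φ t < 0 then a t * (-(φ t)) else 0) * (if 0 < φ s then a s / A else 0)) • h s))
      = (∑ s : Fin p, ∑ t : Fin p,
          ((if 0 < φ s then a s * φ s else 0) * (if φ t < 0 then a t / A else 0)) • h t)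
        + (∑ s : Fin p, ∑ t : Fin p,
          ((if φ t < 0 then a t * (-(φ t)) else 0) * (if 0 < φ s then a s / A else 0)) • h s) := by
    rw [← Finset.sum_add_distrib]
    exact Finset.sum_congr rfl (fun s _ => Finset.sum_add_distrib)
  rw [split]
  have hD1 : (∑ s : Fin p, ∑ t : Fin p,
      ((if 0 < φ s then a s * φ s else 0) * (if φ t < 0 then a t / A else 0)) • h t)
      = ∑ t, if φ t < 0 then a t • h t else 0 := by
    rw [Finset.sum_comm]
    refine Finset.sum_congr rfl (fun t _ => ?_)
    have : ∀ s : Fin p, ((if 0 < φ s then a s * φ s else 0) * (if φ t < 0 then a t / A else 0)) • h t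
        = ((if 0 < φ s then a s * φ s else 0) * (if φ t < 0 then a t / A else 0)) • h t := fun _ => rfl
    rw [← Finset.sum_smul, ← Finset.sum_mul, ← hA]
    split_ifs with ht
    · rw [mul_comm, div_mul_cancel₀ _ hAne]
    · rw [mul_zero, zero_smul]
  have hD2 : (∑ s : Fin p, ∑ t : Fin p,
      ((if φ t < 0 then a t * (-(φ t)) else 0) * (if 0 < φ s then a s / A else 0)) • h s)
      = ∑ s, if 0 < φ s then (B * (a s / A)) • h s else 0 := by
    refine Finset.sum_congr rfl (fun s _ => ?_)
    rw [← Finset.sum_smul, ← Finset.sum_mul, ← hB]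
    split_ifs with hs
    · rfl
    · rw [mul_zero, zero_smul]
  rw [hD1, hD2, ← Finset.sum_add_distrib, ← Finset.sum_add_distrib]
  refine Finset.sum_congr rfl (fun t _ => ?_)
  rcases lt_trichotomy (φ t) 0 with hc | hc | hc
  · have h1 : ¬(0 < φ t) := by linarith
    have h2 : φ t ≠ 0 := ne_of_lt hc
    have h3 : ¬(0 ≤ φ t) := not_le.mpr hc
    simp only [h1, h2, h3, hc, if_true, if_false, zero_smul, smul_zero, zero_add, add_zero]
  · simp [hc]
  · have h1 : ¬(φ t < 0) := by linarith
    have h2 : φ t ≠ 0 := ne_of_gt hc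
    simp only [hc, h1, h2, hc.le, if_true, if_false, zero_add, add_zero]
    rw [← add_smul]
    congr 1
    field_simp
    ring

private lemma cone_reindex {Y : Submodule ℚ (Fin n → ℚ)} {J : Finset (Fin n)}
    {ι : Type} [Fintype ι] (h : ι → Fin n → ℚ)
    (h1 : ∀ t, h t ∈ Y ∧ ∀ j ∈ J, 0 ≤ h t j)
    (h2 : ∀ x ∈ Y, (∀ j ∈ J, 0 ≤ x j) →
      ∃ a : ι → ℚ, (∀ t, 0 ≤ a t) ∧ x = ∑ t, a t • h t) :
    ∃ (p : ℕ) (h' : Fin p → Fin n → ℚ),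
      (∀ t, h' t ∈ Y ∧ ∀ j ∈ J, 0 ≤ h' t j) ∧
      (∀ x ∈ Y, (∀ j ∈ J, 0 ≤ x j) →
        ∃ a : Fin p → ℚ, (∀ t, 0 ≤ a t) ∧ x = ∑ t, a t • h' t) := by
  classical
  refine ⟨Fintype.card ι, h ∘ (Fintype.equivFin ι).symm, fun t => h1 _, ?_⟩
  intro x hxY hxpos
  obtain ⟨a, ha0, hax⟩ := h2 x hxY hxpos
  refine ⟨a ∘ (Fintype.equivFin ι).symm, fun t => ha0 _, ?_⟩
  rw [hax]
  exact (Equiv.sum_comp (Fintype.equivFin ι).symm (fun s => a s • h s)).symm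

lemma exists_cone_gens (Y : Submodule ℚ (Fin n → ℚ)) (J : Finset (Fin n)) :
    ∃ (p : ℕ) (h : Fin p → Fin n → ℚ),
      (∀ t, h t ∈ Y ∧ ∀ j ∈ J, 0 ≤ h t j) ∧
      (∀ x ∈ Y, (∀ j ∈ J, 0 ≤ x j) →
        ∃ a : Fin p → ℚ, (∀ t, 0 ≤ a t) ∧ x = ∑ t, a t • h t) := by
  classical
  induction J using Finset.induction with
  | empty =>
    obtain ⟨S, hS⟩ : Y.FG := IsNoetherian.noetherian Y
    refine cone_reindex (ι := ↥S ⊕ ↥S)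
      (Sum.elim (fun s => (s : Fin n → ℚ)) (fun s => -(s : Fin n → ℚ))) ?_ ?_
    · rintro (s | s) <;> constructor
      · exact hS ▸ Submodule.subset_span s.2
      · intro j hj; exact absurd hj (Finset.notMem_empty j)
      · exact neg_mem (hS ▸ Submodule.subset_span s.2)
      · intro j hj; exact absurd hj (Finset.notMem_empty j)
    · intro x hxY _
      have hx : x ∈ Submodule.span ℚ (S : Set (Fin n → ℚ)) := hS ▸ hxY
      obtain ⟨f, -, hf⟩ := Submodule.mem_span_finset.mp hx
      refine ⟨Sum.elim (fun s => max (f s) 0) (fun s => max (-(f s)) 0),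
        by rintro (s | s) <;> exact le_max_right _ _, ?_⟩
      rw [Fintype.sum_sum_type]
      simp only [Sum.elim_inl, Sum.elim_inr]
      have key : ∀ s : ↥S, max (f ↑s) 0 • (s : Fin n → ℚ) + max (-(f ↑s)) 0 • (-(s : Fin n → ℚ))
          = f ↑s • (s : Fin n → ℚ) := by
        intro s
        rcases le_total 0 (f ↑s) with hfs | hfs
        · rw [max_eq_left hfs, max_eq_right (neg_nonpos.mpr hfs)]; simp
        · rw [max_eq_right hfs, max_eq_left (neg_nonneg.mpr hfs)]
          simp [smul_neg]
      rw [← Finset.sum_add_distrib, Finset.sum_congr rfl (fun s _ => key s),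
        Finset.sum_coe_sort S (fun i => f i • i), hf]
  | @insert j J hjJ ih =>
    obtain ⟨p, h, hh1, hh2⟩ := ih
    set φ : Fin p → ℚ := fun t => h t j with hφ
    refine cone_reindex (ι := Fin p ⊕ Fin p × Fin p)
      (Sum.elim (fun t => if 0 ≤ φ t then h t else 0)
        (fun st => if 0 < φ st.1 ∧ φ st.2 < 0
          then φ st.1 • h st.2 + (-(φ st.2)) • h st.1 else 0)) ?_ ?_
    · rintro (t | ⟨s, t⟩)
      · dsimp only [Sum.elim_inl]
        split_ifs with hc
        · refine ⟨(hh1 t).1, ?_⟩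
          intro j' hj'
          rcases Finset.mem_insert.mp hj' with rfl | hj'
          · exact hc
          · exact (hh1 t).2 j' hj'
        · exact ⟨zero_mem Y, fun j' _ => le_refl 0⟩
      · dsimp only [Sum.elim_inr]
        split_ifs with hc
        · constructor
          · exact add_mem (Submodule.smul_mem Y _ (hh1 t).1) (Submodule.smul_mem Y _ (hh1 s).1)
          · intro j' hj'
            rcases Finset.mem_insert.mp hj' with rfl | hj'
            · have hval : (φ s • h t + (-(φ t)) • h s) j' = φ s * h t j' + (-(φ t)) * h s j' := rfl
              rw [hval]
              have : φ s * φ t + (-(φ t)) * φ s = 0 := by ring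
              have hφt : h t j' = φ t := rfl
              have hφs : h s j' = φ s := rfl
              rw [hφt, hφs, this]
            · have hval : (φ s • h t + (-(φ t)) • h s) j' = φ s * h t j' + (-(φ t)) * h s j' := rfl
              rw [hval]
              have h1' := (hh1 t).2 j' hj'
              have h2' := (hh1 s).2 j' hj'
              have h3' := hc.1.le
              have h4' := neg_nonneg.mpr hc.2.le
              have := mul_nonneg h3' h1'
              have := mul_nonneg h4' h2'
              linarith
        · exact ⟨zero_mem Y, fun j' _ => le_refl 0⟩
    · intro x hxY hxpos
      have hxpos' : ∀ j' ∈ J, 0 ≤ x j' := fun j' hj' => hxpos j' (Finset.mem_insert_of_mem hj')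
      obtain ⟨a, ha0, hax⟩ := hh2 x hxY hxpos'
      set A : ℚ := ∑ t, if 0 < φ t then a t * φ t else 0 with hA
      set B : ℚ := ∑ t, if φ t < 0 then a t * (-(φ t)) else 0 with hB
      have hA0 : 0 ≤ A := Finset.sum_nonneg (by
        intro t _; split_ifs with hc
        · exact mul_nonneg (ha0 t) hc.le
        · exact le_refl 0)
      have hB0 : 0 ≤ B := Finset.sum_nonneg (by
        intro t _; split_ifs with hc
        · exact mul_nonneg (ha0 t) (by linarith)
        · exact le_refl 0)
      have hxj : x j = A - B := by
        have hxj1 : x j = ∑ t, a t * φ t := by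
          rw [hax, Finset.sum_apply]; rfl
        rw [hxj1, hA, hB, ← Finset.sum_sub_distrib]
        refine Finset.sum_congr rfl (fun t _ => ?_)
        rcases lt_trichotomy (φ t) 0 with hc | hc | hc
        · rw [if_neg (by linarith), if_pos hc]; ring
        · rw [if_neg (by rw [hc]; exact lt_irrefl 0), if_neg (by rw [hc]; exact lt_irrefl 0)]
          rw [hc]; ring
        · rw [if_pos hc, if_neg (by linarith)]; ring
      have hxj0 : 0 ≤ x j := hxpos j (Finset.mem_insert_self j J)
      have hBA : B ≤ A := by linarith
      by_cases hBz : B = 0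
      · have hzero : ∀ t, φ t < 0 → a t = 0 := by
          intro t ht
          have hnn : ∀ i ∈ (univ : Finset (Fin p)),
              0 ≤ (if φ i < 0 then a i * (-(φ i)) else 0) := by
            intro i _
            split_ifs with hc
            · exact mul_nonneg (ha0 i) (by linarith)
            · exact le_refl 0
          have hterm := (Finset.sum_eq_zero_iff_of_nonneg hnn).mp (hB ▸ hBz) t (Finset.mem_univ t)
          rw [if_pos ht] at hterm
          rcases mul_eq_zero.mp hterm with h0 | h0
          · exact h0
          · exfalso
            have : φ t = 0 := by have := neg_eq_zero.mp h0; linarith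
            linarith
        refine ⟨Sum.elim (fun t => if 0 ≤ φ t then a t else 0) (fun _ => 0), ?_, ?_⟩
        · rintro (t | st)
          · dsimp only [Sum.elim_inl]; split_ifs with hcc; exacts [ha0 t, le_refl 0]
          · exact le_refl 0
        · rw [Fintype.sum_sum_type, Fintype.sum_prod_type]
          dsimp only [Sum.elim_inl, Sum.elim_inr]
          have hright : (∑ s : Fin p, ∑ t : Fin p, (0:ℚ) • (if 0 < φ s ∧ φ t < 0
              then φ s • h t + (-(φ t)) • h s else 0)) = 0 :=
            Finset.sum_eq_zero (fun s _ => Finset.sum_eq_zero (fun t _ => zero_smul _ _))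
          rw [hright, add_zero, hax]
          refine Finset.sum_congr rfl (fun t _ => ?_)
          split_ifs with hcc
          · rfl
          · rw [hzero t (by linarith)]
            simp
      · have hBpos : 0 < B := lt_of_le_of_ne hB0 (Ne.symm hBz)
        have hApos : 0 < A := lt_of_lt_of_le hBpos hBA
        refine ⟨Sum.elim
          (fun t => if 0 < φ t then a t * (A - B) / A else if φ t = 0 then a t else 0)
          (fun st => if 0 < φ st.1 ∧ φ st.2 < 0 then a st.1 * a st.2 / A else 0), ?_, ?_⟩
        · rintro (t | st)
          · dsimp only [Sum.elim_inl]
            split_ifs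
            · exact div_nonneg (mul_nonneg (ha0 t) (by linarith)) hA0
            · exact ha0 t
            · exact le_refl 0
          · dsimp only [Sum.elim_inr]
            split_ifs
            · exact div_nonneg (mul_nonneg (ha0 st.1) (ha0 st.2)) hA0
            · exact le_refl 0
        · rw [Fintype.sum_sum_type, Fintype.sum_prod_type]
          dsimp only [Sum.elim_inl, Sum.elim_inr]
          rw [hax]
          exact (fm_sum_identity h φ a A B hA hB hApos).symm



open Finset Submodule

/-- Greedy perturbation lemma: given vectors `κ s` in a finite-dimensional subspace `K`
spanned by the `z m`, we can perturb each `κ s` by a small positive multiple of some `z m`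
so that the results span `K`, provided there are at least `finrank K` of them. -/
lemma sg_lemma {E : Type*} [AddCommGroup E] [Module ℚ E] [FiniteDimensional ℚ E]
    (K : Submodule ℚ E) {r : ℕ} (hr : Module.finrank ℚ K ≤ r)
    (z : Fin r → E) (hzK : ∀ m, z m ∈ K)
    (hzspan : K ≤ Submodule.span ℚ (Set.range z))
    (κ : Fin r → E) (hκ : ∀ s, κ s ∈ K) (δ : Fin r → ℚ) (hδ : ∀ s, 0 < δ s) :
    ∃ w : Fin r → E, (∀ s, ∃ m, ∃ t : ℚ, 0 < t ∧ t ≤ δ s ∧ w s = t • z m) ∧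
      K ≤ Submodule.span ℚ (Set.range fun s => κ s + w s) := by
  classical
  rcases Nat.eq_zero_or_pos r with rfl | hrpos
  · refine ⟨Fin.elim0, fun s => s.elim0, ?_⟩
    have : Set.range z = ∅ := Set.range_eq_empty z
    calc K ≤ Submodule.span ℚ (Set.range z) := hzspan
    _ = Submodule.span ℚ ∅ := by rw [this]
    _ ≤ _ := by rw [Submodule.span_empty]; exact bot_le
  have m0 : Fin r := ⟨0, hrpos⟩
  -- main induction
  have main : ∀ s : ℕ, s ≤ r →
      ∃ w : Fin r → E,
        (∀ j, ∃ m, ∃ t : ℚ, 0 < t ∧ t ≤ δ j ∧ w j = t • z m) ∧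
        (K ≤ Submodule.span ℚ ((fun j => κ j + w j) '' {j : Fin r | (j : ℕ) < s}) ∨
          s ≤ Module.finrank ℚ
            (Submodule.span ℚ ((fun j => κ j + w j) '' {j : Fin r | (j : ℕ) < s}))) := by
    intro s
    induction s with
    | zero =>
      intro _
      exact ⟨fun j => δ j • z m0, fun j => ⟨m0, δ j, hδ j, le_refl _, rfl⟩, Or.inr (Nat.zero_le _)⟩
    | succ s ihs =>
      intro hs1
      obtain ⟨w, hwform, hw⟩ := ihs (Nat.le_of_succ_le hs1)
      have hsr : s < r := hs1
      set s' : Fin r := ⟨s, hsr⟩ with hs'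
      have hsubset : ∀ (w' : Fin r → E),
          ((fun j => κ j + w' j) '' {j : Fin r | (j : ℕ) < s}) ⊆
            ((fun j => κ j + w' j) '' {j : Fin r | (j : ℕ) < s + 1}) := by
        intro w'
        apply Set.image_mono
        intro j hj
        exact Nat.lt_succ_of_lt hj
      rcases hw with hK | hdim
      · refine ⟨w, hwform, Or.inl ?_⟩
        exact hK.trans (Submodule.span_mono (hsubset w))
      · set W := Submodule.span ℚ ((fun j => κ j + w j) '' {j : Fin r | (j : ℕ) < s}) with hW
        by_cases hKW : K ≤ W
        · refine ⟨w, hwform, Or.inl (hKW.trans (Submodule.span_mono (hsubset w)))⟩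
        · -- there is a basis vector z m outside W
          have hzm : ∃ m, z m ∉ W := by
            by_contra hcon
            push_neg at hcon
            apply hKW
            refine hzspan.trans (Submodule.span_le.mpr ?_)
            rintro _ ⟨m, rfl⟩
            exact hcon m
          obtain ⟨m, hm⟩ := hzm
          -- one of the two candidate perturbations works
          have hcand : κ s' + (δ s') • z m ∉ W ∨ κ s' + (δ s' / 2) • z m ∉ W := by
            by_contra hcon
            push_neg at hcon
            apply hm
            have hdiff : (δ s' - δ s' / 2) • z m ∈ W := by
              have := Submodule.sub_mem W hcon.1 hcon.2
              have heq : κ s' + (δ s') • z m - (κ s' + (δ s' / 2) • z m)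
                  = (δ s' - δ s' / 2) • z m := by
                rw [sub_smul]; abel
              rwa [heq] at this
            have hne : δ s' - δ s' / 2 ≠ 0 := by
              have h2 : δ s' - δ s' / 2 = δ s' / 2 := by ring
              rw [h2]
              exact ne_of_gt (half_pos (hδ s'))
            have := Submodule.smul_mem W (δ s' - δ s' / 2)⁻¹ hdiff
            rwa [smul_smul, inv_mul_cancel₀ hne, one_smul] at this
          have hpick : ∃ t : ℚ, 0 < t ∧ t ≤ δ s' ∧ κ s' + t • z m ∉ W := by
            rcases hcand with hc | hc
            · exact ⟨δ s', hδ s', le_refl _, hc⟩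
            · exact ⟨δ s' / 2, half_pos (hδ s'), half_le_self (hδ s').le, hc⟩
          obtain ⟨t, ht0, htδ, htW⟩ := hpick
          set w' : Fin r → E := Function.update w s' (t • z m) with hw'
          have hagree : ∀ j : Fin r, (j : ℕ) < s → κ j + w' j = κ j + w j := by
            intro j hj
            have : j ≠ s' := by
              intro hcc; rw [hcc] at hj; exact absurd hj (lt_irrefl s)
            rw [hw', Function.update_of_ne this]
          have himage : ((fun j => κ j + w' j) '' {j : Fin r | (j : ℕ) < s})
              = ((fun j => κ j + w j) '' {j : Fin r | (j : ℕ) < s}) := by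
            apply Set.image_congr
            intro j hj
            exact hagree j hj
          have hset : {j : Fin r | (j : ℕ) < s + 1} = insert s' {j : Fin r | (j : ℕ) < s} := by
            ext j
            simp only [Set.mem_setOf_eq, Set.mem_insert_iff]
            constructor
            · intro hj
              rcases Nat.lt_succ_iff_lt_or_eq.mp hj with hj | hj
              · exact Or.inr hj
              · left; exact Fin.ext hj
            · rintro (rfl | hj)
              · exact Nat.lt_succ_self s
              · exact Nat.lt_succ_of_lt hj
          refine ⟨w', ?_, Or.inr ?_⟩
          · intro j
            by_cases hj : j = s'
            · subst hj
              exact ⟨m, t, ht0, htδ, by rw [hw', Function.update_self]⟩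
            · obtain ⟨m', t', h1, h2, h3⟩ := hwform j
              exact ⟨m', t', h1, h2, by rw [hw', Function.update_of_ne hj]; exact h3⟩
          · -- dimension increased
            have hnew : κ s' + w' s' ∉ W := by
              rw [hw', Function.update_self]; exact htW
            have hWlt : W < Submodule.span ℚ ((fun j => κ j + w' j) '' {j : Fin r | (j : ℕ) < s + 1}) := by
              rw [hset, Set.image_insert_eq, himage]
              constructor
              · rw [hW]
                exact Submodule.span_mono (Set.subset_insert _ _)
              · intro hle
                apply hnew
                apply hle
                exact Submodule.subset_span (Set.mem_insert _ _)
            have := Submodule.finrank_lt_finrank_of_lt hWlt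
            omega
  obtain ⟨w, hwform, hw⟩ := main r (le_refl r)
  have hall : {j : Fin r | (j : ℕ) < r} = Set.univ := by
    ext j; simp [j.isLt]
  refine ⟨w, hwform, ?_⟩
  rcases hw with hK | hdim
  · rwa [hall, Set.image_univ] at hK
  · rw [hall, Set.image_univ] at hdim
    set W := Submodule.span ℚ (Set.range fun j => κ j + w j) with hW
    have hWK : W ≤ K := by
      rw [hW]
      apply Submodule.span_le.mpr
      rintro _ ⟨j, rfl⟩
      apply Submodule.add_mem K (hκ j)
      obtain ⟨m', t', _, _, h3⟩ := hwform j
      rw [h3]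
      exact Submodule.smul_mem K _ (hzK m')
    have hfr : Module.finrank ℚ K ≤ Module.finrank ℚ W := le_trans hr hdim
    rw [Submodule.eq_of_le_of_finrank_le hWK hfr]

set_option maxHeartbeats 1000000 in
/-- Fix an infinite `I ⊆ ℕ`.  For every finite family `β₁, …, β_n` of
`I`-supported elements of `∏_{i ∈ ℕ} ℚ≥0` there is a finite set `Γ ⊆ ∏_{i ∈ ℕ} ℚ≥0` of
`I`-supported elements, linearly independent over `ℚ`, with
`{β₁, …, β_n} ⊆ Σ_{γ ∈ Γ} ℚ≥0 · γ`. -/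
theorem exists_independent_cone_containing_finite_family
    (I : Set ℕ) (hI : I.Infinite) (n : ℕ)
    (β : ℕ → (ℕ → ℚ))
    (hβ : ∀ i ∈ Finset.Icc 1 n, NonnegSeq (β i) ∧ ISupported I (β i)) :
    ∃ Γ : Finset (ℕ → ℚ),
      (∀ γ ∈ Γ, NonnegSeq γ ∧ ISupported I γ) ∧ FinsetLinIndep Γ ∧
        ∀ i ∈ Finset.Icc 1 n, InConeSpan Γ (β i) := by
  classical
  rcases Nat.eq_zero_or_pos n with rfl | hn
  · refine ⟨∅, ?_, ?_, ?_⟩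
    · intro γ hγ; exact absurd hγ (Finset.notMem_empty γ)
    · unfold FinsetLinIndep
      rw [Finset.coe_empty]
      haveI : IsEmpty ((∅ : Set (ℕ → ℚ)) : Type) := Set.isEmpty_coe_sort.mpr rfl
      exact linearIndependent_empty_type
    · intro i hi
      simp at hi
  -- Main case: n ≥ 1
  have hβprop : ∀ j : Fin n, NonnegSeq (β ((j : ℕ) + 1)) ∧ ISupported I (β ((j : ℕ) + 1)) := by
    intro j
    apply hβ
    rw [Finset.mem_Icc]
    have := j.isLt
    omega
  set ρ : ℕ → Fin n → ℚ := fun i j => β ((j : ℕ) + 1) i with hρdef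
  have hρ0 : ∀ i j, 0 ≤ ρ i j := fun i j => (hβprop j).1 i
  have hρI : ∀ i ∈ I, ∀ j, 0 < ρ i j := by
    intro i hi j
    exact lt_of_le_of_ne (hρ0 i j) (Ne.symm ((hβprop j).2 i hi))
  set Y : Submodule ℚ (Fin n → ℚ) := Submodule.span ℚ (Set.range ρ) with hYdef
  have hρY : ∀ i, ρ i ∈ Y := fun i => Submodule.subset_span ⟨i, rfl⟩
  obtain ⟨p, h, hh1, hh2⟩ := exists_cone_gens Y Finset.univ
  have hhY : ∀ t, h t ∈ Y := fun t => (hh1 t).1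
  have hh0 : ∀ t j, 0 ≤ h t j := fun t j => (hh1 t).2 j (Finset.mem_univ j)
  have j0 : Fin n := ⟨0, hn⟩
  obtain ⟨i₀, hi₀⟩ := hI.nonempty
  -- representations of the profiles, strictly positive at indices in I
  have hrep : ∀ i : ℕ, ∃ v : Fin p → ℚ, (∀ t, 0 ≤ v t) ∧ (i ∈ I → ∀ t, 0 < v t) ∧
      ρ i = ∑ t, v t • h t := by
    intro i
    by_cases hiI : i ∈ I
    · set σv : Fin n → ℚ := ∑ t, h t with hσv
      have hσY : σv ∈ Y := Submodule.sum_mem Y (fun t _ => hhY t)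
      have hσ0 : ∀ j, 0 ≤ σv j := by
        intro j
        rw [hσv, Finset.sum_apply]
        exact Finset.sum_nonneg (fun t _ => hh0 t j)
      have huniv : (Finset.univ : Finset (Fin n)).Nonempty := ⟨j0, Finset.mem_univ j0⟩
      set ε : ℚ := Finset.univ.inf' huniv (fun j => ρ i j / (σv j + 1)) with hε
      have hεpos : 0 < ε := by
        rw [hε, Finset.lt_inf'_iff]
        intro j _
        exact div_pos (hρI i hiI j) (by linarith [hσ0 j])
      have hεle : ∀ j, ε * (σv j + 1) ≤ ρ i j := by
        intro j
        have h1 : ε ≤ ρ i j / (σv j + 1) := Finset.inf'_le _ (Finset.mem_univ j)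
        have h2 : (0:ℚ) < σv j + 1 := by linarith [hσ0 j]
        calc ε * (σv j + 1) ≤ (ρ i j / (σv j + 1)) * (σv j + 1) := by
              exact mul_le_mul_of_nonneg_right h1 h2.le
        _ = ρ i j := div_mul_cancel₀ _ (ne_of_gt h2)
      set x : Fin n → ℚ := ρ i - ε • σv with hx
      have hxY : x ∈ Y := Submodule.sub_mem Y (hρY i) (Submodule.smul_mem Y ε hσY)
      have hx0 : ∀ j ∈ Finset.univ, 0 ≤ x j := by
        intro j _
        have : x j = ρ i j - ε * σv j := rfl
        rw [this]
        have := hεle j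
        nlinarith [hεpos]
      obtain ⟨a, ha0, hax⟩ := hh2 x hxY hx0
      refine ⟨fun t => a t + ε, fun t => ?_, fun _ t => ?_, ?_⟩
      · show 0 ≤ a t + ε
        linarith [ha0 t, hεpos]
      · show 0 < a t + ε
        linarith [ha0 t, hεpos]
      have hsplit : (∑ t, (a t + ε) • h t) = (∑ t, a t • h t) + ∑ t, ε • h t := by
        rw [← Finset.sum_add_distrib]
        exact Finset.sum_congr rfl (fun t _ => add_smul _ _ _)
      rw [hsplit, ← hax]
      have : (∑ t, ε • h t) = ε • σv := by
        rw [hσv, Finset.smul_sum]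
      rw [this, hx]
      abel
    · obtain ⟨a, ha0, hax⟩ := hh2 (ρ i) (hρY i) (fun j _ => hρ0 i j)
      exact ⟨a, ha0, fun hc => absurd hc hiI, hax⟩
  choose ν hν0 hνI hνrep using hrep
  -- p is positive
  have hp : 0 < p := by
    rcases Nat.eq_zero_or_pos p with hp0 | hp
    · exfalso
      have := hνrep i₀
      subst hp0
      rw [Finset.univ_eq_empty, Finset.sum_empty] at this
      have h2 := hρI i₀ hi₀ j0
      rw [this] at h2
      exact lt_irrefl 0 h2
    · exact hp
  haveI : Nonempty (Fin p) := Fin.pos_iff_nonempty.mp hp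
  have hunivp : (Finset.univ : Finset (Fin p)).Nonempty := Finset.univ_nonempty
  -- the linear map C
  set C : (Fin p → ℚ) →ₗ[ℚ] (Fin n → ℚ) :=
    { toFun := fun a => ∑ t, a t • h t
      map_add' := fun a b => by
        simp only [Pi.add_apply, add_smul]
        exact Finset.sum_add_distrib
      map_smul' := fun m a => by
        simp only [Pi.smul_apply, smul_eq_mul, RingHom.id_apply, mul_smul]
        exact (Finset.smul_sum).symm } with hCdef
  have hCapp : ∀ a : Fin p → ℚ, C a = ∑ t, a t • h t := fun a => rfl
  have hCν : ∀ i, C (ν i) = ρ i := fun i => by rw [hCapp, ← hνrep i]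
  have hCY : ∀ a, C a ∈ Y := by
    intro a
    rw [hCapp]
    exact Submodule.sum_mem Y (fun t _ => Submodule.smul_mem Y _ (hhY t))
  set K : Submodule ℚ (Fin p → ℚ) := LinearMap.ker C with hKdef
  set r : ℕ := Module.finrank ℚ K with hrdef
  set bK : Module.Basis (Fin r) ℚ K := Module.finBasis ℚ K with hbKdef
  set z : Fin r → (Fin p → ℚ) := fun m => (bK m : Fin p → ℚ) with hzdef
  have hzK : ∀ m, z m ∈ K := fun m => (bK m).2
  have hzspan : K ≤ Submodule.span ℚ (Set.range z) := by
    intro k hk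
    have h1 : Set.range z = K.subtype '' Set.range bK := by
      rw [← Set.range_comp]; rfl
    rw [h1, ← Submodule.map_span, bK.span_eq, Submodule.map_top]
    exact ⟨⟨k, hk⟩, rfl⟩
  set d : ℕ := Module.finrank ℚ Y with hddef
  -- injections into I
  set em : ℕ → ℕ := fun k => ((Set.Infinite.natEmbedding I hI) k : ℕ) with hemdef
  have hemI : ∀ k, em k ∈ I := fun k => ((Set.Infinite.natEmbedding I hI) k).2
  have heminj : Function.Injective em := fun k k' hkk =>
    (Set.Infinite.natEmbedding I hI).injective (Subtype.ext hkk)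
  set idx : Fin r → Fin (d + 1) → ℕ :=
    fun s j => em ((finProdFinEquiv (s, j) : Fin (r * (d + 1))) : ℕ) with hidxdef
  have hidxI : ∀ s j, idx s j ∈ I := fun s j => hemI _
  have hidxinj : ∀ s j s' j', idx s j = idx s' j' → s = s' ∧ j = j' := by
    intro s j s' j' hEq
    have h1 := heminj hEq
    have h2 : finProdFinEquiv (s, j) = finProdFinEquiv (s', j') := Fin.ext h1
    have h3 : (s, j) = (s', j') := finProdFinEquiv.injective h2
    exact ⟨congrArg Prod.fst h3, congrArg Prod.snd h3⟩
  -- dependencies among d+1 profiles in Y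
  have hgroup : ∀ s : Fin r, ∃ c : Fin (d + 1) → ℚ,
      (∑ j, c j • ρ (idx s j) = 0) ∧ ∃ j, c j ≠ 0 := by
    intro s
    set vv : Fin (d + 1) → Y := fun j => ⟨ρ (idx s j), hρY _⟩ with hvv
    have hnotli : ¬ LinearIndependent ℚ vv := by
      intro hli
      have hcard := hli.fintype_card_le_finrank
      rw [Fintype.card_fin] at hcard
      omega
    obtain ⟨c, hcsum, j', hcj'⟩ := Fintype.not_linearIndependent_iff.mp hnotli
    refine ⟨c, ?_, j', hcj'⟩
    have := congrArg (Subtype.val : Y → (Fin n → ℚ)) hcsum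
    simpa using this
  choose c hc0 hcex using hgroup
  set jp : Fin r → Fin (d + 1) := fun s => (hcex s).choose with hjpdef
  have hjp : ∀ s, c s (jp s) ≠ 0 := fun s => (hcex s).choose_spec
  -- the anchors
  set anc : Fin r → ℕ := fun s => idx s (jp s) with hancdef
  have hancI : ∀ s, anc s ∈ I := fun s => hidxI s (jp s)
  have hancinj : ∀ s s', anc s = anc s' → s = s' := by
    intro s s' hEq
    exact (hidxinj _ _ _ _ hEq).1
  -- kernel elements κ₀
  set κ₀ : Fin r → (Fin p → ℚ) := fun s => ∑ j, c s j • ν (idx s j) with hκ₀def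
  have hκ₀K : ∀ s, κ₀ s ∈ K := by
    intro s
    rw [hKdef, LinearMap.mem_ker]
    simp only [hκ₀def]
    rw [map_sum]
    have : ∀ j : Fin (d+1), C (c s j • ν (idx s j)) = c s j • ρ (idx s j) := by
      intro j
      rw [map_smul, hCν]
    rw [Finset.sum_congr rfl (fun j _ => this j)]
    exact hc0 s
  -- margins
  set ms : Fin r → ℚ := fun s => Finset.univ.inf' hunivp (ν (anc s)) with hmsdef
  have hms : ∀ s, 0 < ms s := by
    intro s
    simp only [hmsdef]
    rw [Finset.lt_inf'_iff]
    intro t _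
    exact hνI (anc s) (hancI s) t
  have hmsle : ∀ s t, ms s ≤ ν (anc s) t := by
    intro s t
    exact Finset.inf'_le _ (Finset.mem_univ t)
  set Zb : ℚ := 1 + ∑ m, ∑ t, |z m t| with hZbdef
  have hZb1 : 1 ≤ Zb := by
    rw [hZbdef]
    have : (0:ℚ) ≤ ∑ m, ∑ t, |z m t| :=
      Finset.sum_nonneg (fun m _ => Finset.sum_nonneg (fun t _ => abs_nonneg _))
    linarith
  have hZbge : ∀ m t, |z m t| ≤ Zb := by
    intro m t
    have h1 : |z m t| ≤ ∑ t', |z m t'| :=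
      Finset.single_le_sum (f := fun t' => |z m t'|) (fun t' _ => abs_nonneg _)
        (Finset.mem_univ t)
    have h2 : (∑ t', |z m t'|) ≤ ∑ m', ∑ t', |z m' t'| :=
      Finset.single_le_sum (f := fun m' => ∑ t', |z m' t'|)
        (fun m' _ => Finset.sum_nonneg (fun t' _ => abs_nonneg _)) (Finset.mem_univ m)
    rw [hZbdef]; linarith
  set δ : Fin r → ℚ := fun s => ms s * |c s (jp s)| / (2 * Zb) with hδdef
  have hδpos : ∀ s, 0 < δ s := by
    intro s
    apply div_pos
    · exact mul_pos (hms s) (abs_pos.mpr (hjp s))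
    · linarith
  obtain ⟨w, hwform, hwspan⟩ := sg_lemma K (le_refl r) z hzK hzspan κ₀ hκ₀K δ hδpos
  have hwK : ∀ s, w s ∈ K := by
    intro s
    obtain ⟨m', t', _, _, h3⟩ := hwform s
    rw [h3]
    exact Submodule.smul_mem K _ (hzK m')
  -- the perturbed coefficient vectors
  set μ : ℕ → Fin p → ℚ :=
    fun i => ν i + ∑ s, (if i = anc s then (c s (jp s))⁻¹ • w s else 0) with hμdef
  have hμa : ∀ s, μ (anc s) = ν (anc s) + (c s (jp s))⁻¹ • w s := by
    intro s
    simp only [hμdef]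
    congr 1
    have hsingle := Finset.sum_eq_single (s := Finset.univ)
      (f := fun s' => if anc s = anc s' then (c s' (jp s'))⁻¹ • w s' else 0) s
      (fun s' _ hs' => if_neg (fun hEq => hs' (hancinj s' s hEq.symm)))
      (fun hs => absurd (Finset.mem_univ s) hs)
    rw [hsingle]
    exact if_pos rfl
  have hμother : ∀ i, (∀ s, i ≠ anc s) → μ i = ν i := by
    intro i hi
    simp only [hμdef]
    have hz0 : (∑ s, (if i = anc s then (c s (jp s))⁻¹ • w s else 0)) = 0 :=
      Finset.sum_eq_zero (fun s _ => if_neg (hi s))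
    rw [hz0, add_zero]
  have hμC : ∀ i, C (μ i) = ρ i := by
    intro i
    simp only [hμdef]
    rw [map_add, map_sum, hCν]
    have : ∀ s : Fin r, C (if i = anc s then (c s (jp s))⁻¹ • w s else 0) = 0 := by
      intro s
      split_ifs with hc
      · rw [map_smul]
        have : C (w s) = 0 := (LinearMap.mem_ker).mp (hwK s)
        rw [this, smul_zero]
      · exact map_zero C
    rw [Finset.sum_congr rfl (fun s _ => this s), Finset.sum_const_zero, add_zero]
  -- bound on perturbations
  have hpertbound : ∀ s t, |((c s (jp s))⁻¹ • w s) t| ≤ ms s / 2 := by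
    intro s t
    obtain ⟨m', t', ht'0, ht'δ, h3⟩ := hwform s
    have habs : |((c s (jp s))⁻¹ • w s) t| = |c s (jp s)|⁻¹ * (t' * |z m' t|) := by
      rw [h3]
      have : ((c s (jp s))⁻¹ • t' • z m') t = (c s (jp s))⁻¹ * (t' * z m' t) := rfl
      rw [this, abs_mul, abs_mul, abs_inv, abs_of_pos ht'0]
    rw [habs]
    have h4 : t' * |z m' t| ≤ δ s * Zb := by
      have := hZbge m' t
      nlinarith [abs_nonneg (z m' t), ht'0.le, ht'δ, hδpos s]
    have h5 : |c s (jp s)|⁻¹ * (t' * |z m' t|) ≤ |c s (jp s)|⁻¹ * (δ s * Zb) := by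
      apply mul_le_mul_of_nonneg_left h4
      exact inv_nonneg.mpr (abs_nonneg _)
    have h6 : |c s (jp s)|⁻¹ * (δ s * Zb) = ms s / 2 := by
      simp only [hδdef]
      have hcne : |c s (jp s)| ≠ 0 := abs_ne_zero.mpr (hjp s)
      have hZne : (2 : ℚ) * Zb ≠ 0 := ne_of_gt (by linarith)
      field_simp
    linarith
  -- positivity of μ
  have hμpos : ∀ i, (∀ t, 0 ≤ μ i t) ∧ (i ∈ I → ∀ t, 0 < μ i t) := by
    intro i
    by_cases hia : ∃ s, i = anc s
    · obtain ⟨s, rfl⟩ := hia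
      have hstrict : ∀ t, 0 < μ (anc s) t := by
        intro t
        rw [hμa s]
        have h1 := hpertbound s t
        have h2 := hmsle s t
        have h3 := hms s
        have h4 : -(ms s / 2) ≤ ((c s (jp s))⁻¹ • w s) t := neg_le_of_abs_le h1
        have : μ (anc s) t = ν (anc s) t + ((c s (jp s))⁻¹ • w s) t := by rw [hμa s]; rfl
        show 0 < ν (anc s) t + ((c s (jp s))⁻¹ • w s) t
        linarith
      exact ⟨fun t => (hstrict t).le, fun _ t => hstrict t⟩
    · push_neg at hia
      rw [hμother i hia]
      exact ⟨hν0 i, fun hiI t => hνI i hiI t⟩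
  -- the span of the μ's is everything
  set T : Submodule ℚ (Fin p → ℚ) := Submodule.span ℚ (Set.range μ) with hTdef
  have hμT : ∀ i, μ i ∈ T := fun i => Submodule.subset_span ⟨i, rfl⟩
  have hκwT : ∀ s, κ₀ s + w s ∈ T := by
    intro s
    have hterm : ∀ j : Fin (d + 1), c s j • μ (idx s j)
        = c s j • ν (idx s j) + (if j = jp s then w s else 0) := by
      intro j
      by_cases hj : j = jp s
      · subst hj
        rw [hμa s, if_pos rfl, smul_add, smul_smul, mul_inv_cancel₀ (hjp s), one_smul]
      · rw [if_neg hj, add_zero]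
        congr 1
        apply hμother
        intro s' hEq
        have := hidxinj s j s' (jp s') hEq
        exact hj (this.1 ▸ this.2)
    have hsum : (∑ j, c s j • μ (idx s j)) = κ₀ s + w s := by
      rw [Finset.sum_congr rfl (fun j _ => hterm j), Finset.sum_add_distrib]
      simp only [hκ₀def]
      congr 1
      rw [Finset.sum_ite_eq' Finset.univ (jp s) (fun _ => w s)]
      rw [if_pos (Finset.mem_univ _)]
    rw [← hsum]
    exact Submodule.sum_mem T (fun j _ => Submodule.smul_mem T _ (hμT (idx s j)))
  have hKT : K ≤ T := by
    refine le_trans hwspan (Submodule.span_le.mpr ?_)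
    rintro _ ⟨s, rfl⟩
    exact hκwT s
  have hTtop : T = ⊤ := by
    rw [eq_top_iff]
    intro v _
    have hmap : Submodule.map C T = Y := by
      rw [hTdef, Submodule.map_span, ← Set.range_comp]
      have : (⇑C ∘ μ) = ρ := funext hμC
      rw [this, hYdef]
    have hCv : C v ∈ Submodule.map C T := by rw [hmap]; exact hCY v
    obtain ⟨u, huT, huv⟩ := hCv
    have hvu : v - u ∈ K := by
      rw [hKdef, LinearMap.mem_ker, map_sub, huv, sub_self]
    have : v = u + (v - u) := by abel
    rw [this]
    exact Submodule.add_mem T huT (hKT hvu)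
  -- the generators
  set γ : Fin p → (ℕ → ℚ) := fun t i => μ i t with hγdef
  have hγindep : LinearIndependent ℚ γ := by
    rw [Fintype.linearIndependent_iff]
    intro g hg t
    set L : (Fin p → ℚ) →ₗ[ℚ] ℚ :=
      { toFun := fun v => ∑ t', g t' * v t'
        map_add' := fun a b => by
          simp only [Pi.add_apply, mul_add]
          exact Finset.sum_add_distrib
        map_smul' := fun m a => by
          simp only [Pi.smul_apply, smul_eq_mul, RingHom.id_apply, Finset.mul_sum]
          exact Finset.sum_congr rfl (fun t' _ => by ring) } with hLdef
    have hLapp : ∀ v, L v = ∑ t', g t' * v t' := fun v => rfl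
    have hLμ : ∀ i, L (μ i) = 0 := by
      intro i
      have hgi := congrFun hg i
      rw [Finset.sum_apply] at hgi
      simp only [Pi.zero_apply] at hgi
      rw [hLapp, ← hgi]
      exact Finset.sum_congr rfl (fun t' _ => rfl)
    have hTspan : Submodule.span ℚ (Set.range μ) = ⊤ := by rw [← hTdef]; exact hTtop
    have hL0 : L = 0 := by
      apply LinearMap.ext_on hTspan
      rintro _ ⟨i, rfl⟩
      exact hLμ i
    have := congrFun (congrArg (fun f => f.toFun) hL0) (Pi.single t 1)
    have hval : L (Pi.single t 1) = g t := by
      rw [hLapp]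
      have hsingle := Finset.sum_eq_single (s := Finset.univ)
        (f := fun t' => g t' * (Pi.single t 1 : Fin p → ℚ) t') t
        (fun t' _ ht' => by
          show g t' * (Pi.single t 1 : Fin p → ℚ) t' = 0
          rw [Pi.single_eq_of_ne ht', mul_zero])
        (fun hs => absurd (Finset.mem_univ t) hs)
      rw [hsingle]
      show g t * (Pi.single t 1 : Fin p → ℚ) t = g t
      rw [Pi.single_eq_same, mul_one]
    have hzero : L (Pi.single t 1) = 0 := by rw [hL0]; rfl
    rw [hval] at hzero
    exact hzero
  have hγinj : Function.Injective γ := hγindep.injective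
  refine ⟨Finset.image γ Finset.univ, ?_, ?_, ?_⟩
  · intro γ' hγ'
    obtain ⟨t, _, rfl⟩ := Finset.mem_image.mp hγ'
    constructor
    · intro i
      exact (hμpos i).1 t
    · intro i hiI
      exact ((hμpos i).2 hiI t).ne'
  · unfold FinsetLinIndep
    have hset : ((Finset.image γ Finset.univ : Finset (ℕ → ℚ)) : Set (ℕ → ℚ)) = Set.range γ := by
      rw [Finset.coe_image, Finset.coe_univ, Set.image_univ]
    rw [hset]
    exact (linearIndepOn_id_range_iff hγinj).mpr hγindep
  · intro i hi
    rw [Finset.mem_Icc] at hi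
    set jf : Fin n := ⟨i - 1, by omega⟩ with hjf
    have hβi : β i = fun i' => ρ i' jf := by
      funext i'
      simp only [hρdef]
      have hji : (jf : ℕ) + 1 = i := by
        show i - 1 + 1 = i
        omega
      rw [hji]
    refine ⟨fun v => ∑ t, if γ t = v then h t jf else 0, ?_, ?_⟩
    · intro v
      exact Finset.sum_nonneg (fun t _ => by split_ifs; exacts [hh0 t jf, le_refl 0])
    · rw [Finset.sum_image (fun t _ t' _ hEq => hγinj hEq)]
      have hcoef : ∀ t : Fin p, (∑ t', if γ t' = γ t then h t' jf else 0) = h t jf := by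
        intro t
        have hsingle := Finset.sum_eq_single (s := Finset.univ)
          (f := fun t' => if γ t' = γ t then h t' jf else 0) t
          (fun t' _ ht' => if_neg (fun hEq => ht' (hγinj hEq)))
          (fun hs => absurd (Finset.mem_univ t) hs)
        rw [hsingle]
        exact if_pos rfl
      have hstep : ∀ t : Fin p, (∑ t', if γ t' = γ t then h t' jf else 0) • γ t
          = h t jf • γ t := by
        intro t; rw [hcoef t]
      refine Eq.trans ?_ (Finset.sum_congr rfl (fun t _ => (hstep t).symm))
      funext i'
      rw [hβi, Finset.sum_apply]
      have hterm : ∀ t : Fin p, (h t jf • γ t) i' = μ i' t * h t jf := by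
        intro t
        have : (h t jf • γ t) i' = h t jf * γ t i' := rfl
        rw [this]
        simp only [hγdef]
        ring
      rw [Finset.sum_congr rfl (fun t _ => hterm t)]
      have : (∑ t, μ i' t * h t jf) = (∑ t, μ i' t • h t) jf := by
        rw [Finset.sum_apply]
        rfl
      rw [this, ← hCapp, hμC]
end

section
/- Let k be a field, G an abelian group, D a submonoid of G, and H a submonoid of D that is full in D. Then k[H] is a direct summand of k[D] as a k[H]-module; that is, the inclusion of monoid algebras k[H] → k[D] admits a k[H]-linear retraction. -/
/-- Let `k` be a field, `G` an abelian group, `D` a submonoid of `G` and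
`H` a submonoid of `D` that is full in `D` (whenever `x, y ∈ H` and `x - y ∈ D`, then
`x - y ∈ H`).  Then `k[H]` is a direct summand of `k[D]` as a `k[H]`-module: the inclusion
`k[H] → k[D]` of monoid algebras (induced by `H ⊆ D`) admits a `k[H]`-linear retraction. -/
theorem monoidAlgebra_direct_summand_of_full
    (k : Type) [Field k] {G : Type} [AddCommGroup G]
    (D H : AddSubmonoid G) (hHD : H ≤ D)
    (hfull : ∀ x y : G, x ∈ H → y ∈ H → x - y ∈ D → x - y ∈ H) :
    ∃ π : AddMonoidAlgebra k D →+ AddMonoidAlgebra k H,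
      (∀ (r : AddMonoidAlgebra k H) (a : AddMonoidAlgebra k D),
        π (AddMonoidAlgebra.mapDomainRingHom k (AddSubmonoid.inclusion hHD) r * a)
          = r * π a) ∧
      (∀ r : AddMonoidAlgebra k H,
        π (AddMonoidAlgebra.mapDomainRingHom k (AddSubmonoid.inclusion hHD) r) = r) := by
  classical
  set ι := AddSubmonoid.inclusion hHD with hι
  let g : D → k →+ AddMonoidAlgebra k H := fun d =>
    if h : (d : G) ∈ H then AddMonoidAlgebra.singleAddHom (⟨(d : G), h⟩ : H) else 0
  have hπ : ∀ d e, ((Finsupp.liftAddHom g).comp AddMonoidAlgebra.coeffAddEquiv.toAddMonoidHom)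
      (AddMonoidAlgebra.single d e) = g d e := fun d e => Finsupp.liftAddHom_apply_single _ _ _
  refine ⟨(Finsupp.liftAddHom g).comp AddMonoidAlgebra.coeffAddEquiv.toAddMonoidHom, ?_, ?_⟩
  · intro r a
    induction r using AddMonoidAlgebra.induction_linear with
    | zero => simp
    | add f f' hf hf' => simp only [map_add, add_mul, hf, hf']
    | single h c =>
      induction a using AddMonoidAlgebra.induction_linear with
      | zero => simp
      | add f f' hf hf' => simp only [map_add, mul_add, hf, hf']
      | single d e =>
        have hmap : (AddMonoidAlgebra.mapDomainRingHom k ι)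
            (AddMonoidAlgebra.single h c : AddMonoidAlgebra k H)
            = AddMonoidAlgebra.single (ι h) c := by
          simp [AddMonoidAlgebra.mapDomainRingHom, AddMonoidAlgebra.mapDomain_single]
        rw [hmap, AddMonoidAlgebra.single_mul_single]; rw [hπ]
        by_cases hd : (d : G) ∈ H
        · have hmem : ((ι h + d : D) : G) ∈ H := H.add_mem h.2 hd
          have : g (ι h + d) = AddMonoidAlgebra.singleAddHom (⟨((ι h + d : D) : G), hmem⟩ : H) :=
            dif_pos hmem
          rw [this]
          have hgd : g d = AddMonoidAlgebra.singleAddHom (⟨(d : G), hd⟩ : H) := dif_pos hd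
          rw [hπ]; rw [hgd]
          show _ = AddMonoidAlgebra.single h c * AddMonoidAlgebra.single (⟨(d : G), hd⟩ : H) e
          rw [AddMonoidAlgebra.single_mul_single]
          rfl
        · have hmem : ¬ ((ι h + d : D) : G) ∈ H := by
            intro hm
            apply hd
            have := hfull _ _ hm h.2 (by
              have : ((ι h + d : D) : G) - (h : G) = (d : G) := by
                show ((h : G) + (d : G)) - (h : G) = (d : G)
                abel
              rw [this]; exact d.2)
            have heq : ((ι h + d : D) : G) - (h : G) = (d : G) := by
              show ((h : G) + (d : G)) - (h : G) = (d : G)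
              abel
            rwa [heq] at this
          have h1 : g (ι h + d) = 0 := dif_neg hmem
          have h2 : g d = 0 := dif_neg hd
          rw [hπ]; rw [h1, h2]
          simp
  · intro r
    induction r using AddMonoidAlgebra.induction_linear with
    | zero => simp
    | add f f' hf hf' => simp only [map_add, hf, hf']
    | single h c =>
      have hmap : (AddMonoidAlgebra.mapDomainRingHom k ι)
          (AddMonoidAlgebra.single h c : AddMonoidAlgebra k H)
          = AddMonoidAlgebra.single (ι h) c := by
        simp [AddMonoidAlgebra.mapDomainRingHom, AddMonoidAlgebra.mapDomain_single]
      rw [hmap]; rw [hπ]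
      have hmem : ((ι h : D) : G) ∈ H := h.2
      have : g (ι h) = AddMonoidAlgebra.singleAddHom (⟨((ι h : D) : G), hmem⟩ : H) := dif_pos hmem
      rw [this]
      rfl
end

section
/- Let k be a field, A = k[X₁,…,X_n] a polynomial ring, and I a monomial ideal of A with pd_A(A/I) = p (the projective dimension of A/I). Then for every integer i > p and every A-module M, the local cohomology module H^i_I(M) vanishes; in other words, the cohomological dimension of I is at most pd_A(A/I). -/
universe u v

/-- `HasPdLE A n M` says the `A`-module `M` has projective dimension at most `n`,
defined by iterated syzygies: `pd M ≤ 0` iff `M` is projective, and `pd M ≤ n + 1` iff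
`M` is a quotient of a projective module with kernel of projective dimension `≤ n`. -/
def HasPdLE (A : Type u) [CommRing A] : ℕ → ModuleCat.{v} A → Prop
  | 0, M => Module.Projective A M
  | n + 1, M => ∃ (P : ModuleCat.{v} A) (g : P →ₗ[A] M),
      Module.Projective A P ∧ Function.Surjective g ∧
        HasPdLE A n (ModuleCat.of A (LinearMap.ker g))

/-- `M` has projective dimension exactly `n`. -/
def HasPdEq (A : Type u) [CommRing A] (n : ℕ) (M : ModuleCat.{v} A) : Prop :=
  HasPdLE A n M ∧ ∀ m : ℕ, m < n → ¬ HasPdLE A m M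

/-- A (pure) monomial of a multivariate polynomial ring: a product of powers of the
variables. -/
def IsPureMvMonomial {k : Type*} [CommSemiring k] {σ : Type*} (p : MvPolynomial σ k) : Prop :=
  ∃ d : σ →₀ ℕ, p = MvPolynomial.monomial d 1

noncomputable section

open CategoryTheory Limits Opposite

namespace SpliceRes

variable {A : Type u} [CommRing A] {N P : ModuleCat.{u} A} (g : P ⟶ N)
  (Q : ProjectiveResolution (ModuleCat.of A (LinearMap.ker g.hom)))

def iota : ModuleCat.of A (LinearMap.ker g.hom) ⟶ P := ModuleCat.ofHom (LinearMap.ker g.hom).subtype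

def XX : ℕ → ModuleCat.{u} A := fun j => match j with
  | 0 => P
  | (j + 1) => Q.complex.X j

def dAux : ∀ j : ℕ, XX g Q (j + 1) ⟶ XX g Q j := fun j => match j with
  | 0 => ((Q.π.f 0 : Q.complex.X 0 ⟶ ModuleCat.of A (LinearMap.ker g.hom)) ≫ iota g :
      Q.complex.X 0 ⟶ P)
  | (j + 1) => Q.complex.d (j + 1) j

lemma dAux_comp (j : ℕ) : dAux g Q (j + 1) ≫ dAux g Q j = 0 := by
  match j with
  | 0 =>
    show Q.complex.d 1 0 ≫ _ ≫ _ = 0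
    exact (Category.assoc _ _ _).symm.trans
      ((congrArg (fun f => f ≫ iota g) Q.complex_d_comp_π_f_zero).trans zero_comp)
  | (j + 1) =>
    show Q.complex.d (j + 2) (j + 1) ≫ Q.complex.d (j + 1) j = 0
    simp

def cx : ChainComplex (ModuleCat.{u} A) ℕ where
  X := XX g Q
  d i j := if h : j + 1 = i then eqToHom (congrArg (XX g Q) h.symm) ≫ dAux g Q j else 0
  shape i j hij := dif_neg (by simpa [ComplexShape.down] using hij)
  d_comp_d' i j k hij hjk := by
    simp only [ComplexShape.down_Rel] at hij hjk
    subst hij; subst hjk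
    show dite _ _ _ ≫ dite _ _ _ = 0
    rw [dif_pos rfl, dif_pos rfl, eqToHom_refl, eqToHom_refl, Category.id_comp,
      Category.id_comp, dAux_comp]

@[simp] lemma cx_d (j : ℕ) : (cx g Q).d (j + 1) j = dAux g Q j := by
  show dite _ _ _ = _
  exact (dif_pos rfl).trans (Category.id_comp _)

lemma iota_g : iota g ≫ g = 0 := by
  apply ModuleCat.hom_ext
  apply LinearMap.ext
  rintro ⟨x, hx⟩
  exact hx

lemma d10_g : (cx g Q).d 1 0 ≫ g = 0 := by
  rw [cx_d]
  show (_ ≫ iota g) ≫ g = 0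
  exact (Category.assoc _ _ _).trans ((congrArg (fun f => Q.π.f 0 ≫ f) (iota_g g)).trans comp_zero)

lemma exact_mk (n : ℕ) :
    (ShortComplex.mk (dAux g Q (n + 1)) (dAux g Q n) (dAux_comp g Q n)).Exact := by
  match n with
  | 0 =>
    rw [ShortComplex.moduleCat_exact_iff]
    intro x hx
    have hx' : (Q.π.f 0 : Q.complex.X 0 ⟶ ModuleCat.of A (LinearMap.ker g.hom)) x = 0 := by
      apply Subtype.ext
      exact hx
    obtain ⟨y, hy⟩ := (ShortComplex.moduleCat_exact_iff _).1 Q.exact₀ x hx'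
    exact ⟨y, hy⟩
  | (n + 1) => exact Q.exact_succ n

end SpliceRes

section

variable {A : Type u} [CommRing A]

open SpliceRes in
def spliceRes {N P : ModuleCat.{u} A} (g : P ⟶ N) (hg : Function.Surjective g)
    (hP : Module.Projective A P)
    (Q : ProjectiveResolution (ModuleCat.of A (LinearMap.ker g.hom))) :
    ProjectiveResolution N where
  complex := cx g Q
  projective := fun n => match n with
    | 0 => (IsProjective.iff_projective _).1 hP
    | (n + 1) => Q.projective n
  π := (ChainComplex.toSingle₀Equiv (cx g Q) N).symm ⟨g, d10_g g Q⟩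
  quasiIso := ⟨fun n => by
    cases n with
    | zero =>
      rw [ChainComplex.quasiIsoAt₀_iff, ShortComplex.quasiIso_iff_of_zeros' _ rfl rfl rfl]
      refine (ShortComplex.exact_and_epi_g_iff_of_iso ?_).2
        ⟨(ShortComplex.moduleCat_exact_iff
            (ShortComplex.mk ((cx g Q).d 1 0) g (d10_g g Q))).2 ?_,
          (ModuleCat.epi_iff_surjective g).2 hg⟩
      · exact ShortComplex.isoMk (Iso.refl _) (Iso.refl _) (Iso.refl _)
          ((Category.id_comp _).trans (Category.comp_id _).symm)
          ((Category.id_comp _).trans (Category.comp_id _).symm)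
      · intro x hx
        have hEpi : Function.Surjective (Q.π.f 0) :=
          (ModuleCat.epi_iff_surjective _).1 inferInstance
        obtain ⟨z, hz⟩ := hEpi ⟨x, hx⟩
        refine ⟨z, ?_⟩
        show ((cx g Q).d 1 0) z = x
        rw [cx_d]
        show (LinearMap.ker g.hom).subtype
          ((Q.π.f 0 : Q.complex.X 0 ⟶ ModuleCat.of A (LinearMap.ker g.hom)) z) = x
        rw [hz]; rfl
    | succ n =>
      rw [quasiIsoAt_iff_exactAt']
      swap
      · apply ChainComplex.exactAt_succ_single_obj
      rw [HomologicalComplex.exactAt_iff' _ (n + 2) (n + 1) n (by simp) (by simp)]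
      refine ShortComplex.exact_of_iso ?_ (exact_mk g Q n)
      exact ShortComplex.isoMk (Iso.refl _) (Iso.refl _) (Iso.refl _)
        ((Category.id_comp _).trans ((cx_d g Q (n + 1)).trans (Category.comp_id _).symm))
        ((Category.id_comp _).trans ((cx_d g Q n).trans (Category.comp_id _).symm))⟩

end

section ExtVanish

variable {A : Type u} [CommRing A]

theorem exists_finite_res :
    ∀ (p : ℕ) (N : ModuleCat.{u} A), HasPdLE A p N →
      ∃ R : ProjectiveResolution N, ∀ j, p < j → IsZero (R.complex.X j) := by
  intro p
  induction p with
  | zero =>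
    intro N h
    have hproj : Module.Projective A N := h
    haveI : Projective N := (IsProjective.iff_projective _).1 hproj
    refine ⟨ProjectiveResolution.self N, fun j hj => ?_⟩
    exact HomologicalComplex.isZero_single_obj_X (ComplexShape.down ℕ) 0 N j (by omega)
  | succ p ih =>
    intro N h
    obtain ⟨P, g, hP, hsurj, hker⟩ := h
    obtain ⟨Q, hQ⟩ := ih (ModuleCat.of A (LinearMap.ker g)) hker
    refine ⟨spliceRes (ModuleCat.ofHom g : P ⟶ N) hsurj hP Q, fun j hj => ?_⟩
    match j, hj with
    | (j + 1), hj => exact hQ j (by omega)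

theorem isZero_Ext_of_hasPdLE {p : ℕ} {N : ModuleCat.{u} A} (h : HasPdLE A p N)
    {i : ℕ} (hi : p < i) (Y : ModuleCat.{u} A) :
    IsZero (((Ext A (ModuleCat.{u} A) i).obj (op N)).obj Y) := by
  obtain ⟨R, hR⟩ := exists_finite_res p N h
  refine IsZero.of_iso ?_ (R.isoExt i Y)
  rw [← HomologicalComplex.exactAt_iff_isZero_homology, HomologicalComplex.exactAt_iff]
  refine ShortComplex.exact_of_isZero_X₂ _ ?_
  rw [IsZero.iff_id_eq_zero]
  ext (x : _ ⟶ _)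
  obtain rfl : x = 0 := (hR i hi).eq_of_src _ _
  rfl

end ExtVanish

section BaseChange

open TensorProduct

variable {B : Type u} [CommRing B]

theorem HasPdLE.of_linearEquiv :
    ∀ (p : ℕ) {M N : ModuleCat.{u} B} (_ : (M : Type u) ≃ₗ[B] N),
      HasPdLE B p M → HasPdLE B p N := by
  intro p
  induction p with
  | zero =>
    intro M N e h
    have : Module.Projective B M := h
    exact Module.Projective.of_equiv e
  | succ p ih =>
    intro M N e h
    obtain ⟨P, g, hP, hsurj, hker⟩ := h
    refine ⟨P, e.toLinearMap.comp g, hP, e.surjective.comp hsurj, ?_⟩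
    have hk : LinearMap.ker (e.toLinearMap.comp g) = LinearMap.ker g := by
      ext x
      simp [LinearMap.mem_ker]
    exact hk ▸ hker

variable {A : Type u} [CommRing A] [Algebra A B] [Module.Flat A B]

theorem HasPdLE.baseChange :
    ∀ (p : ℕ) (M : ModuleCat.{u} A), HasPdLE A p M →
      HasPdLE B p (ModuleCat.of B (B ⊗[A] M)) := by
  intro p
  induction p with
  | zero =>
    intro M h
    have : Module.Projective A M := h
    exact inferInstanceAs (Module.Projective B (B ⊗[A] M))
  | succ p ih =>
    intro M h
    obtain ⟨P, g, hP, hsurj, hker⟩ := h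
    haveI : Module.Projective A P := hP
    refine ⟨ModuleCat.of B (B ⊗[A] P), LinearMap.baseChange B g,
      inferInstanceAs (Module.Projective B (B ⊗[A] P)), ?_, ?_⟩
    · exact LinearMap.lTensor_surjective B hsurj
    · set K := LinearMap.ker g
      have hcomp : g ∘ₗ K.subtype = 0 := by
        apply LinearMap.ext; rintro ⟨x, hx⟩; exact hx
      have hmem : ∀ x : B ⊗[A] K, (LinearMap.baseChange B K.subtype) x ∈
          LinearMap.ker (LinearMap.baseChange B g) := by
        intro x
        rw [LinearMap.mem_ker, ← LinearMap.comp_apply, ← LinearMap.baseChange_comp, hcomp,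
          LinearMap.baseChange_zero, LinearMap.zero_apply]
      have hinj : Function.Injective (LinearMap.lTensor B K.subtype) :=
        Module.Flat.lTensor_preserves_injective_linearMap _ K.injective_subtype
      have hexact : Function.Exact (LinearMap.lTensor B K.subtype) (LinearMap.lTensor B g) :=
        Module.Flat.lTensor_exact B (LinearMap.exact_subtype_ker_map g)
      let f' : B ⊗[A] K →ₗ[B] LinearMap.ker (LinearMap.baseChange B g) :=
        (LinearMap.baseChange B K.subtype).codRestrict
          (LinearMap.ker (LinearMap.baseChange B g)) hmem
      have hbij : Function.Bijective f' := by
        constructor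
        · intro x y hxy
          exact hinj (congrArg Subtype.val hxy)
        · rintro ⟨y, hy⟩
          have hy' : (LinearMap.lTensor B g) y = 0 := hy
          obtain ⟨x, hx⟩ := (hexact y).1 hy'
          exact ⟨x, Subtype.ext hx⟩
      exact HasPdLE.of_linearEquiv p (LinearEquiv.ofBijective f' hbij)
        (ih (ModuleCat.of A K) hker)

lemma smul_one_quot (I : Ideal A) (a : A) : a • (1 : A ⧸ I) = Ideal.Quotient.mk I a := by
  rw [← map_one (Ideal.Quotient.mk I), ← Ideal.Quotient.mk_eq_mk, ← Submodule.Quotient.mk_smul,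
    smul_eq_mul, mul_one, Ideal.Quotient.mk_eq_mk]

lemma smul_one_quot' (J : Ideal B) (b c : B) :
    b • (Ideal.Quotient.mk J c) = Ideal.Quotient.mk J (b * c) := by
  rw [← Ideal.Quotient.mk_eq_mk, ← Submodule.Quotient.mk_smul, smul_eq_mul,
    Ideal.Quotient.mk_eq_mk]

/-- `B ⊗[A] (A ⧸ I) ≃ₗ[B] B ⧸ I.map (algebraMap A B)`. -/
def tensorQuotMapEquiv (I : Ideal A) :
    (B ⊗[A] (A ⧸ I)) ≃ₗ[B] (B ⧸ Ideal.map (algebraMap A B) I) := by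
  set J := Ideal.map (algebraMap A B) I with hJ
  refine LinearEquiv.ofLinear
    (LinearMap.liftBaseChange B (Submodule.liftQ I (Algebra.linearMap A (B ⧸ J)) ?_))
    (Submodule.liftQ J
      { toFun := fun b => b ⊗ₜ[A] (1 : A ⧸ I)
        map_add' := fun x y => TensorProduct.add_tmul x y 1
        map_smul' := fun b x => by simp [TensorProduct.smul_tmul'] } ?_) ?_ ?_
  · intro a ha
    simp only [LinearMap.mem_ker, Algebra.linearMap_apply]
    show Ideal.Quotient.mk J (algebraMap A B a) = 0
    rw [Ideal.Quotient.eq_zero_iff_mem]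
    exact Ideal.mem_map_of_mem _ ha
  · rw [hJ, Ideal.map_le_iff_le_comap]
    intro a ha
    simp only [Ideal.mem_comap, LinearMap.mem_ker, LinearMap.coe_mk, AddHom.coe_mk]
    show (algebraMap A B a) ⊗ₜ[A] (1 : A ⧸ I) = 0
    rw [Algebra.algebraMap_eq_smul_one, TensorProduct.smul_tmul, smul_one_quot,
      Ideal.Quotient.eq_zero_iff_mem.2 ha, TensorProduct.tmul_zero]
  · apply Submodule.linearMap_qext
    apply LinearMap.ext
    intro b
    simp only [LinearMap.comp_apply, Submodule.mkQ_apply, Submodule.liftQ_apply,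
      LinearMap.coe_mk, AddHom.coe_mk, LinearMap.liftBaseChange_tmul, LinearMap.id_apply]
    rw [show (1 : A ⧸ I) = Ideal.Quotient.mk I 1 from rfl]
    show b • (Ideal.Quotient.mk J (algebraMap A B 1)) = Ideal.Quotient.mk J b
    rw [map_one, smul_one_quot', mul_one]
  · apply LinearMap.ext
    intro z
    induction z using TensorProduct.induction_on with
    | zero => simp
    | add x y hx hy => simp only [map_add, hx, hy]
    | tmul b x =>
      obtain ⟨a, rfl⟩ := Ideal.Quotient.mk_surjective x
      simp only [LinearMap.comp_apply, LinearMap.liftBaseChange_tmul, LinearMap.id_apply]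
      rw [show (Submodule.liftQ I (Algebra.linearMap A (B ⧸ J)) _) (Ideal.Quotient.mk I a)
          = Ideal.Quotient.mk J (algebraMap A B a) from rfl,
        smul_one_quot' J b (algebraMap A B a)]
      show (Submodule.liftQ J _ _) (Ideal.Quotient.mk J (b * algebraMap A B a))
          = b ⊗ₜ[A] (Ideal.Quotient.mk I a)
      rw [show (Submodule.liftQ J
          { toFun := fun b => b ⊗ₜ[A] (1 : A ⧸ I)
            map_add' := fun x y => TensorProduct.add_tmul x y 1
            map_smul' := fun b x => by simp [TensorProduct.smul_tmul'] } _)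
          (Ideal.Quotient.mk J (b * algebraMap A B a))
          = (b * algebraMap A B a) ⊗ₜ[A] (1 : A ⧸ I) from rfl]
      have e1 : (b * algebraMap A B a) ⊗ₜ[A] (1 : A ⧸ I)
          = b • ((algebraMap A B a) ⊗ₜ[A] (1 : A ⧸ I)) := by
        rw [TensorProduct.smul_tmul', smul_eq_mul]
      have e2 : (algebraMap A B a) ⊗ₜ[A] (1 : A ⧸ I)
          = (1 : B) ⊗ₜ[A] (Ideal.Quotient.mk I a) := by
        rw [Algebra.algebraMap_eq_smul_one, TensorProduct.smul_tmul, smul_one_quot]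
      have e3 : b • ((1 : B) ⊗ₜ[A] (Ideal.Quotient.mk I a))
          = b ⊗ₜ[A] (Ideal.Quotient.mk I a) := by
        rw [TensorProduct.smul_tmul', smul_eq_mul, mul_one]
      rw [e1, e2, e3]

theorem hasPdLE_quotient_map {p : ℕ} {I : Ideal A}
    (h : HasPdLE A p (ModuleCat.of A (A ⧸ I))) :
    HasPdLE B p (ModuleCat.of B (B ⧸ Ideal.map (algebraMap A B) I)) :=
  HasPdLE.of_linearEquiv p (tensorQuotMapEquiv I)
    (HasPdLE.baseChange p (ModuleCat.of A (A ⧸ I)) h)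

end BaseChange
open MvPolynomial

namespace ExpandFree

variable {k : Type} [Field k] {n : ℕ}

local notation "A" => MvPolynomial (Fin n) k

lemma nat_not_dvd {t d a b : ℕ} (ha : a < t) (hb : b < t) (hne : a ≠ b)
    (hle : a ≤ t * d + b) : ¬ t ∣ (t * d + b - a) := by
  intro hdvd
  rcases le_or_gt a b with h | h
  · have e : t * d + b - a = t * d + (b - a) := by omega
    rw [e, Nat.dvd_add_right ⟨d, rfl⟩] at hdvd
    have := Nat.le_of_dvd (by omega) hdvd
    omega
  · obtain ⟨d', rfl⟩ : ∃ d', d = d' + 1 := by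
      cases d with
      | zero => exfalso; omega
      | succ d' => exact ⟨d', rfl⟩
    have e : t * (d' + 1) + b - a = t * d' + (t + b - a) := by
      rw [Nat.mul_succ]; omega
    rw [e, Nat.dvd_add_right ⟨d', rfl⟩] at hdvd
    have := Nat.le_of_dvd (by omega) hdvd
    omega

lemma smul_inj {t : ℕ} (ht : 0 < t) {d e : Fin n →₀ ℕ} (h : t • d = t • e) : d = e := by
  ext i
  have := congrArg (fun f : Fin n →₀ ℕ => f i) h
  simp only [Finsupp.smul_apply, smul_eq_mul] at this
  exact Nat.eq_of_mul_eq_mul_left ht this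

lemma expand_monomial_smul {t : ℕ} (ht : 0 < t) (d : Fin n →₀ ℕ) (c : k) :
    expand t (monomial d c) = monomial (t • d) (c : k) := by
  rw [expand_monomial, monomial_eq, Finsupp.prod, Finsupp.support_smul_eq ht.ne']

lemma coeff_expand_smul {t : ℕ} (ht : 0 < t) (d : Fin n →₀ ℕ) (p : A) :
    coeff (t • d) (expand t p) = coeff d p := by
  conv_lhs => rw [p.as_sum, map_sum]
  rw [coeff_sum]
  have : ∀ v ∈ p.support, coeff (t • d) (expand t (monomial v (coeff v p)))
      = if v = d then coeff v p else 0 := by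
    intro v _
    rw [expand_monomial_smul ht, coeff_monomial]
    congr 1
    simp only [eq_iff_iff]
    constructor
    · intro h; exact smul_inj ht h
    · intro h; rw [h]
  rw [Finset.sum_congr rfl this, Finset.sum_ite_eq' p.support d (fun v => coeff v p)]
  split_ifs with h
  · rfl
  · exact (MvPolynomial.notMem_support_iff.1 h).symm

lemma coeff_expand_of_not_dvd {t : ℕ} (ht : 0 < t) (p : A) {e : Fin n →₀ ℕ}
    (h : ¬ ∀ i, t ∣ e i) :
    coeff e (expand t p) = 0 := by
  conv_lhs => rw [p.as_sum, map_sum]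
  rw [coeff_sum]
  apply Finset.sum_eq_zero
  intro v _
  rw [expand_monomial_smul ht, coeff_monomial, if_neg]
  intro hcon
  apply h
  intro i
  rw [← hcon]
  exact ⟨v i, by simp [Finsupp.smul_apply, smul_eq_mul]⟩

/-- basis index -/
def BIdx (n t : ℕ) : Type := { r : Fin n →₀ ℕ // ∀ i, r i < t }

end ExpandFree

/-- `MvPolynomial (Fin n) k` viewed as an algebra over itself via `expand t`. -/
def ExpandedPoly (k : Type) [Field k] (n t : ℕ) : Type := MvPolynomial (Fin n) k

namespace ExpandedPoly

variable {k : Type} [Field k] {n t : ℕ}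

noncomputable instance : CommRing (ExpandedPoly k n t) :=
  inferInstanceAs (CommRing (MvPolynomial (Fin n) k))

noncomputable instance : Algebra (MvPolynomial (Fin n) k) (ExpandedPoly k n t) :=
  RingHom.toAlgebra
    (((MvPolynomial.expand t : MvPolynomial (Fin n) k →ₐ[k] MvPolynomial (Fin n) k).toRingHom :
      MvPolynomial (Fin n) k →+* MvPolynomial (Fin n) k) :
      MvPolynomial (Fin n) k →+* ExpandedPoly k n t)

lemma algebraMap_apply (a : MvPolynomial (Fin n) k) :
    algebraMap (MvPolynomial (Fin n) k) (ExpandedPoly k n t) a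
      = (expand t a : MvPolynomial (Fin n) k) := rfl

lemma smul_def (a : MvPolynomial (Fin n) k) (x : ExpandedPoly k n t) :
    a • x = (show ExpandedPoly k n t from expand t a) * x :=
  Algebra.smul_def a x

open ExpandFree

/-- the basis vectors: small monomials -/
noncomputable def bvec (r : BIdx n t) : ExpandedPoly k n t :=
  (monomial r.1 (1 : k) : MvPolynomial (Fin n) k)

theorem bvec_li (ht : 0 < t) :
    LinearIndependent (MvPolynomial (Fin n) k) (bvec (k := k) (n := n) (t := t)) := by
  rw [linearIndependent_iff]
  intro l hl
  rw [Finsupp.linearCombination_apply, Finsupp.sum] at hl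
  have hl' : ∑ r ∈ l.support,
      ((expand t (l r) * monomial r.1 (1 : k) : MvPolynomial (Fin n) k) :
        ExpandedPoly k n t) = 0 := by
    refine Eq.trans ?_ hl
    apply Finset.sum_congr rfl
    intro r _
    refine Eq.trans ?_ (smul_def _ _).symm
    rfl
  apply Finsupp.ext
  intro r₀
  show l r₀ = 0
  apply MvPolynomial.ext
  intro d
  set m : Fin n →₀ ℕ := t • d + r₀.1 with hm
  have hmi : ∀ i, m i = t * d i + r₀.1 i := by
    intro i
    rw [hm, Finsupp.add_apply, Finsupp.smul_apply, smul_eq_mul]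
  have h3 := congrArg (coeff m) hl'
  rw [coeff_sum, MvPolynomial.coeff_zero] at h3
  have hval : ∀ r ∈ l.support, r ≠ r₀ →
      coeff m (expand t (l r) * monomial r.1 (1 : k)) = 0 := by
    intro r _ hne
    by_cases hle : r.1 ≤ m
    · rw [coeff_mul_monomial', if_pos hle]
      have hnd : ¬ ∀ i, t ∣ (m - r.1) i := by
        intro hall
        obtain ⟨i₀, hi₀⟩ := Finsupp.ne_iff.1 (fun hcon => hne (Subtype.ext hcon))
        have h1 := hall i₀
        rw [Finsupp.tsub_apply, hmi i₀] at h1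
        exact nat_not_dvd (r.2 i₀) (r₀.2 i₀) hi₀ (by rw [← hmi i₀]; exact Finsupp.le_def.1 hle i₀) h1
      rw [coeff_expand_of_not_dvd ht _ hnd, zero_mul]
    · rw [coeff_mul_monomial', if_neg hle]
  have hr₀le : r₀.1 ≤ m := by
    rw [Finsupp.le_def]
    intro i
    rw [hmi i]
    exact Nat.le_add_left _ _
  have hsub : m - r₀.1 = t • d := by
    ext i
    rw [Finsupp.tsub_apply, hmi i, Finsupp.smul_apply, smul_eq_mul]
    omega
  have hr₀ : coeff m (expand t (l r₀) * monomial r₀.1 (1 : k)) = coeff d (l r₀) := by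
    rw [coeff_mul_monomial', if_pos hr₀le, hsub, coeff_expand_smul ht, mul_one]
  rw [Finset.sum_eq_single r₀ hval (fun hns => by
      rw [Finsupp.notMem_support_iff.1 hns, map_zero, zero_mul, MvPolynomial.coeff_zero]),
    hr₀] at h3
  rw [MvPolynomial.coeff_zero]
  exact h3

theorem bvec_span (ht : 0 < t) :
    ⊤ ≤ Submodule.span (MvPolynomial (Fin n) k)
      (Set.range (bvec (k := k) (n := n) (t := t))) := by
  intro x _
  have hx : x = ∑ v ∈ (x : MvPolynomial (Fin n) k).support,
      ((monomial v (coeff v (x : MvPolynomial (Fin n) k)) : MvPolynomial (Fin n) k) :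
        ExpandedPoly k n t) := as_sum (x : MvPolynomial (Fin n) k)
  rw [hx]
  apply Submodule.sum_mem
  intro v _
  set c := coeff v (x : MvPolynomial (Fin n) k)
  set q : Fin n →₀ ℕ := v.mapRange (· / t) (Nat.zero_div t) with hq
  set r : Fin n →₀ ℕ := v.mapRange (· % t) (Nat.zero_mod t) with hr
  have hrb : ∀ i, r i < t := by
    intro i
    rw [hr, Finsupp.mapRange_apply]
    exact Nat.mod_lt _ ht
  have key : ((monomial v c : MvPolynomial (Fin n) k) : ExpandedPoly k n t)
      = (monomial q c : MvPolynomial (Fin n) k) • bvec (⟨r, hrb⟩ : BIdx n t) := by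
    refine Eq.trans ?_ (smul_def _ _).symm
    show (monomial v c : MvPolynomial (Fin n) k)
      = ((expand t (monomial q c) * monomial r (1 : k) : MvPolynomial (Fin n) k))
    have hqr : t • q + r = v := by
      ext i
      simp only [Finsupp.add_apply, Finsupp.smul_apply, smul_eq_mul, hq, hr,
        Finsupp.mapRange_apply]
      exact Nat.div_add_mod (v i) t
    rw [expand_monomial_smul ht, monomial_mul, mul_one, hqr]
  rw [key]
  exact Submodule.smul_mem _ _ (Submodule.subset_span ⟨_, rfl⟩)

theorem free (ht : 0 < t) : Module.Free (MvPolynomial (Fin n) k) (ExpandedPoly k n t) :=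
  Module.Free.of_basis (Module.Basis.mk (bvec_li ht) (bvec_span ht))

end ExpandedPoly

section PDExpand

variable {k : Type} [Field k] {n : ℕ}

theorem hasPdLE_quotient_map_expand {p : ℕ} (I : Ideal (MvPolynomial (Fin n) k))
    (t : ℕ) (ht : 0 < t)
    (h : HasPdLE (MvPolynomial (Fin n) k) p
      (ModuleCat.of (MvPolynomial (Fin n) k) (MvPolynomial (Fin n) k ⧸ I))) :
    HasPdLE (MvPolynomial (Fin n) k) p
      (ModuleCat.of (MvPolynomial (Fin n) k)
        (MvPolynomial (Fin n) k ⧸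
          Ideal.map ((MvPolynomial.expand t :
              MvPolynomial (Fin n) k →ₐ[k] MvPolynomial (Fin n) k) :
            MvPolynomial (Fin n) k →+* MvPolynomial (Fin n) k) I)) := by
  haveI := ExpandedPoly.free (k := k) (n := n) (t := t) ht
  haveI : Module.Flat (MvPolynomial (Fin n) k) (ExpandedPoly k n t) := inferInstance
  exact hasPdLE_quotient_map (B := ExpandedPoly k n t) h

end PDExpand

section Cofinal

open MvPolynomial

variable {k : Type} [Field k] {n : ℕ}

lemma exists_finset_monomial_gens (I : Ideal (MvPolynomial (Fin n) k))
    (hm : ∃ S : Set (MvPolynomial (Fin n) k),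
      (∀ q ∈ S, IsPureMvMonomial q) ∧ I = Ideal.span S) :
    ∃ T : Finset (MvPolynomial (Fin n) k),
      (∀ q ∈ T, IsPureMvMonomial q) ∧ I = Ideal.span (↑T : Set (MvPolynomial (Fin n) k)) := by
  classical
  obtain ⟨S, hS, rfl⟩ := hm
  have hfg : (Ideal.span S).FG := IsNoetherian.noetherian _
  obtain ⟨G, hG⟩ := hfg
  have hmem : ∀ g ∈ G, ∃ Tg : Finset (MvPolynomial (Fin n) k),
      (↑Tg : Set _) ⊆ S ∧ g ∈ Ideal.span (↑Tg : Set _) := by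
    intro g hg
    have : g ∈ Ideal.span S := by
      rw [← hG]
      exact Ideal.subset_span hg
    exact Submodule.mem_span_finite_of_mem_span this
  choose! Tg hTg1 hTg2 using hmem
  refine ⟨G.biUnion Tg, ?_, ?_⟩
  · intro q hq
    rw [Finset.mem_biUnion] at hq
    obtain ⟨g, hg, hq⟩ := hq
    exact hS q (hTg1 g hg hq)
  · apply le_antisymm
    · rw [← hG]
      rw [Ideal.span_le]
      intro g hg
      have : (g : MvPolynomial (Fin n) k) ∈ Ideal.span (↑(Tg g) : Set _) := hTg2 g hg
      refine Ideal.span_mono ?_ this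
      intro x hx
      simp only [Finset.coe_biUnion, Set.mem_iUnion, Finset.mem_coe]
      exact ⟨g, hg, hx⟩
    · rw [Ideal.span_le]
      intro x hx
      simp only [Finset.coe_biUnion, Set.mem_iUnion, Finset.mem_coe] at hx
      obtain ⟨g, hg, hx⟩ := hx
      exact Ideal.subset_span (hTg1 g hg hx)

lemma map_expand_le_pow (I : Ideal (MvPolynomial (Fin n) k))
    {S : Set (MvPolynomial (Fin n) k)} (hS : ∀ q ∈ S, IsPureMvMonomial q)
    (hI : I = Ideal.span S) {t : ℕ} (ht : 0 < t) :
    Ideal.map ((MvPolynomial.expand t :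
        MvPolynomial (Fin n) k →ₐ[k] MvPolynomial (Fin n) k) :
      MvPolynomial (Fin n) k →+* MvPolynomial (Fin n) k) I ≤ I ^ t := by
  conv_lhs => rw [hI]
  rw [Ideal.map_span, Ideal.span_le]
  rintro x ⟨q, hq, rfl⟩
  obtain ⟨d, rfl⟩ := hS q hq
  have : (expand t) ((monomial d) (1 : k)) = ((monomial d) (1 : k)) ^ t := by
    rw [ExpandFree.expand_monomial_smul ht, monomial_pow, one_pow]
  show (expand t) ((monomial d) (1 : k)) ∈ I ^ t
  rw [this]
  exact Ideal.pow_mem_pow (hI ▸ Ideal.subset_span hq) t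

lemma span_pow_le_span_image_pow (t : ℕ) (T : Finset (MvPolynomial (Fin n) k)) :
    (Ideal.span (↑T : Set _)) ^ (T.card * t + 1) ≤
      Ideal.span ((fun m => m ^ t) '' (↑T : Set (MvPolynomial (Fin n) k))) := by
  classical
  induction T using Finset.induction_on with
  | empty =>
    simp only [Finset.coe_empty, Ideal.span_empty, Finset.card_empty, Nat.zero_mul,
      zero_add, pow_one, Set.image_empty]
    exact bot_le
  | @insert a T' ha ih =>
    have hcard : (insert a T').card * t + 1 = t + (T'.card * t + 1) := by
      rw [Finset.card_insert_of_notMem ha]; ring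
    rw [hcard, Finset.coe_insert, Set.insert_eq, Ideal.span_union]
    refine le_trans Ideal.sup_pow_add_le_pow_sup_pow (sup_le ?_ ?_)
    · rw [Ideal.span_singleton_pow]
      apply Ideal.span_mono
      intro x hx
      rw [Set.mem_singleton_iff] at hx
      subst hx
      exact ⟨a, by simp, rfl⟩
    · refine le_trans ih (Ideal.span_mono ?_)
      apply Set.image_mono
      exact Set.subset_insert _ _

lemma pow_le_map_expand (I : Ideal (MvPolynomial (Fin n) k))
    {T : Finset (MvPolynomial (Fin n) k)} (hT : ∀ q ∈ T, IsPureMvMonomial q)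
    (hI : I = Ideal.span (↑T : Set _)) {t : ℕ} (ht : 0 < t) :
    I ^ (T.card * t + 1) ≤
      Ideal.map ((MvPolynomial.expand t :
          MvPolynomial (Fin n) k →ₐ[k] MvPolynomial (Fin n) k) :
        MvPolynomial (Fin n) k →+* MvPolynomial (Fin n) k) I := by
  conv_lhs => rw [hI]
  refine le_trans (span_pow_le_span_image_pow t T) ?_
  rw [Ideal.span_le]
  rintro x ⟨m, hm, rfl⟩
  obtain ⟨d, rfl⟩ := hT m hm
  have : ((monomial d) (1 : k)) ^ t = (expand t) ((monomial d) (1 : k)) := by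
    rw [ExpandFree.expand_monomial_smul ht, monomial_pow, one_pow]
  show ((monomial d) (1 : k)) ^ t ∈ _
  rw [this]
  exact Ideal.mem_map_of_mem _ (hI ▸ Ideal.subset_span hm)

end Cofinal

section Main

open CategoryTheory Limits Opposite localCohomology

lemma isZero_colimit_of_map_zero {J : Type*} [Category J] {C : Type*} [Category C]
    [HasZeroMorphisms C] (G : J ⥤ C) [HasColimit G]
    (h : ∀ j : J, ∃ (j' : J) (f : j ⟶ j'), G.map f = 0) : IsZero (colimit G) := by
  rw [IsZero.iff_id_eq_zero]
  apply colimit.hom_ext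
  intro j
  obtain ⟨j', f, hf⟩ := h j
  rw [Category.comp_id, comp_zero, ← colimit.w G f, hf, zero_comp]

/-- Let `k` be a field, `A = k[X₁, …, X_n]`, and `I` a monomial ideal of `A`
with `pd_A(A/I) = p`.  Then for every `i > p` and every `A`-module `M` the local cohomology
module `H^i_I(M) = lim→_t Ext^i_A(A/Iᵗ, M)` vanishes; i.e. the cohomological dimension of `I`
is at most `pd_A(A/I)`. -/
theorem localCohomology_subsingleton_of_pd_lt (k : Type) [Field k] {n : ℕ}
    (I : Ideal (MvPolynomial (Fin n) k))
    (hmonomial : ∃ S : Set (MvPolynomial (Fin n) k),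
      (∀ q ∈ S, IsPureMvMonomial q) ∧ I = Ideal.span S)
    (p : ℕ)
    (hpd : HasPdEq (MvPolynomial (Fin n) k) p
      (ModuleCat.of (MvPolynomial (Fin n) k) (MvPolynomial (Fin n) k ⧸ I)))
    (i : ℕ) (hi : p < i) (M : ModuleCat (MvPolynomial (Fin n) k)) :
    Subsingleton ((localCohomology I i).obj M) := by
  obtain ⟨T, hTmono, hIT⟩ := exists_finset_monomial_gens I hmonomial
  haveI := hasColimitDiagram (idealPowersDiagram I) i
  have hz : IsZero (colimit (diagram (idealPowersDiagram I) i ⋙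
      (evaluation _ _).obj M)) := by
    apply isZero_colimit_of_map_zero
    intro j
    obtain ⟨j⟩ := j
    obtain ⟨t⟩ := j
    refine ⟨op (op (T.card * (t + 1) + 1 + t)),
      (homOfLE (show t ≤ T.card * (t + 1) + 1 + t by omega)).op.op, ?_⟩
    set t' := t + 1 with ht'
    set s := T.card * t' + 1 + t with hs
    set Jm := Ideal.map ((MvPolynomial.expand t' :
        MvPolynomial (Fin n) k →ₐ[k] MvPolynomial (Fin n) k) :
      MvPolynomial (Fin n) k →+* MvPolynomial (Fin n) k) I with hJm
    have hle1 : Jm ≤ I ^ t :=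
      le_trans (map_expand_le_pow I hTmono hIT (Nat.succ_pos t))
        (Ideal.pow_le_pow_right (by omega))
    have hle2 : I ^ s ≤ Jm :=
      le_trans (Ideal.pow_le_pow_right (show T.card * t' + 1 ≤ s by omega))
        (pow_le_map_expand I hTmono hIT (Nat.succ_pos t))
    -- the three quotient maps
    set q : ModuleCat.of (MvPolynomial (Fin n) k) (MvPolynomial (Fin n) k ⧸ I ^ s) ⟶
        ModuleCat.of (MvPolynomial (Fin n) k) (MvPolynomial (Fin n) k ⧸ I ^ t) :=
      (ringModIdeals (idealPowersDiagram I)).map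
        ((homOfLE (show t ≤ s by omega)).op) with hq
    set q₂ : ModuleCat.of (MvPolynomial (Fin n) k) (MvPolynomial (Fin n) k ⧸ I ^ s) ⟶
        ModuleCat.of (MvPolynomial (Fin n) k) (MvPolynomial (Fin n) k ⧸ Jm) :=
      ModuleCat.ofHom (Submodule.mapQ _ _ LinearMap.id
        (by rw [Submodule.comap_id]; exact hle2)) with hq₂
    set q₁ : ModuleCat.of (MvPolynomial (Fin n) k) (MvPolynomial (Fin n) k ⧸ Jm) ⟶
        ModuleCat.of (MvPolynomial (Fin n) k) (MvPolynomial (Fin n) k ⧸ I ^ t) :=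
      ModuleCat.ofHom (Submodule.mapQ _ _ LinearMap.id
        (by rw [Submodule.comap_id]; exact hle1)) with hq₁
    have hfact : q = q₂ ≫ q₁ := by
      apply ModuleCat.hom_ext
      apply Submodule.linearMap_qext
      apply LinearMap.ext
      intro x
      rfl
    have hZ : IsZero (((Ext (MvPolynomial (Fin n) k) (ModuleCat (MvPolynomial (Fin n) k)) i).obj
        (op (ModuleCat.of (MvPolynomial (Fin n) k) (MvPolynomial (Fin n) k ⧸ Jm)))).obj M) :=
      isZero_Ext_of_hasPdLE
        (hasPdLE_quotient_map_expand I t' (Nat.succ_pos t) hpd.1) hi M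
    show ((Ext (MvPolynomial (Fin n) k) (ModuleCat (MvPolynomial (Fin n) k)) i).map q.op).app M
      = 0
    rw [hfact]
    have : (q₂ ≫ q₁).op = q₁.op ≫ q₂.op := rfl
    rw [this, Functor.map_comp]
    show (((Ext (MvPolynomial (Fin n) k) (ModuleCat (MvPolynomial (Fin n) k)) i).map q₁.op).app M)
      ≫ (((Ext (MvPolynomial (Fin n) k) (ModuleCat (MvPolynomial (Fin n) k)) i).map q₂.op).app M)
      = 0
    rw [hZ.eq_of_tgt (((Ext (MvPolynomial (Fin n) k)
      (ModuleCat (MvPolynomial (Fin n) k)) i).map q₁.op).app M) 0, zero_comp]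
  have hzM : IsZero ((localCohomology I i).obj M) :=
    IsZero.of_iso hz
      (colimitObjIsoColimitCompEvaluation (diagram (idealPowersDiagram I) i) M)
  have h0 : 𝟙 ((localCohomology I i).obj M) = 0 := (IsZero.iff_id_eq_zero _).1 hzM
  constructor
  intro a b
  have ha : a = (𝟙 ((localCohomology I i).obj M) : _ ⟶ _) a := rfl
  have hb : b = (𝟙 ((localCohomology I i).obj M) : _ ⟶ _) b := rfl
  rw [ha, hb, h0]
  rfl

end Main

end
end

section
/- Let C be a normal submonoid of ℤⁿ. Then there exist a nonnegative integer k and a positive normal submonoid C′ of ℤⁿ such that C is isomorphic, as an additive monoid, to the direct sum ℤ^k ⊕ C′. -/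
/-- A submonoid `C` of an abelian group is *normal* if whenever `a, b ∈ C` and some positive
integer multiple of `a - b` lies in `C`, then `a - b ∈ C`. -/
def IsNormalAddSubmonoid {G : Type*} [AddCommGroup G] (H : AddSubmonoid G) : Prop :=
  ∀ a b : G, a ∈ H → b ∈ H → (∃ m : ℕ, 0 < m ∧ m • (a - b) ∈ H) → a - b ∈ H

/-- A submonoid is *positive* if it contains no nonzero invertible element. -/
def IsPositiveAddSubmonoid {G : Type*} [AddCommGroup G] (H : AddSubmonoid G) : Prop :=
  ∀ a : G, a ∈ H → -a ∈ H → a = 0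

variable {n : ℕ}

/-- The group of differences of `C`, as a `ℤ`-submodule. -/
def grpOf (C : AddSubmonoid (Fin n → ℤ)) : Submodule ℤ (Fin n → ℤ) where
  carrier := {x | ∃ a ∈ C, ∃ b ∈ C, x = a - b}
  zero_mem' := ⟨0, C.zero_mem, 0, C.zero_mem, by simp⟩
  add_mem' := by
    rintro x y ⟨a, ha, b, hb, rfl⟩ ⟨a', ha', b', hb', rfl⟩
    exact ⟨a + a', C.add_mem ha ha', b + b', C.add_mem hb hb', by abel⟩
  smul_mem' := by
    rintro z x ⟨a, ha, b, hb, rfl⟩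
    rcases le_or_gt 0 z with h | h
    · lift z to ℕ using h
      refine ⟨z • a, AddSubmonoid.nsmul_mem C ha z, z • b, AddSubmonoid.nsmul_mem C hb z, ?_⟩
      simp [smul_sub, natCast_zsmul]
    · obtain ⟨m, rfl⟩ : ∃ m : ℕ, z = -(m : ℤ) := ⟨z.natAbs, by omega⟩
      refine ⟨m • b, AddSubmonoid.nsmul_mem C hb m, m • a, AddSubmonoid.nsmul_mem C ha m, ?_⟩
      simp [smul_sub, natCast_zsmul]
      abel

/-- The units of `C`, as a `ℤ`-submodule. -/
def unitsOf (C : AddSubmonoid (Fin n → ℤ)) : Submodule ℤ (Fin n → ℤ) where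
  carrier := {x | x ∈ C ∧ -x ∈ C}
  zero_mem' := ⟨C.zero_mem, by simpa using C.zero_mem⟩
  add_mem' := by
    rintro x y ⟨hx, hx'⟩ ⟨hy, hy'⟩
    exact ⟨C.add_mem hx hy, by rw [neg_add]; exact C.add_mem hx' hy'⟩
  smul_mem' := by
    rintro z x ⟨hx, hx'⟩
    rcases le_or_gt 0 z with h | h
    · lift z to ℕ using h
      refine ⟨by simpa [natCast_zsmul] using AddSubmonoid.nsmul_mem C hx z, ?_⟩
      have := AddSubmonoid.nsmul_mem C hx' z
      simpa [natCast_zsmul, smul_neg] using this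
    · obtain ⟨m, rfl⟩ : ∃ m : ℕ, z = -(m : ℤ) := ⟨z.natAbs, by omega⟩
      constructor
      · have := AddSubmonoid.nsmul_mem C hx' m
        simpa [natCast_zsmul, smul_neg] using this
      · have := AddSubmonoid.nsmul_mem C hx m
        simpa [natCast_zsmul, smul_neg] using this

lemma mem_grpOf {C : AddSubmonoid (Fin n → ℤ)} {c : Fin n → ℤ} (hc : c ∈ C) : c ∈ grpOf C :=
  ⟨c, hc, 0, C.zero_mem, by simp⟩


/-- Let `C` be a normal submonoid of `ℤⁿ`.  Then there are `k ∈ ℕ` and a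
positive normal submonoid `C′` of `ℤⁿ` such that `C ≅ ℤ^k ⊕ C′` as additive monoids. -/
theorem normal_submonoid_splits {n : ℕ} (C : AddSubmonoid (Fin n → ℤ))
    (hC : IsNormalAddSubmonoid C) :
    ∃ (k : ℕ) (C' : AddSubmonoid (Fin n → ℤ)),
      IsNormalAddSubmonoid C' ∧ IsPositiveAddSubmonoid C' ∧
      Nonempty (C ≃+ ((Fin k → ℤ) × C')) := by
  set G := grpOf C with hG
  set UM := unitsOf C with hUM
  set U' : Submodule ℤ G := UM.comap G.subtype with hU'
  -- purity: if m • x ∈ UM with x ∈ G, m > 0, then x ∈ UM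
  have pure : ∀ (x : Fin n → ℤ), x ∈ G → ∀ m : ℕ, 0 < m → m • x ∈ UM → x ∈ UM := by
    rintro x ⟨a, ha, b, hb, rfl⟩ m hm ⟨h1, h2⟩
    refine ⟨hC a b ha hb ⟨m, hm, h1⟩, ?_⟩
    have h3 := hC b a hb ha ⟨m, hm, by rw [show b - a = -(a-b) by abel, smul_neg]; exact h2⟩
    rw [neg_sub]; exact h3
  haveI : NoZeroSMulDivisors ℤ (G ⧸ U') := by
    constructor
    rintro c x hcx
    by_contra hcon
    push_neg at hcon
    obtain ⟨hc, hx⟩ := hcon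
    obtain ⟨g, rfl⟩ := Submodule.Quotient.mk_surjective U' x
    apply hx
    rw [Submodule.Quotient.mk_eq_zero]
    have hmem : c • g ∈ U' := by
      rwa [← Submodule.Quotient.mk_eq_zero, Submodule.Quotient.mk_smul]
    have habs : (c.natAbs : ℤ) • g ∈ U' := by
      rcases Int.natAbs_eq c with h | h
      · rwa [← h]
      · rw [show ((c.natAbs : ℤ)) = -c by omega, neg_smul]
        exact U'.neg_mem hmem
    have : c.natAbs • (g : Fin n → ℤ) ∈ UM := by
      have := habs
      simp only [hU', Submodule.mem_comap] at this
      simpa [natCast_zsmul] using this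
    have := pure (g : Fin n → ℤ) g.2 c.natAbs (by omega) this
    simpa [hU', Submodule.mem_comap] using this
  haveI : Module.Finite ℤ G := Module.Finite.iff_fg.mpr (IsNoetherian.noetherian G)
  haveI : Module.Finite ℤ (G ⧸ U') := Module.Finite.quotient ℤ U'
  haveI : Module.Free ℤ (G ⧸ U') := Module.free_of_finite_type_torsion_free'
  obtain ⟨s, hs⟩ := Module.projective_lifting_property U'.mkQ LinearMap.id
    (Submodule.mkQ_surjective U')
  set q : G →ₗ[ℤ] G := s ∘ₗ U'.mkQ with hq
  have hsec : ∀ y : G ⧸ U', U'.mkQ (s y) = y := fun y => by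
    have := congrArg (fun f => f y) hs; simpa using this
  have hker : ∀ g : G, g - q g ∈ U' := fun g => by
    rw [← Submodule.Quotient.mk_eq_zero]
    have : U'.mkQ (g - q g) = 0 := by
      simp only [map_sub, hq, LinearMap.comp_apply, hsec, Submodule.mkQ_apply, sub_self]
    simpa using this
  have hidem : ∀ g : G, q (q g) = q g := fun g => by
    simp only [hq, LinearMap.comp_apply, Submodule.mkQ_apply]
    congr 1
    have := hsec (Submodule.Quotient.mk g)
    simpa using this
  have hqU : ∀ g : G, (g : Fin n → ℤ) ∈ UM → q g = 0 := fun g hg => by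
    have : U'.mkQ g = 0 := by
      rw [Submodule.mkQ_apply, Submodule.Quotient.mk_eq_zero]
      simpa [hU', Submodule.mem_comap] using hg
    simp only [hq, LinearMap.comp_apply, this, map_zero]
  set Qh : G →+ (Fin n → ℤ) := (G.subtype ∘ₗ q).toAddMonoidHom with hQh
  set C' : AddSubmonoid (Fin n → ℤ) :=
    AddSubmonoid.map Qh (AddSubmonoid.comap G.subtype.toAddMonoidHom C) with hC'
  -- C' ⊆ C
  have hC'C : ∀ x ∈ C', x ∈ C := by
    rintro x ⟨g, hg, rfl⟩
    have h1 : (g : Fin n → ℤ) ∈ C := hg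
    have h2 : ((g - q g : G) : Fin n → ℤ) ∈ UM := hker g
    have h3 : -((g - q g : G) : Fin n → ℤ) ∈ C := h2.2
    have : (Qh g : Fin n → ℤ) = (g : Fin n → ℤ) + -((g - q g : G) : Fin n → ℤ) := by
      simp [hQh]
    rw [this]
    exact C.add_mem h1 h3
  -- q fixes elements of the image of q
  have hfix : ∀ (g : G) (h : (Qh g : Fin n → ℤ) ∈ G), q ⟨Qh g, h⟩ = q g := fun g h => by
    have : (⟨Qh g, h⟩ : G) = q g := Subtype.ext rfl
    rw [this, hidem]
  -- C' is normal
  have hnorm : ∀ a b : Fin n → ℤ, a ∈ C' → b ∈ C' → (∃ m : ℕ, 0 < m ∧ m • (a - b) ∈ C') → a - b ∈ C' := by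
    rintro a b ha hb ⟨m, hm, hmab⟩
    have hab : a - b ∈ C := hC a b (hC'C a ha) (hC'C b hb) ⟨m, hm, hC'C _ hmab⟩
    obtain ⟨ga, hga, rfl⟩ := ha
    obtain ⟨gb, hgb, rfl⟩ := hb
    have habG : (Qh ga : Fin n → ℤ) - Qh gb = ((q ga - q gb : G) : Fin n → ℤ) := by
      simp [hQh]
    refine ⟨q ga - q gb, ?_, ?_⟩
    · show ((q ga - q gb : G) : Fin n → ℤ) ∈ C
      rw [← habG]; exact hab
    · show ((q (q ga - q gb) : G) : Fin n → ℤ) = _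
      rw [map_sub, hidem, hidem, habG]
  -- C' is positive
  have hpos : ∀ x : Fin n → ℤ, x ∈ C' → -x ∈ C' → x = 0 := by
    rintro x hx hnx
    have hxU : x ∈ UM := ⟨hC'C x hx, hC'C _ hnx⟩
    obtain ⟨g, hg, rfl⟩ := hx
    have : (Qh g : Fin n → ℤ) = ((q g : G) : Fin n → ℤ) := rfl
    rw [this] at hxU ⊢
    have := hqU (q g) hxU
    rw [hidem] at this
    rw [this]; rfl
  -- basis for UM
  haveI : Module.Finite ℤ UM := Module.Finite.iff_fg.mpr (IsNoetherian.noetherian UM)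
  haveI : Module.Free ℤ UM := Module.free_of_finite_type_torsion_free'
  set ι := Module.Free.ChooseBasisIndex ℤ UM
  set k := Fintype.card ι with hk
  set e : UM ≃ₗ[ℤ] (Fin k → ℤ) :=
    ((Module.Free.chooseBasis ℤ UM).reindex (Fintype.equivFin ι)).equivFun with he
  -- the equivalence
  have hCsubG : ∀ c : C, ((c : Fin n → ℤ)) ∈ G := fun c => mem_grpOf c.2
  have hUmem : ∀ c : C, (c : Fin n → ℤ) - Qh ⟨c, hCsubG c⟩ ∈ UM := fun c => by
    have h := hker ⟨(c : Fin n → ℤ), hCsubG c⟩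
    rw [hU', Submodule.mem_comap] at h
    simpa [hQh] using h
  have equiv : Nonempty (C ≃+ ((Fin k → ℤ) × C')) := by
    refine ⟨{
      toFun := fun c => (e ⟨(c : Fin n → ℤ) - Qh ⟨c, hCsubG c⟩, hUmem c⟩,
        ⟨Qh ⟨(c : Fin n → ℤ), hCsubG c⟩, ⟨⟨(c : Fin n → ℤ), hCsubG c⟩, c.2, rfl⟩⟩),
      invFun := fun p => ⟨((e.symm p.1 : UM) : Fin n → ℤ) + (p.2 : Fin n → ℤ),
        C.add_mem (e.symm p.1).2.1 (hC'C _ p.2.2)⟩,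
      left_inv := ?_, right_inv := ?_, map_add' := ?_ }⟩
    · intro c
      apply Subtype.ext
      show ((e.symm (e _) : UM) : Fin n → ℤ) + _ = (c : Fin n → ℤ)
      rw [e.symm_apply_apply]
      exact sub_add_cancel _ _
    · rintro ⟨v, c'⟩
      obtain ⟨g, hgC, hgQ⟩ := c'.2
      have hc'G : ((c' : Fin n → ℤ)) ∈ G := mem_grpOf (hC'C _ c'.2)
      have huG : ((e.symm v : UM) : Fin n → ℤ) ∈ G := mem_grpOf (e.symm v).2.1
      set x : Fin n → ℤ := ((e.symm v : UM) : Fin n → ℤ) + (c' : Fin n → ℤ) with hx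
      have hxG : x ∈ G := G.add_mem huG hc'G
      have hsplit : (⟨x, hxG⟩ : G) = ⟨_, huG⟩ + ⟨_, hc'G⟩ := Subtype.ext rfl
      have hqu : q ⟨_, huG⟩ = 0 := hqU _ (e.symm v).2
      have hgc' : (⟨(c' : Fin n → ℤ), hc'G⟩ : G) = q g := Subtype.ext hgQ.symm
      have hqc' : q ⟨(c' : Fin n → ℤ), hc'G⟩ = q g := by rw [hgc', hidem]
      have hQx : (Qh ⟨x, hxG⟩ : Fin n → ℤ) = (c' : Fin n → ℤ) := by
        show ((q ⟨x, hxG⟩ : G) : Fin n → ℤ) = _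
        rw [hsplit, map_add, hqu, hqc', zero_add, ← hgc']
      refine Prod.ext ?_ ?_
      · have key : ∀ (h : x - Qh ⟨x, hxG⟩ ∈ UM), e ⟨x - Qh ⟨x, hxG⟩, h⟩ = v := by
          intro h
          have harg : (⟨x - Qh ⟨x, hxG⟩, h⟩ : UM) = e.symm v := by
            apply Subtype.ext
            show x - (Qh ⟨x, hxG⟩ : Fin n → ℤ) = _
            rw [hQx, hx, add_sub_cancel_right]
          rw [harg, e.apply_symm_apply]
        exact key _
      · exact Subtype.ext hQx
    · intro c d
      have hsum : (⟨((c + d : C) : Fin n → ℤ), hCsubG (c + d)⟩ : G)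
          = ⟨(c : Fin n → ℤ), hCsubG c⟩ + ⟨(d : Fin n → ℤ), hCsubG d⟩ := Subtype.ext rfl
      refine Prod.ext ?_ ?_
      · show e _ = e _ + e _
        rw [← map_add]
        congr 1
        apply Subtype.ext
        show ((c + d : C) : Fin n → ℤ) - (Qh _ : Fin n → ℤ) = _
        rw [hsum, map_add]
        show _ = ((c : Fin n → ℤ) - _) + ((d : Fin n → ℤ) - _)
        simp only [AddSubmonoid.coe_add]
        abel
      · apply Subtype.ext
        show (Qh _ : Fin n → ℤ) = (Qh _ : Fin n → ℤ) + (Qh _ : Fin n → ℤ)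
        rw [hsum, map_add]
  exact ⟨k, C', hnorm, hpos, equiv⟩
end
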